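/- arXiv:1710.06399 — 8 statements merged into one kernel-verified Lean document; each statement's English description precedes it below -/
import Mathlib

section
/- Let R, Q > 0 and μ > 1. Define w : [0,∞) → ℝ by w(r) = 0 for r ∈ [0,R], w(r) = Q·(2R)^{2μ}·(r−R)/R for r ∈ (R,2R], and w(r) = Q·r^{2μ} for r > 2R. Let ψ be the solution of the ODE ψ''(r) = w(r)·ψ(r) for r > 0 with ψ(0) = 0 and ψ'(0) = 1. Then ψ is twice continuously differentiable on [0,∞), ψ is strictly positive on (0,∞) with lim_{r→∞} ψ(r) = +∞, ψ' is strictly positive on [0,∞), and lim_{r→∞} ψ'(r)/(r^μ · ψ(r)) = √Q. -/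
open Real Filter Set

lemma stay_nonpos {g : ℝ → ℝ} {a : ℝ}
    (hd : ∀ t, a ≤ t → DifferentiableAt ℝ g t)
    (hderiv : ∀ t, a ≤ t → 0 < g t → deriv g t ≤ 0)
    (hga : g a ≤ 0) : ∀ b, a ≤ b → g b ≤ 0 := by
  intro b hab
  by_contra hb
  push_neg at hb
  have hcont : ContinuousOn g (Icc a b) := fun t ht =>
    ((hd t ht.1).continuousAt).continuousWithinAt
  set S := {t ∈ Icc a b | g t ≤ 0} with hS
  have hSne : S.Nonempty := ⟨a, ⟨le_refl a, hab⟩, hga⟩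
  have hSclosed : IsClosed S := by
    have : S = Icc a b ∩ g ⁻¹' (Iic 0) := rfl
    rw [this]
    exact hcont.preimage_isClosed_of_isClosed isClosed_Icc isClosed_Iic
  have hSbdd : BddAbove S := ⟨b, fun t ht => ht.1.2⟩
  set c := sSup S with hc
  have hcS : c ∈ S := hSclosed.csSup_mem hSne hSbdd
  have hac : a ≤ c := hcS.1.1
  have hcb : c ≤ b := hcS.1.2
  have hgc : g c ≤ 0 := hcS.2
  have hcb' : c < b := by
    rcases lt_or_eq_of_le hcb with h | h
    · exact h
    · exfalso; rw [h] at hgc; linarith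
  have hpos : ∀ t, c < t → t ≤ b → 0 < g t := by
    intro t ht1 ht2
    by_contra h
    push_neg at h
    exact absurd (le_csSup hSbdd ⟨⟨hac.trans ht1.le, ht2⟩, h⟩) (not_le.mpr ht1)
  have hanti : AntitoneOn g (Icc c b) := by
    apply antitoneOn_of_deriv_nonpos (convex_Icc c b)
    · exact hcont.mono (Icc_subset_Icc hac le_rfl)
    · intro t ht
      rw [interior_Icc] at ht
      exact (hd t (hac.trans ht.1.le)).differentiableWithinAt
    · intro t ht
      rw [interior_Icc] at ht
      exact hderiv t (hac.trans ht.1.le) (hpos t ht.1 ht.2.le)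
  have := hanti (left_mem_Icc.mpr hcb) (right_mem_Icc.mpr hcb) hcb
  linarith

lemma eventually_nonpos {g : ℝ → ℝ} {a c : ℝ} (hc : 0 < c)
    (hd : ∀ t, a ≤ t → DifferentiableAt ℝ g t)
    (hderiv : ∀ t, a ≤ t → 0 < g t → deriv g t ≤ -c) :
    ∀ᶠ t in atTop, g t ≤ 0 := by
  obtain ⟨b, hab, hgb⟩ : ∃ b, a ≤ b ∧ g b ≤ 0 := by
    by_contra h
    push_neg at h
    have hd' : ∀ t, a ≤ t → deriv g t ≤ -c := fun t ht => hderiv t ht (h t ht)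
    have hHd : ∀ t, a ≤ t → HasDerivAt (fun s => g s + c * s) (deriv g t + c) t := by
      intro t ht
      have h2 : HasDerivAt (fun s : ℝ => c * s) c t := by
        simpa using (hasDerivAt_id t).const_mul c
      exact ((hd t ht).hasDerivAt).add h2
    have hH : AntitoneOn (fun t => g t + c * t) (Ici a) := by
      apply antitoneOn_of_deriv_nonpos (convex_Ici a)
      · intro t ht
        exact ((hHd t ht).continuousAt).continuousWithinAt
      · intro t ht
        rw [interior_Ici] at ht
        exact (hHd t ht.le).differentiableAt.differentiableWithinAt
      · intro t ht
        rw [interior_Ici] at ht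
        rw [(hHd t ht.le).deriv]
        linarith [hd' t ht.le]
    have hga : 0 < g a := h a le_rfl
    have hdiv : 0 < (g a + 1) / c := by positivity
    have hab : a ≤ a + (g a + 1) / c := by linarith
    have h2 := hH (self_mem_Ici) hab hab
    simp only at h2
    have hcb : c * (a + (g a + 1) / c) = c * a + (g a + 1) := by
      field_simp
    rw [hcb] at h2
    linarith [h (a + (g a + 1) / c) hab]
  filter_upwards [eventually_ge_atTop b] with t ht
  exact stay_nonpos (fun s hs => hd s (hab.trans hs))
    (fun s hs hgs => le_trans (hderiv s (hab.trans hs) hgs) (by linarith)) hgb t ht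



set_option maxHeartbeats 2000000 in
/-- Lemma 4.1-type ODE comparison lemma (Lemma `lem: ode-comparison`):
the model function `ψ` solving `ψ'' = w ψ`, `ψ(0)=0`, `ψ'(0)=1`, with the piecewise
coefficient `w` vanishing on `[0,R]`, interpolating linearly on `(R,2R]` and equal to
`Q r^(2μ)` beyond `2R`, is `C²` on `[0,∞)`, positive and increasing, diverges at
infinity, and satisfies `ψ'(r)/(r^μ ψ(r)) → √Q`. -/
theorem stmt_0 (R Q μ : ℝ) (hR : 0 < R) (hQ : 0 < Q) (hμ : 1 < μ)
    (w : ℝ → ℝ)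
    (hw : ∀ r : ℝ, 0 ≤ r →
      w r = if r ≤ R then 0
        else if r ≤ 2 * R then Q * (2 * R) ^ (2 * μ) / R * (r - R)
        else Q * r ^ (2 * μ))
    (ψ : ℝ → ℝ)
    (hψC1 : ContDiffOn ℝ 1 ψ (Set.Ici 0))
    (hψd2 : ∀ r : ℝ, 0 < r → DifferentiableAt ℝ (deriv ψ) r)
    (hψ0 : ψ 0 = 0) (hψ'0 : deriv ψ 0 = 1)
    (hode : ∀ r : ℝ, 0 < r → deriv (deriv ψ) r = w r * ψ r) :
    ContDiffOn ℝ 2 ψ (Set.Ici 0) ∧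
    (∀ r : ℝ, 0 < r → 0 < ψ r) ∧
    Filter.Tendsto ψ Filter.atTop Filter.atTop ∧
    (∀ r : ℝ, 0 ≤ r → 0 < deriv ψ r) ∧
    Filter.Tendsto (fun r : ℝ => deriv ψ r / (r ^ μ * ψ r)) Filter.atTop
      (nhds (Real.sqrt Q)) := by
  have huD : UniqueDiffOn ℝ (Ici (0:ℝ)) := uniqueDiffOn_Ici 0
  set f := deriv ψ with hf
  -- basic w facts
  have hw0 : ∀ r : ℝ, 0 ≤ r → r ≤ R → w r = 0 := by
    intro r h0 hrR; rw [hw r h0, if_pos hrR]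
  have hwQ : ∀ r : ℝ, 2 * R < r → w r = Q * r ^ (2 * μ) := by
    intro r hr
    have h0 : (0:ℝ) ≤ r := by linarith
    rw [hw r h0, if_neg (by linarith), if_neg (by linarith)]
  have hwnn : ∀ r : ℝ, 0 ≤ r → 0 ≤ w r := by
    intro r h0
    rw [hw r h0]
    split_ifs with h1 h2
    · exact le_rfl
    · have ha : (0:ℝ) ≤ (2*R) ^ (2*μ) := Real.rpow_nonneg (by linarith) _
      have hb : 0 ≤ r - R := by linarith [not_le.mp h1]
      have hc : 0 ≤ Q * (2 * R) ^ (2 * μ) / R := by positivity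
      exact mul_nonneg hc hb
    · exact mul_nonneg hQ.le (Real.rpow_nonneg h0 _)
  have hwcont : ContinuousOn w (Ici 0) := by
    have hG : Continuous fun r : ℝ =>
        if r ≤ 2 * R then Q * (2*R) ^ (2*μ) / R * (r - R) else Q * r ^ (2 * μ) := by
      apply Continuous.if_le (by continuity)
        (continuous_const.mul (Real.continuous_rpow_const (by linarith)))
        continuous_id continuous_const
      intro x hx
      simp only [id_eq] at hx
      subst hx
      rw [show 2 * R - R = R by ring]
      field_simp
      rfl
    have hF : Continuous fun r : ℝ =>
        if r ≤ R then (0:ℝ)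
        else if r ≤ 2 * R then Q * (2*R) ^ (2*μ) / R * (r - R) else Q * r ^ (2 * μ) := by
      apply Continuous.if_le continuous_const hG continuous_id continuous_const
      intro x hx
      simp only [id_eq] at hx
      subst hx
      rw [if_pos (by linarith)]
      simp
    exact hF.continuousOn.congr (fun r hr => hw r hr)
  -- ψ differentiability facts
  have hψdiff : ∀ r : ℝ, 0 < r → DifferentiableAt ℝ ψ r := by
    intro r hr
    exact (hψC1.contDiffAt (Ici_mem_nhds hr)).differentiableAt one_ne_zero
  have hψd0 : DifferentiableAt ℝ ψ 0 := by
    by_contra h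
    rw [hf, deriv_zero_of_not_differentiableAt h] at hψ'0
    norm_num at hψ'0
  have hψcont : ContinuousOn ψ (Ici 0) := hψC1.continuousOn
  have hdw : ∀ r ∈ Ici (0:ℝ), derivWithin ψ (Ici 0) r = f r := by
    intro r hr
    rcases eq_or_lt_of_le (α := ℝ) hr with h | h
    · rw [← h]; exact hψd0.derivWithin (huD 0 self_mem_Ici)
    · exact derivWithin_of_mem_nhds (Ici_mem_nhds h)
  have hfcont : ContinuousOn f (Ici 0) :=
    (hψC1.continuousOn_derivWithin huD le_rfl).congr fun r hr => (hdw r hr).symm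
  have hfd : ∀ r : ℝ, 0 < r → HasDerivAt f (w r * ψ r) r := by
    intro r hr
    have := (hψd2 r hr).hasDerivAt
    rwa [hode r hr] at this
  have hψhd : ∀ r : ℝ, 0 < r → HasDerivAt ψ (f r) r := fun r hr => (hψdiff r hr).hasDerivAt
  have hf0 : f 0 = 1 := hψ'0
  -- f = 1 on [0, R]
  have hf1 : ∀ r : ℝ, 0 ≤ r → r ≤ R → f r = 1 := by
    intro r h0 hrR
    have hcont : ContinuousOn f (Icc 0 R) := hfcont.mono (Icc_subset_Ici_self)
    have hdiffint : DifferentiableOn ℝ f (interior (Icc 0 R)) := by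
      rw [interior_Icc]
      intro t ht
      exact (hψd2 t ht.1).differentiableWithinAt
    have hderiv0 : ∀ t ∈ interior (Icc (0:ℝ) R), deriv f t = 0 := by
      rw [interior_Icc]
      intro t ht
      rw [(hfd t ht.1).deriv, hw0 t ht.1.le ht.2.le, zero_mul]
    have hmono : MonotoneOn f (Icc 0 R) :=
      monotoneOn_of_deriv_nonneg (convex_Icc 0 R) hcont hdiffint
        (fun t ht => le_of_eq (hderiv0 t ht).symm)
    have hanti : AntitoneOn f (Icc 0 R) :=
      antitoneOn_of_deriv_nonpos (convex_Icc 0 R) hcont hdiffint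
        (fun t ht => le_of_eq (hderiv0 t ht))
    have h1 := hmono (left_mem_Icc.mpr hR.le) ⟨h0, hrR⟩ h0
    have h2 := hanti (left_mem_Icc.mpr hR.le) ⟨h0, hrR⟩ h0
    rw [hf0] at h1 h2
    linarith
  -- ψ r = r on [0, R]
  have hψid : ∀ r : ℝ, 0 ≤ r → r ≤ R → ψ r = r := by
    intro r h0 hrR
    have hcont : ContinuousOn (fun t => ψ t - t) (Icc 0 R) :=
      (hψcont.mono Icc_subset_Ici_self).sub (continuous_id.continuousOn)
    have hhd : ∀ t : ℝ, 0 < t → HasDerivAt (fun s => ψ s - s) (f t - 1) t := by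
      intro t ht
      exact (hψhd t ht).sub (hasDerivAt_id t)
    have hdiffint : DifferentiableOn ℝ (fun t => ψ t - t) (interior (Icc 0 R)) := by
      rw [interior_Icc]
      intro t ht
      exact (hhd t ht.1).differentiableAt.differentiableWithinAt
    have hderiv0 : ∀ t ∈ interior (Icc (0:ℝ) R), deriv (fun s => ψ s - s) t = 0 := by
      rw [interior_Icc]
      intro t ht
      rw [(hhd t ht.1).deriv, hf1 t ht.1.le ht.2.le, sub_self]
    have hmono : MonotoneOn (fun t => ψ t - t) (Icc 0 R) :=
      monotoneOn_of_deriv_nonneg (convex_Icc 0 R) hcont hdiffint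
        (fun t ht => le_of_eq (hderiv0 t ht).symm)
    have hanti : AntitoneOn (fun t => ψ t - t) (Icc 0 R) :=
      antitoneOn_of_deriv_nonpos (convex_Icc 0 R) hcont hdiffint
        (fun t ht => le_of_eq (hderiv0 t ht))
    have h1 := hmono (left_mem_Icc.mpr hR.le) ⟨h0, hrR⟩ h0
    have h2 := hanti (left_mem_Icc.mpr hR.le) ⟨h0, hrR⟩ h0
    simp only [hψ0] at h1 h2
    linarith
  -- ψ is nonnegative on [0, ∞)
  have hψnn : ∀ r : ℝ, 0 ≤ r → 0 ≤ ψ r := by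
    by_contra hcon
    push_neg at hcon
    obtain ⟨b, hb0, hψb⟩ := hcon
    have hRb : R < b := by
      by_contra h
      push_neg at h
      rw [hψid b hb0 h] at hψb
      linarith
    -- the first nonpositive point after R
    set S := {t ∈ Icc R b | ψ t ≤ 0} with hS
    have hSne : S.Nonempty := ⟨b, ⟨hRb.le, le_refl b⟩, hψb.le⟩
    have hSclosed : IsClosed S :=
      (hψcont.mono (fun t (ht : t ∈ Icc R b) => le_trans hR.le ht.1)).preimage_isClosed_of_isClosed
        isClosed_Icc isClosed_Iic
    have hSbdd : BddBelow S := ⟨R, fun t ht => ht.1.1⟩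
    set c := sInf S with hc
    have hcS : c ∈ S := hSclosed.csInf_mem hSne hSbdd
    have hRc : R ≤ c := hcS.1.1
    have hc0 : (0:ℝ) < c := lt_of_lt_of_le hR hRc
    have hψc : ψ c ≤ 0 := hcS.2
    have hpos : ∀ t : ℝ, 0 < t → t < c → 0 < ψ t := by
      intro t ht0 htc
      rcases le_or_gt t R with h | h
      · rw [hψid t ht0.le h]; exact ht0
      · by_contra hle
        push_neg at hle
        have : t ∈ S := ⟨⟨h.le, le_trans htc.le hcS.1.2⟩, hle⟩
        exact absurd (csInf_le hSbdd this) (not_le.mpr htc)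
    -- f monotone on [0, c]
    have hfc : ∀ t ∈ Icc (0:ℝ) c, 1 ≤ f t := by
      intro t ht
      have hmono : MonotoneOn f (Icc 0 c) := by
        apply monotoneOn_of_deriv_nonneg (convex_Icc 0 c)
          (hfcont.mono Icc_subset_Ici_self)
        · rw [interior_Icc]
          intro s hs
          exact (hψd2 s hs.1).differentiableWithinAt
        · rw [interior_Icc]
          intro s hs
          rw [(hfd s hs.1).deriv]
          exact mul_nonneg (hwnn s hs.1.le) (hpos s hs.1 hs.2).le
      have := hmono (left_mem_Icc.mpr hc0.le) ht ht.1
      rwa [hf0] at this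
    -- hence ψ strictly increasing on [0,c], so ψ c > 0
    have hstrict : StrictMonoOn ψ (Icc 0 c) := by
      apply strictMonoOn_of_deriv_pos (convex_Icc 0 c) (hψcont.mono Icc_subset_Ici_self)
      rw [interior_Icc]
      intro s hs
      rw [(hψhd s hs.1).deriv]
      linarith [hfc s ⟨hs.1.le, hs.2.le⟩]
    have := hstrict (left_mem_Icc.mpr hc0.le) (right_mem_Icc.mpr hc0.le) hc0
    rw [hψ0] at this
    linarith
  -- f ≥ 1 on [0, ∞)
  have hfge1 : ∀ r : ℝ, 0 ≤ r → 1 ≤ f r := by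
    intro r h0
    have hmono : MonotoneOn f (Ici 0) := by
      apply monotoneOn_of_deriv_nonneg (convex_Ici 0) hfcont
      · rw [interior_Ici]
        intro s hs
        exact (hψd2 s hs).differentiableWithinAt
      · rw [interior_Ici]
        intro s hs
        rw [(hfd s hs).deriv]
        exact mul_nonneg (hwnn s hs.le) (hψnn s hs.le)
    have := hmono self_mem_Ici h0 h0
    rwa [hf0] at this
  -- ψ r ≥ r
  have hψge : ∀ r : ℝ, 0 ≤ r → r ≤ ψ r := by
    intro r h0
    have hmono : MonotoneOn (fun t => ψ t - t) (Ici 0) := by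
      apply monotoneOn_of_deriv_nonneg (convex_Ici 0)
        (hψcont.sub continuous_id.continuousOn)
      · rw [interior_Ici]
        intro s hs
        exact ((hψhd s hs).sub (hasDerivAt_id s)).differentiableAt.differentiableWithinAt
      · rw [interior_Ici]
        intro s hs
        rw [((hψhd s hs).sub (hasDerivAt_id s)).deriv]
        linarith [hfge1 s hs.le]
    have := hmono self_mem_Ici h0 h0
    simp only [hψ0] at this
    linarith
  have hψpos : ∀ r : ℝ, 0 < r → 0 < ψ r := fun r hr => lt_of_lt_of_le hr (hψge r hr.le)
  have hψtop : Tendsto ψ atTop atTop := by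
    apply tendsto_atTop_mono' atTop _ tendsto_id
    filter_upwards [eventually_ge_atTop (0:ℝ)] with r hr
    exact hψge r hr
  have hfpos : ∀ r : ℝ, 0 ≤ r → 0 < f r := fun r hr => lt_of_lt_of_le one_pos (hfge1 r hr)
  -- C² smoothness
  have hIcc : Icc (0:ℝ) R ∈ nhdsWithin 0 (Ici 0) :=
    mem_nhdsWithin.mpr ⟨Iio R, isOpen_Iio, hR, fun x hx => ⟨hx.2, hx.1.le⟩⟩
  have hevent0 : f =ᶠ[nhdsWithin 0 (Ici 0)] fun _ => (1:ℝ) :=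
    Filter.eventuallyEq_of_mem hIcc (fun t ht => hf1 t ht.1 ht.2)
  have hfdiffOn : DifferentiableOn ℝ f (Ici 0) := by
    intro r hr
    rcases eq_or_lt_of_le (show (0:ℝ) ≤ r from hr) with h | h
    · rw [← h]
      exact (differentiableWithinAt_const (1:ℝ)).congr_of_eventuallyEq hevent0 hf0
    · exact (hψd2 r h).differentiableWithinAt
  have hdwf : ∀ r ∈ Ici (0:ℝ), derivWithin f (Ici 0) r = w r * ψ r := by
    intro r hr
    rcases eq_or_lt_of_le (show (0:ℝ) ≤ r from hr) with h | h
    · rw [← h]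
      have h1 : derivWithin f (Ici 0) 0 = derivWithin (fun _ : ℝ => (1:ℝ)) (Ici 0) 0 :=
        Filter.EventuallyEq.derivWithin_eq hevent0 hf0
      have h2 : derivWithin (fun _ : ℝ => (1:ℝ)) (Ici 0) 0 = 0 :=
        by simp
      rw [h1, h2, hψ0, mul_zero]
    · rw [derivWithin_of_mem_nhds (Ici_mem_nhds h), (hfd r h).deriv]
  have hC2 : ContDiffOn ℝ 2 ψ (Set.Ici 0) := by
    rw [show (2 : WithTop ℕ∞) = 1 + 1 by norm_num, contDiffOn_succ_iff_derivWithin huD]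
    refine ⟨hψC1.differentiableOn one_ne_zero, by simp, ?_⟩
    have hf1' : ContDiffOn ℝ 1 f (Ici 0) := by
      rw [show (1 : WithTop ℕ∞) = 0 + 1 by norm_num, contDiffOn_succ_iff_derivWithin huD]
      refine ⟨hfdiffOn, by simp, ?_⟩
      rw [contDiffOn_zero]
      exact (hwcont.mul hψcont).congr hdwf
    exact hf1'.congr hdw
  -- the asymptotic limit
  set sQ := Real.sqrt Q with hsQdef
  have hsQ : 0 < sQ := Real.sqrt_pos.mpr hQ
  have hsQ2 : sQ ^ 2 = Q := Real.sq_sqrt hQ.le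
  set u : ℝ → ℝ := fun r => f r / ψ r with hu
  have hupos : ∀ r : ℝ, 0 < r → 0 < u r := fun r hr => div_pos (hfpos r hr.le) (hψpos r hr)
  have hud : ∀ r : ℝ, 0 < r → HasDerivAt u (w r - u r ^ 2) r := by
    intro r hr
    have hne := (hψpos r hr).ne'
    have h1 := (hfd r hr).div (hψhd r hr) hne
    have heq : w r - u r ^ 2 = (w r * ψ r * ψ r - f r * f r) / ψ r ^ 2 := by
      simp only [hu]
      rw [eq_div_iff (pow_ne_zero 2 hne), div_pow]
      field_simp
    rw [heq]
    exact h1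
  have hrpowd : ∀ (C t : ℝ), 0 < t →
      HasDerivAt (fun s : ℝ => C * s ^ μ) (C * (μ * t ^ (μ - 1))) t := by
    intro C t ht
    exact (Real.hasDerivAt_rpow_const (Or.inl ht.ne')).const_mul C
  have two_mu : ∀ t : ℝ, 0 < t → t ^ μ * t ^ μ = t ^ (2*μ) := by
    intro t ht
    rw [← Real.rpow_add ht]
    ring_nf
  have key_upper : ∀ ε : ℝ, 0 < ε → ∀ᶠ t in atTop, u t ≤ (1+ε) * sQ * t ^ μ := by
    intro ε hε
    have ha : (0:ℝ) < 2*R + 1 := by linarith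
    have hApos : (0:ℝ) < (2*R+1) ^ (2*μ) := Real.rpow_pos_of_pos ha _
    set δ := (2*ε + ε^2) * Q with hδdef
    have hδ : 0 < δ := by positivity
    set c := δ * (2*R+1) ^ (2*μ) with hcdef
    have hc : 0 < c := by positivity
    have hmain := eventually_nonpos (g := fun t => u t - (1+ε) * sQ * t ^ μ)
      (a := 2*R+1) (c := c) hc ?_ ?_
    · filter_upwards [hmain] with t ht
      linarith
    · intro t hat
      have ht : 0 < t := lt_of_lt_of_le ha hat
      exact ((hud t ht).differentiableAt).sub ((hrpowd ((1+ε)*sQ) t ht).differentiableAt)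
    · intro t hat hgt
      have ht : 0 < t := lt_of_lt_of_le ha hat
      have hDg : HasDerivAt (fun s => u s - (1+ε)*sQ*s^μ)
          ((w t - u t ^ 2) - (1+ε)*sQ*(μ*t^(μ-1))) t :=
        (hud t ht).sub (hrpowd ((1+ε)*sQ) t ht)
      rw [hDg.deriv]
      have htm : 0 < t ^ μ := Real.rpow_pos_of_pos ht μ
      have hBnn : 0 ≤ (1+ε) * sQ * t ^ μ := by positivity
      have hub : (1+ε) * sQ * t ^ μ < u t := by linarith
      have hsq : ((1+ε) * sQ * t ^ μ)^2 ≤ u t ^ 2 := by nlinarith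
      have hwt : w t = Q * t ^ (2*μ) := hwQ t (by linarith)
      have h2m : t^μ * t^μ = t^(2*μ) := two_mu t ht
      have htm1 : 0 ≤ t ^ (μ - 1) := (Real.rpow_pos_of_pos ht _).le
      have hta : (2*R+1) ^ (2*μ) ≤ t ^ (2*μ) := Real.rpow_le_rpow ha.le hat (by linarith)
      have e1 : ((1+ε)*sQ*t^μ)^2 = Q*t^(2*μ) + δ*t^(2*μ) := by
        have h2 : ((1+ε)*sQ*t^μ)^2 = (1+2*ε+ε^2)*sQ^2*(t^μ*t^μ) := by ring
        rw [h2, hsQ2, h2m, hδdef]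
        ring
      have h3 : Q*t^(2*μ) + δ*t^(2*μ) ≤ u t ^ 2 := by rw [← e1]; exact hsq
      have hX : 0 ≤ (1+ε)*sQ*(μ*t^(μ-1)) := by
        apply mul_nonneg (by positivity)
        exact mul_nonneg (by linarith) htm1
      have hprod : δ * (2*R+1)^(2*μ) ≤ δ * t^(2*μ) :=
        mul_le_mul_of_nonneg_left hta hδ.le
      rw [hwt, hcdef]
      linarith
  have key_lower : ∀ ε : ℝ, 0 < ε → ε < 1 → ∀ᶠ t in atTop, (1-ε) * sQ * t ^ μ ≤ u t := by
    intro ε hε hε1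
    set δ := (2*ε - ε^2) * Q with hδdef
    have hδ : 0 < δ := by
      rw [hδdef]
      have h0 : 0 < 2*ε - ε^2 := by nlinarith
      exact mul_pos h0 hQ
    have h1 : ∀ᶠ t : ℝ in atTop, 1 + (1-ε)*sQ*μ ≤ δ * t^(μ+1) := by
      have h2 : Tendsto (fun t:ℝ => δ * t^(μ+1)) atTop atTop :=
        (tendsto_rpow_atTop (by linarith)).const_mul_atTop hδ
      exact h2.eventually_ge_atTop _
    have hA : ∀ᶠ t : ℝ in atTop, 1 ≤ δ*t^(2*μ) - (1-ε)*sQ*(μ*t^(μ-1)) := by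
      filter_upwards [h1, eventually_ge_atTop (1:ℝ)] with t h1t ht1
      have ht : (0:ℝ) < t := lt_of_lt_of_le one_pos ht1
      have hm1 : 1 ≤ t^(μ-1) := Real.one_le_rpow ht1 (by linarith)
      have hm0 : 0 ≤ t^(μ-1) := by linarith
      have hsplit : t^(2*μ) = t^(μ-1) * t^(μ+1) := by
        rw [← Real.rpow_add ht]
        ring_nf
      have hkey2 : t^(μ-1) * (1 + (1-ε)*sQ*μ) ≤ t^(μ-1) * (δ * t^(μ+1)) :=
        mul_le_mul_of_nonneg_left h1t hm0
      have hX0 : 0 ≤ (1-ε)*sQ*μ := by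
        apply mul_nonneg (mul_nonneg (by linarith) hsQ.le) (by linarith)
      rw [hsplit]
      nlinarith
    obtain ⟨a, ha⟩ := (hA.and (eventually_ge_atTop (2*R+1))).exists_forall_of_atTop
    have hmain := eventually_nonpos (g := fun t => (1-ε) * sQ * t ^ μ - u t)
      (a := a) (c := 1) one_pos ?_ ?_
    · filter_upwards [hmain] with t ht
      linarith
    · intro t hat
      have ht : 0 < t := by
        have := (ha t hat).2
        linarith
      exact ((hrpowd ((1-ε)*sQ) t ht).differentiableAt).sub ((hud t ht).differentiableAt)
    · intro t hat hgt
      obtain ⟨hAt, hRt⟩ := ha t hat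
      have ht : 0 < t := by linarith
      have hDg : HasDerivAt (fun s => (1-ε)*sQ*s^μ - u s)
          ((1-ε)*sQ*(μ*t^(μ-1)) - (w t - u t ^ 2)) t :=
        (hrpowd ((1-ε)*sQ) t ht).sub (hud t ht)
      rw [hDg.deriv]
      have htm : 0 < t ^ μ := Real.rpow_pos_of_pos ht μ
      have hut : 0 < u t := hupos t ht
      have hub : u t < (1-ε) * sQ * t ^ μ := by linarith
      have hsq : u t ^ 2 ≤ ((1-ε) * sQ * t ^ μ)^2 := by nlinarith
      have hwt : w t = Q * t ^ (2*μ) := hwQ t (by linarith)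
      have h2m : t^μ * t^μ = t^(2*μ) := two_mu t ht
      have e1 : ((1-ε)*sQ*t^μ)^2 = Q*t^(2*μ) - δ*t^(2*μ) := by
        have h2 : ((1-ε)*sQ*t^μ)^2 = (1-2*ε+ε^2)*sQ^2*(t^μ*t^μ) := by ring
        rw [h2, hsQ2, h2m, hδdef]
        ring
      have h3 : u t ^ 2 ≤ Q*t^(2*μ) - δ*t^(2*μ) := by rw [← e1]; exact hsq
      rw [hwt]
      linarith
  have hkey : ∀ ε : ℝ, 0 < ε → ε < 1 → ∀ᶠ t in atTop, |u t / t^μ - sQ| ≤ ε * sQ := by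
    intro ε hε hε1
    filter_upwards [key_upper ε hε, key_lower ε hε hε1, eventually_gt_atTop (0:ℝ)]
      with t h1 h2 ht
    have htm : 0 < t^μ := Real.rpow_pos_of_pos ht μ
    rw [abs_le]
    constructor
    · have hle : (1-ε)*sQ ≤ u t / t^μ := by
        rw [le_div_iff₀ htm]
        linarith
      nlinarith
    · have hge : u t / t^μ ≤ (1+ε)*sQ := by
        rw [div_le_iff₀ htm]
        linarith
      nlinarith
  have hlim' : Tendsto (fun t : ℝ => u t / t^μ) atTop (nhds sQ) := by
    rw [Metric.tendsto_nhds]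
    intro d hd
    have hε0 : 0 < min (1/2) (d / (2 * sQ)) := lt_min (by norm_num) (by positivity)
    have hε1 : min (1/2) (d / (2 * sQ)) < 1 := lt_of_le_of_lt (min_le_left _ _) (by norm_num)
    filter_upwards [hkey _ hε0 hε1] with t ht
    rw [Real.dist_eq]
    have hm : min (1/2) (d / (2 * sQ)) * sQ ≤ d/2 := by
      have h5 := min_le_right (1/2) (d/(2*sQ))
      have := mul_le_mul_of_nonneg_right h5 hsQ.le
      calc min (1/2) (d / (2 * sQ)) * sQ ≤ (d/(2*sQ)) * sQ := this
        _ = d/2 := by field_simp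
    calc |u t / t^μ - sQ| ≤ min (1/2) (d / (2 * sQ)) * sQ := ht
      _ ≤ d/2 := hm
      _ < d := by linarith
  have hlim : Tendsto (fun r : ℝ => deriv ψ r / (r ^ μ * ψ r)) atTop (nhds (Real.sqrt Q)) := by
    rw [← hsQdef]
    apply hlim'.congr'
    filter_upwards [eventually_gt_atTop (0:ℝ)] with t ht
    have hψt := (hψpos t ht).ne'
    have htm := (Real.rpow_pos_of_pos ht μ).ne'
    simp only [hu]
    rw [div_div, mul_comm]
  exact ⟨hC2, hψpos, hψtop, hfpos, hlim⟩
end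

section
/- Let Q, D > 0 and μ > 1. Define w : [0,∞) → ℝ by w(r) = max{D, Q·r^{2μ}}. Let ψ be the solution of the ODE ψ''(r) = w(r)·ψ(r) for r > 0 with ψ(0) = 0 and ψ'(0) = 1. Then ψ is twice continuously differentiable on [0,∞), ψ is strictly positive on (0,∞) with lim_{r→∞} ψ(r) = +∞, ψ' is strictly positive on [0,∞), and lim_{r→∞} ψ'(r)/(r^μ · ψ(r)) = √Q. -/
open Real Filter Set Topology
set_option maxHeartbeats 2000000

/-- Lemma 4.2-type ODE comparison lemma (Lemma `lem: ode-comparison-2`):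
the model function `ψ` solving `ψ'' = w ψ`, `ψ(0)=0`, `ψ'(0)=1`, with the coefficient
`w(r) = max{D, Q r^(2μ)}`, is `C²` on `[0,∞)`, positive and increasing, diverges at
infinity, and satisfies `ψ'(r)/(r^μ ψ(r)) → √Q`. -/
theorem stmt_1 (Q D μ : ℝ) (hQ : 0 < Q) (hD : 0 < D) (hμ : 1 < μ)
    (w : ℝ → ℝ)
    (hw : ∀ r : ℝ, 0 ≤ r → w r = max D (Q * r ^ (2 * μ)))
    (ψ : ℝ → ℝ)
    (hψC1 : ContDiffOn ℝ 1 ψ (Set.Ici 0))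
    (hψd2 : ∀ r : ℝ, 0 < r → DifferentiableAt ℝ (deriv ψ) r)
    (hψ0 : ψ 0 = 0) (hψ'0 : deriv ψ 0 = 1)
    (hode : ∀ r : ℝ, 0 < r → deriv (deriv ψ) r = w r * ψ r) :
    ContDiffOn ℝ 2 ψ (Set.Ici 0) ∧
    (∀ r : ℝ, 0 < r → 0 < ψ r) ∧
    Filter.Tendsto ψ Filter.atTop Filter.atTop ∧
    (∀ r : ℝ, 0 ≤ r → 0 < deriv ψ r) ∧
    Filter.Tendsto (fun r : ℝ => deriv ψ r / (r ^ μ * ψ r)) Filter.atTop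
      (nhds (Real.sqrt Q)) := by
  -- ψ differentiable at every point of Ici 0
  have hψdiff : ∀ r : ℝ, 0 < r → DifferentiableAt ℝ ψ r := fun r hr =>
    ((hψC1.differentiableOn one_ne_zero) r (le_of_lt hr)).differentiableAt (Ici_mem_nhds hr)
  have hψdiff0 : DifferentiableAt ℝ ψ 0 := by
    by_contra h
    rw [deriv_zero_of_not_differentiableAt h] at hψ'0
    norm_num at hψ'0
  have hψdiff' : ∀ r : ℝ, 0 ≤ r → DifferentiableAt ℝ ψ r := by
    intro r hr
    rcases eq_or_lt_of_le hr with h | h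
    · exact h ▸ hψdiff0
    · exact hψdiff r h
  -- ψ continuous on Ici 0
  have hψcont : ContinuousOn ψ (Ici 0) := hψC1.continuousOn
  -- deriv ψ is continuous on Ici 0
  have hdcont : ContinuousOn (deriv ψ) (Ici 0) := by
    have h1 : ContinuousOn (derivWithin ψ (Ici 0)) (Ici 0) := by
      have := (contDiffOn_succ_iff_derivWithin (n := 0) (uniqueDiffOn_Ici 0)).1
        (by exact_mod_cast hψC1)
      exact contDiffOn_zero.1 this.2.2
    apply h1.congr
    intro x hx
    exact ((hψdiff' x hx).derivWithin ((uniqueDiffOn_Ici 0) x hx)).symm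
  -- continuity of w on Ici 0
  have hwcont : ContinuousOn w (Ici 0) := by
    have : ContinuousOn (fun r : ℝ => max D (Q * r ^ (2 * μ))) (Ici 0) := by
      intro x hx
      refine Filter.Tendsto.max tendsto_const_nhds (ContinuousWithinAt.mul continuousWithinAt_const ?_)
      apply (Real.continuousAt_rpow_const x (2*μ) ?_).continuousWithinAt
      rcases eq_or_lt_of_le (mem_Ici.1 hx : (0:ℝ) ≤ x) with h | h
      · right; positivity
      · left; exact h.ne'
    exact this.congr hw
  -- product w * ψ is continuous on Ici 0
  have hwψcont : ContinuousOn (fun r => w r * ψ r) (Ici 0) := hwcont.mul hψcont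
  -- second derivative tends to 0 at 0+
  have hd2lim : Tendsto (deriv (deriv ψ)) (𝓝[>] (0:ℝ)) (𝓝 0) := by
    have h1 : Tendsto (fun r => w r * ψ r) (𝓝[>] (0:ℝ)) (𝓝 0) := by
      have h2 := hwψcont 0 self_mem_Ici
      have h0 : w 0 * ψ 0 = 0 := by rw [hψ0, mul_zero]
      rw [ContinuousWithinAt, h0] at h2
      exact h2.mono_left (nhdsWithin_mono _ (Ioi_subset_Ici le_rfl))
    refine h1.congr' ?_
    filter_upwards [self_mem_nhdsWithin] with r hr
    exact (hode r hr).symm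
  have hdd0 : HasDerivWithinAt (deriv ψ) 0 (Ici 0) 0 :=
    hasDerivWithinAt_Ici_of_tendsto_deriv
      (fun r hr => (hψd2 r hr).differentiableWithinAt)
      ((hdcont 0 self_mem_Ici).mono (Ioi_subset_Ici le_rfl)) self_mem_nhdsWithin hd2lim
  have hddiff : ∀ r ∈ Ici (0:ℝ), DifferentiableWithinAt ℝ (deriv ψ) (Ici 0) r := by
    intro r hr
    rcases eq_or_lt_of_le (mem_Ici.1 hr : (0:ℝ) ≤ r) with h | h
    · exact h ▸ hdd0.differentiableWithinAt
    · exact (hψd2 r h).differentiableWithinAt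
  have hdW : ∀ r ∈ Ici (0:ℝ), derivWithin (deriv ψ) (Ici 0) r = w r * ψ r := by
    intro r hr
    rcases eq_or_lt_of_le (mem_Ici.1 hr : (0:ℝ) ≤ r) with h | h
    · subst h
      rw [hdd0.derivWithin ((uniqueDiffOn_Ici 0) 0 self_mem_Ici), hψ0, mul_zero]
    · rw [(hψd2 r h).derivWithin ((uniqueDiffOn_Ici 0) r hr), hode r h]
  have hC1d : ContDiffOn ℝ 1 (deriv ψ) (Ici 0) := by
    have := (contDiffOn_succ_iff_derivWithin (n := 0) (uniqueDiffOn_Ici 0)).2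
      ⟨hddiff, fun h => by simp at h, contDiffOn_zero.2 (hwψcont.congr hdW)⟩
    exact_mod_cast this
  have hC2 : ContDiffOn ℝ 2 ψ (Ici 0) := by
    have := (contDiffOn_succ_iff_derivWithin (n := 1) (uniqueDiffOn_Ici 0)).2
      ⟨fun r hr => (hψdiff' r hr).differentiableWithinAt, fun h => by simp at h,
       hC1d.congr (fun x hx => (hψdiff' x hx).derivWithin ((uniqueDiffOn_Ici 0) x hx))⟩
    exact_mod_cast this
  have hwD : ∀ r : ℝ, 0 ≤ r → D ≤ w r := fun r hr => by
    rw [hw r hr]; exact le_max_left _ _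
  -- local persistence lemma
  have hL : ∀ a : ℝ, 0 ≤ a → 1 ≤ deriv ψ a → 0 ≤ ψ a →
      ∃ δ > 0, ∀ s ∈ Icc a (a+δ), 1 ≤ deriv ψ s ∧ 0 ≤ ψ s := by
    intro a ha h1 h2
    have hc := hdcont a ha
    have hev : {s : ℝ | (1:ℝ)/2 < deriv ψ s} ∈ 𝓝[Ici 0] a :=
      hc (Ioi_mem_nhds (by linarith))
    rw [Metric.mem_nhdsWithin_iff] at hev
    obtain ⟨ε, hε, hball⟩ := hev
    refine ⟨ε/2, by positivity, ?_⟩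
    have hsub : Icc a (a+ε/2) ⊆ Ici (0:ℝ) := fun s hs => le_trans ha hs.1
    have hhalf : ∀ s ∈ Icc a (a+ε/2), (1:ℝ)/2 < deriv ψ s := by
      intro s hs
      apply hball
      constructor
      · rw [Metric.mem_ball, Real.dist_eq, abs_lt]
        constructor <;> [linarith [hs.1]; linarith [hs.2, hε]]
      · exact hsub hs
    -- ψ is monotone on the interval
    have hmono1 : MonotoneOn ψ (Icc a (a+ε/2)) := by
      apply monotoneOn_of_deriv_nonneg (convex_Icc _ _) (hψcont.mono hsub)
      · intro x hx
        rw [interior_Icc] at hx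
        exact (hψdiff x (lt_of_le_of_lt ha hx.1)).differentiableWithinAt
      · intro x hx
        rw [interior_Icc] at hx
        exact le_of_lt (lt_of_lt_of_le (by norm_num) (le_of_lt
          (hhalf x (Ioo_subset_Icc_self hx))))
    have hψnn : ∀ s ∈ Icc a (a+ε/2), 0 ≤ ψ s := fun s hs =>
      le_trans h2 (hmono1 (left_mem_Icc.2 (by linarith)) hs hs.1)
    -- deriv ψ is monotone on the interval
    have hmono2 : MonotoneOn (deriv ψ) (Icc a (a+ε/2)) := by
      apply monotoneOn_of_deriv_nonneg (convex_Icc _ _) (hdcont.mono hsub)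
      · intro x hx
        rw [interior_Icc] at hx
        exact (hψd2 x (lt_of_le_of_lt ha hx.1)).differentiableWithinAt
      · intro x hx
        rw [interior_Icc] at hx
        have hx0 : 0 < x := lt_of_le_of_lt ha hx.1
        rw [hode x hx0]
        exact mul_nonneg (le_trans hD.le (hwD x hx0.le)) (hψnn x (Ioo_subset_Icc_self hx))
    intro s hs
    exact ⟨le_trans h1 (hmono2 (left_mem_Icc.2 (by linarith)) hs hs.1), hψnn s hs⟩
  -- global claim
  have hkey : ∀ r : ℝ, 0 ≤ r → 1 ≤ deriv ψ r ∧ 0 ≤ ψ r := by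
    by_contra hcon
    push_neg at hcon
    obtain ⟨r0, hr00, hr0⟩ := hcon
    have hr0' : ¬(1 ≤ deriv ψ r0 ∧ 0 ≤ ψ r0) := by
      intro ⟨h1, h2⟩; exact absurd h2 (not_le.2 (hr0 h1))
    set Bad : Set ℝ := {r : ℝ | 0 ≤ r ∧ ¬(1 ≤ deriv ψ r ∧ 0 ≤ ψ r)} with hBad
    have hne : Bad.Nonempty := ⟨r0, hr00, hr0'⟩
    have hbd : BddBelow Bad := ⟨0, fun x hx => hx.1⟩
    set T := sInf Bad with hT
    have hT0 : 0 ≤ T := le_csInf hne (fun x hx => hx.1)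
    have hgood : ∀ s, 0 ≤ s → s < T → 1 ≤ deriv ψ s ∧ 0 ≤ ψ s := by
      intro s hs hsT
      by_contra hbad
      exact absurd (csInf_le hbd ⟨hs, hbad⟩) (not_le.2 hsT)
    have hTgood : 1 ≤ deriv ψ T ∧ 0 ≤ ψ T := by
      rcases eq_or_lt_of_le hT0 with h | h
      · rw [← h, hψ'0, hψ0]; exact ⟨le_rfl, le_rfl⟩
      · have hc : ContinuousAt (deriv ψ) T := hdcont.continuousAt (Ici_mem_nhds h)
        have hcψ : ContinuousAt ψ T := hψcont.continuousAt (Ici_mem_nhds h)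
        have hIoo : Ioo 0 T ∈ 𝓝[<] T := Ioo_mem_nhdsLT_of_mem ⟨h, le_rfl⟩
        constructor
        · apply ge_of_tendsto (hc.continuousWithinAt.tendsto (s := Iio T))
          filter_upwards [hIoo] with s hs
          exact (hgood s hs.1.le hs.2).1
        · apply ge_of_tendsto (hcψ.continuousWithinAt.tendsto (s := Iio T))
          filter_upwards [hIoo] with s hs
          exact (hgood s hs.1.le hs.2).2
    obtain ⟨δ, hδ, hIcc⟩ := hL T hT0 hTgood.1 hTgood.2
    obtain ⟨b, hbBad, hblt⟩ := exists_lt_of_csInf_lt hne (show sInf Bad < T + δ by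
      rw [← hT]; linarith)
    rcases lt_or_ge b T with hb | hb
    · exact hbBad.2 (hgood b hbBad.1 hb)
    · exact hbBad.2 (hIcc b ⟨hb, by linarith⟩)
  have hd1 : ∀ r : ℝ, 0 ≤ r → 1 ≤ deriv ψ r := fun r hr => (hkey r hr).1
  have hψge : ∀ r : ℝ, 0 ≤ r → r ≤ ψ r := by
    have hmono : MonotoneOn (fun x => ψ x - x) (Ici 0) := by
      apply monotoneOn_of_deriv_nonneg (convex_Ici 0) (hψcont.sub continuousOn_id)
      · intro x hx
        rw [interior_Ici] at hx
        exact ((hψdiff x hx).sub differentiableAt_id).differentiableWithinAt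
      · intro x hx
        rw [interior_Ici] at hx
        rw [deriv_sub (hψdiff x hx) differentiableAt_id, deriv_id]
        linarith [hd1 x hx.le]
    intro r hr
    have := hmono self_mem_Ici hr hr
    simp only [hψ0] at this
    linarith
  have hψpos : ∀ r : ℝ, 0 < r → 0 < ψ r := fun r hr => lt_of_lt_of_le hr (hψge r hr.le)
  have htend : Tendsto ψ atTop atTop := by
    apply tendsto_atTop_mono' atTop ?_ tendsto_id
    filter_upwards [eventually_ge_atTop (0:ℝ)] with r hr
    exact hψge r hr
  -- Riccati variable
  set u : ℝ → ℝ := fun r => deriv ψ r / ψ r with hu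
  have hupos : ∀ r : ℝ, 0 < r → 0 < u r := fun r hr =>
    div_pos (lt_of_lt_of_le one_pos (hd1 r hr.le)) (hψpos r hr)
  have hu' : ∀ r : ℝ, 0 < r → HasDerivAt u (w r - (u r)^2) r := by
    intro r hr
    have h1 : HasDerivAt ψ (deriv ψ r) r := (hψdiff r hr).hasDerivAt
    have h2 : HasDerivAt (deriv ψ) (w r * ψ r) r := by
      have := (hψd2 r hr).hasDerivAt
      rwa [hode r hr] at this
    have h3 := h2.div h1 (hψpos r hr).ne'
    refine h3.congr_deriv (Eq.symm ?_)
    have hne := (hψpos r hr).ne'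
    rw [eq_div_iff (pow_ne_zero 2 hne)]
    have hur : u r = deriv ψ r / ψ r := rfl
    rw [hur, div_pow, sub_mul, div_mul_cancel₀ _ (pow_ne_zero 2 hne)]
    ring
  have hucont : ∀ r : ℝ, 0 < r → ContinuousAt u r := fun r hr =>
    (hu' r hr).differentiableAt.continuousAt
  -- rpow facts
  have hrpow_ge : ∀ r : ℝ, 1 ≤ r → r ≤ r ^ (2*μ) := by
    intro r hr
    calc r = r ^ (1:ℝ) := (Real.rpow_one r).symm
    _ ≤ r ^ (2*μ) := Real.rpow_le_rpow_of_exponent_le hr (by linarith)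
  have hrpow_geμ : ∀ r : ℝ, 1 ≤ r → r ≤ r ^ μ := by
    intro r hr
    calc r = r ^ (1:ℝ) := (Real.rpow_one r).symm
    _ ≤ r ^ μ := Real.rpow_le_rpow_of_exponent_le hr (by linarith)
  have hrpow_ge1 : ∀ r : ℝ, 1 ≤ r → 1 ≤ r ^ (2*μ) := fun r hr =>
    le_trans hr (hrpow_ge r hr)
  set R0 : ℝ := max 1 (D/Q) with hR0
  have hR01 : (1:ℝ) ≤ R0 := le_max_left _ _
  have hwQ : ∀ r : ℝ, R0 ≤ r → w r = Q * r ^ (2*μ) := by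
    intro r hr
    have hr1 : (1:ℝ) ≤ r := le_trans hR01 hr
    have hr0 : (0:ℝ) ≤ r := by linarith
    rw [hw r hr0, max_eq_right]
    have hdq : D / Q ≤ r := le_trans (le_max_right _ _) hr
    have h2 : D ≤ Q * r := by
      rw [div_le_iff₀ hQ] at hdq; linarith [mul_comm r Q]
    calc D ≤ Q * r := h2
    _ ≤ Q * r ^ (2*μ) := by
      have := hrpow_ge r hr1
      nlinarith
  have hsq : ∀ y : ℝ, 0 < y → (Real.sqrt Q * y ^ μ)^2 = Q * y ^ (2*μ) := by
    intro y hy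
    rw [mul_pow, Real.sq_sqrt hQ.le, sq, ← Real.rpow_add hy]
    ring_nf
  have hsqQ : (0:ℝ) < Real.sqrt Q := Real.sqrt_pos.2 hQ
  -- upper asymptotic bound
  have hR0pos : (0:ℝ) < R0 := lt_of_lt_of_le one_pos hR01
  have hUB : ∀ ε : ℝ, 0 < ε → ∀ᶠ x in atTop, u x ≤ (1+ε) * (Real.sqrt Q * x ^ μ) := by
    intro ε hε
    have hex : ∃ r₁, R0 ≤ r₁ ∧ u r₁ ≤ (1+ε) * (Real.sqrt Q * r₁ ^ μ) := by
      by_contra hcontra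
      push_neg at hcontra
      have hganti : AntitoneOn (fun r => u r + 2*ε*Q*r) (Ici R0) := by
        apply antitoneOn_of_deriv_nonpos (convex_Ici R0)
        · intro x hx
          exact ((hucont x (lt_of_lt_of_le hR0pos hx)).add
            ((continuous_const.mul continuous_id).continuousAt)).continuousWithinAt
        · intro x hx
          rw [interior_Ici] at hx
          exact ((hu' x (lt_trans hR0pos hx)).add (by
            simpa using (hasDerivAt_id x).const_mul
              (2*ε*Q))).differentiableAt.differentiableWithinAt
        · intro x hx
          rw [interior_Ici] at hx
          have hx0 : 0 < x := lt_trans hR0pos hx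
          have hx1 : (1:ℝ) ≤ x := le_trans hR01 hx.le
          have hder : deriv (fun r => u r + 2*ε*Q*r) x = (w x - u x^2) + 2*ε*Q := by
            have := (hu' x hx0).add ((hasDerivAt_id x).const_mul (2*ε*Q))
            exact this.deriv.trans (by simp)
          rw [hder, hwQ x hx.le]
          have hub := hcontra x hx.le
          have hvpos : 0 < Real.sqrt Q * x ^ μ := by positivity
          have hc : 0 < (1+ε) * (Real.sqrt Q * x^μ) := by positivity
          have hux : 0 < u x := lt_trans hc hub
          have husq : ((1+ε) * (Real.sqrt Q * x^μ))^2 ≤ u x ^ 2 := by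
            nlinarith [mul_pos (sub_pos.2 hub) (add_pos hux hc)]
          rw [mul_pow, hsq x hx0] at husq
          have hx2μ : 1 ≤ x ^ (2*μ) := hrpow_ge1 x hx1
          nlinarith [mul_pos hε hQ, mul_nonneg (mul_pos hε hQ).le (sub_nonneg.2 hx2μ),
            mul_nonneg (mul_nonneg hε.le hε.le)
              (mul_pos hQ (lt_of_lt_of_le one_pos hx2μ)).le]
      set X := R0 + (u R0 + 1)/(2*ε*Q) with hX
      have huR0 := hupos R0 hR0pos
      have hXge : R0 ≤ X := by
        have h0 : 0 ≤ (u R0 + 1)/(2*ε*Q) := div_nonneg (by linarith) (by positivity)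
        rw [hX]; linarith
      have hmem : X ∈ Ici R0 := hXge
      have hle : u X + 2*ε*Q*X ≤ u R0 + 2*ε*Q*R0 := hganti self_mem_Ici hmem hXge
      have hXpos := hupos X (lt_of_lt_of_le hR0pos hXge)
      have h2 : 2*ε*Q*X = 2*ε*Q*R0 + (u R0 + 1) := by
        rw [hX]; field_simp
      linarith
    obtain ⟨r₁, hr₁R, hr₁⟩ := hex
    have hr₁pos : 0 < r₁ := lt_of_lt_of_le hR0pos hr₁R
    filter_upwards [eventually_ge_atTop r₁] with x hx
    have hcontu : ContinuousOn u (Icc r₁ x) := fun y hy =>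
      (hucont y (lt_of_lt_of_le hr₁pos hy.1)).continuousWithinAt
    have hderivu : ∀ y ∈ Ico r₁ x, HasDerivWithinAt u (w y - u y^2) (Ici y) y := fun y hy =>
      (hu' y (lt_of_lt_of_le hr₁pos hy.1)).hasDerivWithinAt
    have hcontB : ContinuousOn (fun y : ℝ => (1+ε) * (Real.sqrt Q * y ^ μ)) (Icc r₁ x) := by
      intro y hy
      have hy0 : 0 < y := lt_of_lt_of_le hr₁pos hy.1
      exact (continuousAt_const.mul (continuousAt_const.mul
        (Real.continuousAt_rpow_const y μ (Or.inl hy0.ne')))).continuousWithinAt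
    have hderivB : ∀ y ∈ Ico r₁ x, HasDerivWithinAt
        (fun y : ℝ => (1+ε) * (Real.sqrt Q * y ^ μ))
        ((1+ε) * (Real.sqrt Q * (μ * y ^ (μ-1)))) (Ici y) y := by
      intro y hy
      have hy0 : 0 < y := lt_of_lt_of_le hr₁pos hy.1
      exact (((Real.hasDerivAt_rpow_const (p := μ)
        (Or.inl hy0.ne')).const_mul (Real.sqrt Q)).const_mul (1+ε)).hasDerivWithinAt
    have hbound : ∀ y ∈ Ico r₁ x, u y = (1+ε) * (Real.sqrt Q * y ^ μ) →
        w y - u y^2 < (1+ε) * (Real.sqrt Q * (μ * y ^ (μ-1))) := by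
      intro y hy hEq
      have hy0 : 0 < y := lt_of_lt_of_le hr₁pos hy.1
      have hyR0 : R0 ≤ y := le_trans hr₁R hy.1
      rw [hwQ y hyR0]
      have h1 : u y ^ 2 = (1+ε)^2 * (Q * y^(2*μ)) := by rw [hEq, mul_pow, hsq y hy0]
      have hBpos : 0 < (1+ε) * (Real.sqrt Q * (μ * y ^ (μ-1))) := by
        have := Real.rpow_pos_of_pos hy0 (μ-1)
        positivity
      have hypos := Real.rpow_pos_of_pos hy0 (2*μ)
      nlinarith [mul_pos (mul_pos hε hQ) hypos,
        mul_nonneg (mul_nonneg hε.le hε.le) (mul_pos hQ hypos).le, hBpos]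
    exact image_le_of_deriv_right_lt_deriv_boundary' hcontu hderivu hr₁ hcontB hderivB hbound
      (right_mem_Icc.2 hx)
  -- lower asymptotic bound
  have hLB : ∀ ε : ℝ, 0 < ε → ε < 1 → ∀ᶠ x in atTop, (1-ε) * (Real.sqrt Q * x ^ μ) ≤ u x := by
    intro ε hε hε1
    set R' : ℝ := max R0 (μ/(ε*Real.sqrt Q) + 1) with hR'
    have hR'R0 : R0 ≤ R' := le_max_left _ _
    have hR'pos : 0 < R' := lt_of_lt_of_le hR0pos hR'R0
    have hR'1 : (1:ℝ) ≤ R' := le_trans hR01 hR'R0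
    have hR'μ : μ/(ε*Real.sqrt Q) < R' := lt_of_lt_of_le (by linarith) (le_max_right _ _)
    have hss : Real.sqrt Q * Real.sqrt Q = Q := Real.mul_self_sqrt hQ.le
    have hkeyineq : ∀ y : ℝ, R' ≤ y →
        (1-ε) * (Real.sqrt Q * (μ * y ^ (μ-1))) < ε * Q * y^(2*μ) := by
      intro y hy
      have hy1 : (1:ℝ) ≤ y := le_trans hR'1 hy
      have hy0 : (0:ℝ) < y := by linarith
      have hyμ : μ/(ε*Real.sqrt Q) < y := lt_of_lt_of_le hR'μ hy
      have h2 : μ < y * (ε*Real.sqrt Q) := (div_lt_iff₀ (by positivity)).1 hyμ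
      have hpow1 : 0 < y^(μ-1) := Real.rpow_pos_of_pos hy0 _
      have hsplit : y^(2*μ) = y^(μ+1) * y^(μ-1) := by
        rw [← Real.rpow_add hy0]; ring_nf
      have hge : y ≤ y^(μ+1) := by
        calc y = y ^ (1:ℝ) := (Real.rpow_one y).symm
        _ ≤ y ^ (μ+1) := Real.rpow_le_rpow_of_exponent_le hy1 (by linarith)
      have hμpos : (0:ℝ) < μ := by linarith
      rw [hsplit]
      have t1 : μ * (Real.sqrt Q * y^(μ-1)) < (y * (ε*Real.sqrt Q)) * (Real.sqrt Q * y^(μ-1)) :=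
        mul_lt_mul_of_pos_right h2 (by positivity)
      have t2 : (ε*Q) * y * y^(μ-1) ≤ (ε*Q) * y^(μ+1) * y^(μ-1) := by
        have := mul_le_mul_of_nonneg_right hge (mul_pos (mul_pos hε hQ) hpow1).le
        nlinarith [this]
      have hXnn : 0 ≤ Real.sqrt Q * (μ * y^(μ-1)) := by positivity
      nlinarith [t1, t2, hXnn, mul_nonneg hε.le hXnn, hss]
    have hex : ∃ r₁, R' ≤ r₁ ∧ (1-ε) * (Real.sqrt Q * r₁ ^ μ) ≤ u r₁ := by
      by_contra hcontra
      push_neg at hcontra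
      set C : ℝ := (1-ε)*Real.sqrt Q*(2:ℝ)^(2*μ)/(ε*Q) with hC
      set X : ℝ := max (R'+1) (max 2 (C+1)) with hXdef
      have hX1 : R'+1 ≤ X := le_max_left _ _
      have hX2 : (2:ℝ) ≤ X := le_trans (le_max_left _ _) (le_max_right _ _)
      have hXC : C+1 ≤ X := le_trans (le_max_right _ _) (le_max_right _ _)
      have hXR' : R' ≤ X - 1 := by linarith
      have hX0 : (0:ℝ) < X := by linarith
      have hXm10 : (0:ℝ) < X - 1 := by linarith
      have hXm11 : (1:ℝ) ≤ X - 1 := by linarith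
      -- u grows at rate at least εQ(X-1)^(2μ) on [X-1, X]
      have hmono : MonotoneOn (fun s => u s - (ε*Q*(X-1)^(2*μ)) * s) (Icc (X-1) X) := by
        apply monotoneOn_of_deriv_nonneg (convex_Icc _ _)
        · intro s hs
          exact ((hucont s (lt_of_lt_of_le hXm10 hs.1)).sub
            ((continuous_const.mul continuous_id).continuousAt)).continuousWithinAt
        · intro s hs
          rw [interior_Icc] at hs
          exact ((hu' s (lt_trans hXm10 hs.1)).sub (by
            simpa using (hasDerivAt_id s).const_mul
              (ε*Q*(X-1)^(2*μ)))).differentiableAt.differentiableWithinAt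
        · intro s hs
          rw [interior_Icc] at hs
          have hs0 : 0 < s := lt_trans hXm10 hs.1
          have hsR' : R' ≤ s := le_trans hXR' hs.1.le
          have hder : deriv (fun r => u r - (ε*Q*(X-1)^(2*μ)) * r) s
              = (w s - u s^2) - ε*Q*(X-1)^(2*μ) := by
            have := (hu' s hs0).sub ((hasDerivAt_id s).const_mul (ε*Q*(X-1)^(2*μ)))
            exact this.deriv.trans (by simp)
          rw [hder, hwQ s (le_trans hR'R0 hsR')]
          have hus := hcontra s hsR'
          have huspos := hupos s hs0
          have hvpos : 0 < Real.sqrt Q * s ^ μ := by positivity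
          have husq : u s^2 ≤ (1-ε)^2 * (Q * s^(2*μ)) := by
            have hc : 0 ≤ (1-ε) * (Real.sqrt Q * s^μ) :=
              mul_nonneg (by linarith) (by positivity)
            have h4 : ((1-ε) * (Real.sqrt Q * s^μ))^2 = (1-ε)^2 * (Q * s^(2*μ)) := by
              rw [mul_pow, hsq s hs0]
            nlinarith [mul_lt_mul_of_pos_left hus huspos,
              mul_le_mul_of_nonneg_right hus.le hc]
          have hspow : (X-1)^(2*μ) ≤ s^(2*μ) :=
            Real.rpow_le_rpow hXm10.le hs.1.le (by linarith)
          have hspos := Real.rpow_pos_of_pos hs0 (2*μ)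
          nlinarith [mul_pos (mul_pos hε hQ) hspos,
            mul_nonneg (mul_nonneg (mul_pos hε hQ).le (by linarith : (0:ℝ) ≤ 1-ε)) hspos.le,
            mul_nonneg (mul_nonneg hε.le hε.le) hspos.le,
            mul_le_mul_of_nonneg_left hspow (mul_pos hε hQ).le]
      have hstep : u (X-1) - (ε*Q*(X-1)^(2*μ)) * (X-1) ≤ u X - (ε*Q*(X-1)^(2*μ)) * X := by
        have := hmono (left_mem_Icc.2 (by linarith)) (right_mem_Icc.2 (by linarith))
          (by linarith : X - 1 ≤ X)
        simpa using this
      have huXm1 := hupos (X-1) hXm10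
      have hgrow : ε*Q*(X-1)^(2*μ) < u X := by nlinarith [hstep]
      -- but u X is small by assumption
      have husX := hcontra X (by linarith)
      have hhalf : X/2 ≤ X - 1 := by linarith
      have hpowhalf : (X/2)^(2*μ) ≤ (X-1)^(2*μ) :=
        Real.rpow_le_rpow (by positivity) hhalf (by linarith)
      have hdivpow : (X/2)^(2*μ) = X^(2*μ)/(2:ℝ)^(2*μ) :=
        Real.div_rpow hX0.le (by norm_num) _
      set c2 : ℝ := (2:ℝ)^(2*μ) with hc2def
      have hc2 : 0 < c2 := Real.rpow_pos_of_pos (by norm_num) _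
      set P : ℝ := X^μ with hPdef
      have hP : 0 < P := Real.rpow_pos_of_pos hX0 _
      have hPX : X ≤ P := hrpow_geμ X (by linarith)
      have hXsplit : X^(2*μ) = P * P := by
        rw [hPdef, ← Real.rpow_add hX0]; ring_nf
      -- εQ X^(2μ)/c2 < (1-ε)√Q P
      have hmain : ε*Q*(P*P)/c2 < (1-ε)*(Real.sqrt Q * P) := by
        rw [← hXsplit]
        calc ε*Q*X^(2*μ)/c2 = ε*Q*(X^(2*μ)/c2) := by ring
        _ ≤ ε*Q*(X-1)^(2*μ) := by
          rw [← hdivpow]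
          nlinarith [hpowhalf, mul_pos hε hQ]
        _ < u X := hgrow
        _ < (1-ε) * (Real.sqrt Q * X^μ) := husX
        _ = (1-ε)*(Real.sqrt Q * P) := by rw [hPdef]
      have h5 : ε*Q*P < (1-ε)*Real.sqrt Q*c2 := by
        rw [div_lt_iff₀ hc2] at hmain
        by_contra h
        push_neg at h
        nlinarith [mul_le_mul_of_nonneg_right h hP.le]
      have hPC : P < C := by
        rw [hC, lt_div_iff₀ (by positivity)]
        nlinarith [h5]
      linarith
    obtain ⟨r₁, hr₁R, hr₁⟩ := hex
    have hr₁pos : 0 < r₁ := lt_of_lt_of_le hR'pos hr₁R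
    filter_upwards [eventually_ge_atTop r₁] with x hx
    have hcontu : ContinuousOn u (Icc r₁ x) := fun y hy =>
      (hucont y (lt_of_lt_of_le hr₁pos hy.1)).continuousWithinAt
    have hderivu : ∀ y ∈ Ico r₁ x, HasDerivWithinAt u (w y - u y^2) (Ici y) y := fun y hy =>
      (hu' y (lt_of_lt_of_le hr₁pos hy.1)).hasDerivWithinAt
    have hcontB : ContinuousOn (fun y : ℝ => (1-ε) * (Real.sqrt Q * y ^ μ)) (Icc r₁ x) := by
      intro y hy
      have hy0 : 0 < y := lt_of_lt_of_le hr₁pos hy.1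
      exact (continuousAt_const.mul (continuousAt_const.mul
        (Real.continuousAt_rpow_const y μ (Or.inl hy0.ne')))).continuousWithinAt
    have hderivB : ∀ y ∈ Ico r₁ x, HasDerivWithinAt
        (fun y : ℝ => (1-ε) * (Real.sqrt Q * y ^ μ))
        ((1-ε) * (Real.sqrt Q * (μ * y ^ (μ-1)))) (Ici y) y := by
      intro y hy
      have hy0 : 0 < y := lt_of_lt_of_le hr₁pos hy.1
      exact (((Real.hasDerivAt_rpow_const (p := μ)
        (Or.inl hy0.ne')).const_mul (Real.sqrt Q)).const_mul (1-ε)).hasDerivWithinAt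
    have hbound : ∀ y ∈ Ico r₁ x, (1-ε) * (Real.sqrt Q * y ^ μ) = u y →
        (1-ε) * (Real.sqrt Q * (μ * y ^ (μ-1))) < w y - u y^2 := by
      intro y hy hEq
      have hy0 : 0 < y := lt_of_lt_of_le hr₁pos hy.1
      have hyR' : R' ≤ y := le_trans hr₁R hy.1
      rw [hwQ y (le_trans hR'R0 hyR')]
      have h1 : u y ^ 2 = (1-ε)^2 * (Q * y^(2*μ)) := by
        rw [← hEq, mul_pow, hsq y hy0]
      have hypos := Real.rpow_pos_of_pos hy0 (2*μ)
      nlinarith [hkeyineq y hyR', hypos,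
        mul_nonneg (mul_nonneg (mul_pos hε hQ).le (by linarith : (0:ℝ) ≤ 1-ε)) hypos.le,
        mul_nonneg (mul_nonneg hε.le hε.le) hypos.le]
    exact image_le_of_deriv_right_lt_deriv_boundary' hcontB hderivB hr₁ hcontu hderivu hbound
      (right_mem_Icc.2 hx)
  -- the limit
  have hfinal : Tendsto (fun r : ℝ => deriv ψ r / (r ^ μ * ψ r)) atTop (𝓝 (Real.sqrt Q)) := by
    rw [Metric.tendsto_atTop]
    intro δ hδ
    set ε : ℝ := min (1/2) (δ/(2*Real.sqrt Q)) with hεdef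
    have hεpos : 0 < ε := lt_min (by norm_num) (by positivity)
    have hε1 : ε < 1 := lt_of_le_of_lt (min_le_left _ _) (by norm_num)
    have hεδ : ε * Real.sqrt Q ≤ δ/2 := by
      have hm : ε ≤ δ/(2*Real.sqrt Q) := by rw [hεdef]; exact min_le_right _ _
      have h2 : ε * Real.sqrt Q ≤ (δ/(2*Real.sqrt Q)) * Real.sqrt Q :=
        mul_le_mul_of_nonneg_right hm hsqQ.le
      have h3 : (δ/(2*Real.sqrt Q)) * Real.sqrt Q = δ/2 := by
        field_simp
      linarith
    obtain ⟨N1, hN1⟩ := eventually_atTop.1 (hUB ε hεpos)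
    obtain ⟨N2, hN2⟩ := eventually_atTop.1 (hLB ε hεpos hε1)
    refine ⟨max N1 (max N2 1), fun r hr => ?_⟩
    have hrN1 : N1 ≤ r := le_trans (le_max_left _ _) hr
    have hrN2 : N2 ≤ r := le_trans (le_trans (le_max_left _ _) (le_max_right _ _)) hr
    have hr1 : (1:ℝ) ≤ r := le_trans (le_trans (le_max_right _ _) (le_max_right _ _)) hr
    have hr0 : (0:ℝ) < r := by linarith
    have hrμ : 0 < r ^ μ := Real.rpow_pos_of_pos hr0 _
    have hψr := hψpos r hr0
    have hFr : deriv ψ r / (r ^ μ * ψ r) = u r / r ^ μ := by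
      have hur : u r = deriv ψ r / ψ r := rfl
      rw [hur, div_div, mul_comm]
    rw [Real.dist_eq, hFr]
    have hub := hN1 r hrN1
    have hlb := hN2 r hrN2
    have hub' : u r / r^μ ≤ (1+ε) * Real.sqrt Q := by
      rw [div_le_iff₀ hrμ]
      calc u r ≤ (1+ε) * (Real.sqrt Q * r^μ) := hub
      _ = (1+ε) * Real.sqrt Q * r^μ := by ring
    have hlb' : (1-ε) * Real.sqrt Q ≤ u r / r^μ := by
      rw [le_div_iff₀ hrμ]
      calc (1-ε) * Real.sqrt Q * r^μ = (1-ε) * (Real.sqrt Q * r^μ) := by ring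
      _ ≤ u r := hlb
    rw [abs_lt]
    constructor <;> nlinarith [hεδ, hδ, hsqQ]
  exact ⟨hC2, hψpos, htend, fun r hr => lt_of_lt_of_le one_pos (hd1 r hr), hfinal⟩
end

section
/- Let n ≥ 2 be an integer and let m > 1, μ > 1, β > 0 be real numbers. Then there exist r₀ > 0 and C̄ > 0 such that for every C ≥ C̄ and every function 𝔪 : (0,∞) → ℝ satisfying 𝔪(r) ≥ (n−1)/r for all r ∈ (0,1) and 𝔪(r) ≥ β·r^μ for all r ≥ 1, the function v̄(r) := C·(r² + r₀²)^{−(μ−1)/(2(m−1))} satisfies (v̄^m)''(r) + 𝔪(r)·(v̄^m)'(r) + v̄(r)/(m−1) ≤ 0 for all r > 0. -/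
open Real Filter Set

lemma aux_base (r₀ r : ℝ) : HasDerivAt (fun s : ℝ => s ^ 2 + r₀ ^ 2) (2 * r) r := by
  simpa using (hasDerivAt_pow 2 r).add_const (r₀ ^ 2)

lemma aux_hasDerivAt (c p r₀ r : ℝ) (h : r₀ ≠ 0) :
    HasDerivAt (fun s : ℝ => c * (s ^ 2 + r₀ ^ 2) ^ p)
      (c * (2 * r * p * (r ^ 2 + r₀ ^ 2) ^ (p - 1))) r := by
  have hne : r ^ 2 + r₀ ^ 2 ≠ 0 := by positivity
  exact ((aux_base r₀ r).rpow_const (Or.inl hne)).const_mul c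

lemma aux_deriv_fun (c p r₀ : ℝ) (h : r₀ ≠ 0) :
    deriv (fun s : ℝ => c * (s ^ 2 + r₀ ^ 2) ^ p)
      = fun r : ℝ => (2 * c * p) * (r * (r ^ 2 + r₀ ^ 2) ^ (p - 1)) := by
  funext r
  rw [(aux_hasDerivAt c p r₀ r h).deriv]; ring

lemma aux_hasDerivAt2 (k p r₀ r : ℝ) (h : r₀ ≠ 0) :
    HasDerivAt (fun s : ℝ => k * (s * (s ^ 2 + r₀ ^ 2) ^ p))
      (k * ((r ^ 2 + r₀ ^ 2) ^ p + r * (2 * r * p * (r ^ 2 + r₀ ^ 2) ^ (p - 1)))) r := by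
  have hne : r ^ 2 + r₀ ^ 2 ≠ 0 := by positivity
  have h1 := (aux_base r₀ r).rpow_const (Or.inl hne) (p := p)
  have h2 := (hasDerivAt_id r).mul h1
  simpa only [Pi.mul_apply, id_eq, one_mul] using h2.const_mul k

set_option maxHeartbeats 1000000 in
/-- Lemma 4.3 (`ell-ssol`) in radial form: on a manifold whose Laplacian of the distance
function satisfies `𝔪(r) ≥ (n-1)/r` near the pole and `𝔪(r) ≥ β r^μ` for `r ≥ 1`, the
radial function `v̄(r) = C (r² + r₀²)^{-(μ-1)/(2(m-1))}` is a supersolution of the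
sublinear elliptic equation `-Δ v^m = v/(m-1)`, i.e.
`(v̄^m)'' + 𝔪 (v̄^m)' + v̄/(m-1) ≤ 0`, for all sufficiently large `r₀` and `C`. -/
theorem stmt_2 (n : ℕ) (hn : 2 ≤ n) (m μ β : ℝ) (hm : 1 < m) (hμ : 1 < μ) (hβ : 0 < β) :
    ∃ r₀ > (0:ℝ), ∃ Cbar > (0:ℝ), ∀ C : ℝ, Cbar ≤ C → ∀ 𝔪 : ℝ → ℝ,
      (∀ r : ℝ, 0 < r → r < 1 → ((n:ℝ) - 1) / r ≤ 𝔪 r) →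
      (∀ r : ℝ, 1 ≤ r → β * r ^ μ ≤ 𝔪 r) →
      ∀ vbar : ℝ → ℝ,
        (vbar = fun s : ℝ => C * (s ^ 2 + r₀ ^ 2) ^ (-(μ - 1) / (2 * (m - 1)))) →
        ∀ r : ℝ, 0 < r →
          deriv (deriv (fun s : ℝ => vbar s ^ m)) r
              + 𝔪 r * deriv (fun s : ℝ => vbar s ^ m) r
              + vbar r / (m - 1) ≤ 0 := by
  have hm1 : (0:ℝ) < m - 1 := by linarith
  have hμ1 : (0:ℝ) < μ - 1 := by linarith
  have hβ' : (0:ℝ) < 1 + 1/β := by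
    have := one_div_pos.mpr hβ; linarith
  have hμ2 : (0:ℝ) ≤ (μ + 1)/2 := by linarith
  set γ : ℝ := m * (μ - 1) / (2 * (m - 1)) with hγdef
  have hγ : 0 < γ := div_pos (mul_pos (by linarith) hμ1) (by linarith)
  have harg : (0:ℝ) < 4 * (γ + 1) * (1 + 1/β) := mul_pos (by linarith) hβ'
  set r₀ : ℝ := Real.sqrt (4 * (γ + 1) * (1 + 1/β)) with hr₀def
  have hr₀sq : r₀ ^ 2 = 4 * (γ + 1) * (1 + 1/β) := by
    rw [hr₀def, Real.sq_sqrt harg.le]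
  have hr₀ : 0 < r₀ := by rw [hr₀def]; exact Real.sqrt_pos.mpr harg
  set K : ℝ := (1 + r₀ ^ 2) ^ ((μ + 1)/2) * (1 + 1/β) / (γ * (m - 1)) with hKdef
  have hpow : (0:ℝ) < (1 + r₀ ^ 2) ^ ((μ + 1)/2) :=
    Real.rpow_pos_of_pos (by positivity) _
  have hK : 0 < K := by
    rw [hKdef]; exact div_pos (mul_pos hpow hβ') (mul_pos hγ hm1)
  clear_value K r₀ γ
  refine ⟨r₀, hr₀, K ^ (1/(m-1)), Real.rpow_pos_of_pos hK _, ?_⟩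
  intro C hC 𝔪 h1 h2 vbar hv r hr
  have hCb : (0:ℝ) < K ^ (1/(m-1)) := Real.rpow_pos_of_pos hK _
  have hC0 : 0 < C := lt_of_lt_of_le hCb hC
  have hCK : K ≤ C ^ (m - 1) := by
    have h' : (K ^ (1/(m-1))) ^ (m-1) ≤ C ^ (m-1) :=
      Real.rpow_le_rpow hCb.le hC hm1.le
    rwa [← Real.rpow_mul hK.le, one_div, inv_mul_cancel₀ hm1.ne', Real.rpow_one] at h'
  have hQ : 0 < C ^ m := Real.rpow_pos_of_pos hC0 _
  have hQsplit : C ^ m = C ^ (m - 1) * C := by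
    nth_rewrite 1 [show m = (m - 1) + 1 by ring]
    rw [Real.rpow_add hC0, Real.rpow_one]
  have hr₀2 : (0:ℝ) < r₀ ^ 2 := pow_pos hr₀ 2
  -- rewrite vbar^m
  have hveq : (fun s : ℝ => vbar s ^ m)
      = fun s : ℝ => (C ^ m) * (s ^ 2 + r₀ ^ 2) ^ (-γ) := by
    funext s
    have hA : (0:ℝ) < s ^ 2 + r₀ ^ 2 :=
      add_pos_of_nonneg_of_pos (sq_nonneg s) hr₀2
    rw [hv]
    rw [Real.mul_rpow hC0.le (Real.rpow_nonneg hA.le _), ← Real.rpow_mul hA.le]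
    congr 1
    rw [hγdef]; field_simp
  have hd1 : deriv (fun s : ℝ => vbar s ^ m) r
      = (2 * (C ^ m) * (-γ)) * (r * (r ^ 2 + r₀ ^ 2) ^ (-γ - 1)) := by
    rw [hveq, aux_deriv_fun _ _ _ hr₀.ne']
  have hd2 : deriv (deriv (fun s : ℝ => vbar s ^ m)) r
      = (2 * (C ^ m) * (-γ)) * ((r ^ 2 + r₀ ^ 2) ^ (-γ - 1)
          + r * (2 * r * (-γ - 1) * (r ^ 2 + r₀ ^ 2) ^ (-γ - 1 - 1))) := by
    rw [hveq, aux_deriv_fun _ _ _ hr₀.ne']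
    exact (aux_hasDerivAt2 (2 * (C ^ m) * (-γ)) (-γ - 1) r₀ r hr₀.ne').deriv
  rw [hd1, hd2, hv]
  beta_reduce
  set A : ℝ := r ^ 2 + r₀ ^ 2 with hAdef
  have hA : 0 < A := add_pos_of_nonneg_of_pos (sq_nonneg r) hr₀2
  have hP : 0 < A ^ (-γ - 1) := Real.rpow_pos_of_pos hA _
  have hA2 : A ^ (-γ - 1 - 1) = A ^ (-γ - 1) / A := by
    rw [show -γ - 1 - 1 = (-γ - 1) + (-1) by ring, Real.rpow_add hA, Real.rpow_neg_one,
      div_eq_mul_inv]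
  have hAα : A ^ (-(μ - 1) / (2 * (m - 1))) = A ^ ((μ + 1)/2) * A ^ (-γ - 1) := by
    rw [← Real.rpow_add hA]
    congr 1
    rw [hγdef]; field_simp; ring
  rw [hA2, hAα]
  have h4γ : (0:ℝ) < 4 * γ * (γ + 1) := by
    linarith [mul_pos hγ (show (0:ℝ) < γ + 1 by linarith)]
  have key : (C ^ m) * (-2*γ) + (C ^ m) * (4*γ*(γ+1)) * (r^2/A)
      + (C ^ m) * (-2*γ) * (r * 𝔪 r) + (C / (m-1)) * A ^ ((μ + 1)/2) ≤ 0 := by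
    rcases lt_or_ge r 1 with hlt | hge
    · -- r < 1
      have h𝔪 := h1 r hr hlt
      have hn' : (1:ℝ) ≤ (n:ℝ) - 1 := by
        have : (2:ℝ) ≤ n := by exact_mod_cast hn
        linarith
      have b1 : 1 ≤ r * 𝔪 r := by
        have h' := mul_le_mul_of_nonneg_left h𝔪 hr.le
        rw [mul_div_assoc', mul_comm, mul_div_assoc, div_self hr.ne', mul_one] at h'
        linarith
      have t3 : (C ^ m) * (-2*γ) * (r * 𝔪 r) ≤ (C ^ m) * (-2*γ) := by
        linarith [mul_le_mul_of_nonneg_left b1 (mul_pos hQ (show (0:ℝ) < 2*γ by linarith)).le]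
      have hr2le : r ^ 2 ≤ 1 := by
        rw [pow_two]; linarith [mul_le_mul_of_nonneg_left hlt.le hr.le]
      have hAge : r₀ ^ 2 ≤ A := by rw [hAdef]; linarith [sq_nonneg r]
      have b2 : r ^ 2 / A ≤ 1 / r₀ ^ 2 := div_le_div₀ zero_le_one hr2le hr₀2 hAge
      have h4a : 4 * (γ + 1) ≤ r₀ ^ 2 := by
        rw [hr₀sq]
        linarith [mul_pos (show (0:ℝ) < γ + 1 by linarith) (one_div_pos.mpr hβ)]
      have b3 : 4*γ*(γ+1) * (1 / r₀ ^ 2) ≤ γ := by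
        rw [mul_one_div, div_le_iff₀ hr₀2]
        linarith [mul_le_mul_of_nonneg_left h4a hγ.le]
      have t2 : (C ^ m) * (4*γ*(γ+1)) * (r^2/A) ≤ γ * (C ^ m) := by
        have hb : 4*γ*(γ+1) * (r^2/A) ≤ γ :=
          le_trans (mul_le_mul_of_nonneg_left b2 h4γ.le) b3
        linarith [mul_le_mul_of_nonneg_left hb hQ.le]
      have b4 : A ^ ((μ + 1)/2) ≤ (1 + r₀ ^ 2) ^ ((μ + 1)/2) := by
        apply Real.rpow_le_rpow hA.le _ hμ2
        rw [hAdef]; linarith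
      have e : γ * (m-1) * K = (1 + r₀ ^ 2) ^ ((μ + 1)/2) * (1 + 1/β) := by
        rw [hKdef]; field_simp
      have h1' : (1 + r₀ ^ 2) ^ ((μ + 1)/2) ≤ γ * (m-1) * K := by
        rw [e]; linarith [mul_pos hpow (one_div_pos.mpr hβ)]
      have h2' : γ * (m-1) * K ≤ γ * (m-1) * (C ^ (m-1)) :=
        mul_le_mul_of_nonneg_left hCK (mul_pos hγ hm1).le
      have b5 : (C / (m-1)) * ((1 + r₀ ^ 2) ^ ((μ + 1)/2)) ≤ γ * (C ^ m) := by
        rw [div_mul_eq_mul_div, div_le_iff₀ hm1, hQsplit]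
        linarith [mul_le_mul_of_nonneg_left (le_trans h1' h2') hC0.le]
      have t4 : (C / (m-1)) * A ^ ((μ + 1)/2) ≤ γ * (C ^ m) :=
        le_trans (mul_le_mul_of_nonneg_left b4 (div_pos hC0 hm1).le) b5
      linarith [t2, t3, t4, mul_pos hQ hγ]
    · -- 1 ≤ r
      have h𝔪 := h2 r hge
      set R : ℝ := r ^ (μ + 1) with hRdef
      have hR1 : (1:ℝ) ≤ R := Real.one_le_rpow hge (by linarith)
      have hrμ : r * r ^ μ = R := by
        rw [hRdef, Real.rpow_add hr, Real.rpow_one]; ring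
      have b1 : β * R ≤ r * 𝔪 r := by
        have h' := mul_le_mul_of_nonneg_left h𝔪 hr.le
        calc β * R = r * (β * r ^ μ) := by rw [← hrμ]; ring
          _ ≤ r * 𝔪 r := h'
      have t3 : (C ^ m) * (-2*γ) * (r * 𝔪 r) ≤ (C ^ m) * (-2*γ) * (β * R) := by
        linarith [mul_le_mul_of_nonneg_left b1 (mul_pos hQ (show (0:ℝ) < 2*γ by linarith)).le]
      have hr2R : r ^ 2 ≤ R := by
        rw [hRdef, ← Real.rpow_natCast r 2]
        apply Real.rpow_le_rpow_of_exponent_le hge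
        push_cast; linarith
      have hAge : r₀ ^ 2 ≤ A := by rw [hAdef]; linarith [sq_nonneg r]
      have b2 : r ^ 2 / A ≤ R / r₀ ^ 2 :=
        div_le_div₀ (by linarith) hr2R hr₀2 hAge
      have h4a : 4 * (γ + 1) ≤ β * r₀ ^ 2 := by
        rw [hr₀sq]
        have hb1 : β * (4 * (γ + 1) * (1 + 1/β)) = 4 * (γ + 1) * (β + 1) := by
          field_simp
        rw [hb1]; linarith [mul_pos (show (0:ℝ) < γ + 1 by linarith) hβ]
      have b3 : 4*γ*(γ+1) * (1 / r₀ ^ 2) ≤ γ * β := by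
        rw [mul_one_div, div_le_iff₀ hr₀2]
        linarith [mul_le_mul_of_nonneg_left h4a hγ.le]
      have t2 : (C ^ m) * (4*γ*(γ+1)) * (r^2/A) ≤ γ * β * (C ^ m) * R := by
        have hb : 4*γ*(γ+1) * (r^2/A) ≤ γ * β * R := by
          calc 4*γ*(γ+1) * (r^2/A) ≤ 4*γ*(γ+1) * (R / r₀ ^ 2) :=
                mul_le_mul_of_nonneg_left b2 h4γ.le
            _ = (4*γ*(γ+1) * (1 / r₀ ^ 2)) * R := by ring
            _ ≤ (γ * β) * R := mul_le_mul_of_nonneg_right b3 (by linarith)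
        linarith [mul_le_mul_of_nonneg_left hb hQ.le]
      have b4 : A ^ ((μ + 1)/2) ≤ (1 + r₀ ^ 2) ^ ((μ + 1)/2) * R := by
        have hle : A ≤ (1 + r₀ ^ 2) * r ^ 2 := by
          rw [hAdef]
          have hr21 : 1 ≤ r ^ 2 := by
            rw [pow_two]; nlinarith [mul_le_mul_of_nonneg_left hge hr.le]
          linarith [mul_nonneg (show (0:ℝ) ≤ r^2 - 1 by linarith) hr₀2.le]
        have h1' : A ^ ((μ + 1)/2) ≤ ((1 + r₀ ^ 2) * r ^ 2) ^ ((μ + 1)/2) :=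
          Real.rpow_le_rpow hA.le hle hμ2
        have h2' : ((1 + r₀ ^ 2) * r ^ 2) ^ ((μ + 1)/2)
            = (1 + r₀ ^ 2) ^ ((μ + 1)/2) * R := by
          rw [Real.mul_rpow (by positivity) (sq_nonneg r), hRdef,
            ← Real.rpow_natCast r 2, ← Real.rpow_mul hr.le]
          congr 1
          push_cast; ring
        linarith [h1'.trans_eq h2']
      have e2 : γ * β * (m-1) * K = (1 + r₀ ^ 2) ^ ((μ + 1)/2) * (β + 1) := by
        rw [hKdef]; field_simp
      have h1' : (1 + r₀ ^ 2) ^ ((μ + 1)/2) ≤ γ * β * (m-1) * K := by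
        rw [e2]; linarith [mul_pos hpow hβ]
      have h2' : γ * β * (m-1) * K ≤ γ * β * (m-1) * (C ^ (m-1)) :=
        mul_le_mul_of_nonneg_left hCK (mul_pos (mul_pos hγ hβ) hm1).le
      have b5 : (C / (m-1)) * ((1 + r₀ ^ 2) ^ ((μ + 1)/2)) ≤ γ * β * (C ^ m) := by
        rw [div_mul_eq_mul_div, div_le_iff₀ hm1, hQsplit]
        linarith [mul_le_mul_of_nonneg_left (le_trans h1' h2') hC0.le]
      have t4 : (C / (m-1)) * A ^ ((μ + 1)/2) ≤ γ * β * (C ^ m) * R := by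
        calc (C / (m-1)) * A ^ ((μ + 1)/2)
            ≤ (C / (m-1)) * ((1 + r₀ ^ 2) ^ ((μ + 1)/2) * R) :=
              mul_le_mul_of_nonneg_left b4 (div_pos hC0 hm1).le
          _ = ((C / (m-1)) * ((1 + r₀ ^ 2) ^ ((μ + 1)/2))) * R := by ring
          _ ≤ (γ * β * (C ^ m)) * R := mul_le_mul_of_nonneg_right b5 (by linarith)
      linarith [t2, t3, t4, mul_pos hQ hγ, mul_pos (mul_pos (mul_pos hγ hβ) hQ) (show (0:ℝ) < R by linarith)]
  have hfac : (2 * (C ^ m) * (-γ)) * (A ^ (-γ - 1)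
          + r * (2 * r * (-γ - 1) * (A ^ (-γ - 1) / A)))
        + 𝔪 r * ((2 * (C ^ m) * (-γ)) * (r * A ^ (-γ - 1)))
        + C * (A ^ ((μ + 1)/2) * A ^ (-γ - 1)) / (m - 1)
      = A ^ (-γ - 1) * ((C ^ m) * (-2*γ) + (C ^ m) * (4*γ*(γ+1)) * (r^2/A)
          + (C ^ m) * (-2*γ) * (r * 𝔪 r) + (C / (m-1)) * A ^ ((μ + 1)/2)) := by
    field_simp
    ring
  rw [hfac]
  exact mul_nonpos_of_nonneg_of_nonpos hP.le key
end

section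
/- Let n ≥ 2 be an integer and let m > 1, μ > 1, Q > 0, ε > 0, α > 0, R̲ > 0 be real numbers. Set C_ε := [m·(μ−1)·(n−1)·√(Q+ε)]^{−1/(m−1)}. Then there exists r̄₀ > 0 (independent of δ) such that for every r₀ ≥ r̄₀, every δ > 0, and every function 𝔪 : (0,∞) → ℝ satisfying 𝔪(r) ≤ α/r for all r ∈ (0,R̲) and 𝔪(r) ≤ (n−1)·√(Q+ε)·r^μ for all r ≥ R̲, the function v̲(r) := C_ε·[(r² + r₀²)^{−(μ−1)/2} − δ]₊^{1/(m−1)} satisfies (v̲^m)''(r) + 𝔪(r)·(v̲^m)'(r) + v̲(r)/(m−1) ≥ 0 at every r > 0 where (r² + r₀²)^{−(μ−1)/2} > δ. -/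
open Real Filter Set Topology

lemma aux_deriv1 (c e γ δ r₀ s : ℝ) (hG : (0:ℝ) < s^2 + r₀^2)
    (hu : 0 < (s^2+r₀^2)^e - δ) :
    HasDerivAt (fun t : ℝ => c * (((t^2+r₀^2) : ℝ)^e - δ)^γ)
      (c * (γ * ((s^2+r₀^2)^e - δ)^(γ-1) * (e * (s^2+r₀^2)^(e-1) * (2*s)))) s := by
  have h1 : HasDerivAt (fun t : ℝ => t^2 + r₀^2) (2*s) s := by
    simpa using ((hasDerivAt_pow 2 s).add_const (r₀^2))
  have h2 : HasDerivAt (fun x : ℝ => x ^ e) (e * (s^2+r₀^2)^(e-1)) (s^2+r₀^2) :=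
    Real.hasDerivAt_rpow_const (Or.inl hG.ne')
  have h3 := (h2.comp s h1).sub_const δ
  have h4 : HasDerivAt (fun x : ℝ => x ^ γ) (γ * ((s^2+r₀^2)^e - δ)^(γ-1))
      ((s^2+r₀^2)^e - δ) := Real.hasDerivAt_rpow_const (Or.inl hu.ne')
  have h5 := (h4.comp s h3).const_mul c
  exact h5

lemma aux_deriv2 (P e q E δ r₀ s : ℝ) (hG : (0:ℝ) < s^2 + r₀^2)
    (hu : 0 < (s^2+r₀^2)^e - δ) :
    HasDerivAt (fun t : ℝ => P * ((((t^2+r₀^2) : ℝ)^e - δ)^q * ((t^2+r₀^2)^E * t)))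
      (P * ((q * ((s^2+r₀^2)^e - δ)^(q-1) * (e * (s^2+r₀^2)^(e-1) * (2*s)))
              * ((s^2+r₀^2)^E * s)
            + ((s^2+r₀^2)^e - δ)^q
              * ((E * (s^2+r₀^2)^(E-1) * (2*s)) * s + (s^2+r₀^2)^E * 1))) s := by
  have h1 : HasDerivAt (fun t : ℝ => t^2 + r₀^2) (2*s) s := by
    simpa using ((hasDerivAt_pow 2 s).add_const (r₀^2))
  have h2 : HasDerivAt (fun x : ℝ => x ^ e) (e * (s^2+r₀^2)^(e-1)) (s^2+r₀^2) :=
    Real.hasDerivAt_rpow_const (Or.inl hG.ne')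
  have h3 := (h2.comp s h1).sub_const δ
  have h4 : HasDerivAt (fun x : ℝ => x ^ q) (q * ((s^2+r₀^2)^e - δ)^(q-1))
      ((s^2+r₀^2)^e - δ) := Real.hasDerivAt_rpow_const (Or.inl hu.ne')
  have hU := h4.comp s h3
  have h5 : HasDerivAt (fun x : ℝ => x ^ E) (E * (s^2+r₀^2)^(E-1)) (s^2+r₀^2) :=
    Real.hasDerivAt_rpow_const (Or.inl hG.ne')
  have hV := (h5.comp s h1).mul (hasDerivAt_id s)
  have h6 := (hU.mul hV).const_mul P
  exact h6

set_option maxHeartbeats 1000000 in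
/-- Lemma 4.4 (`lemma-lower`) in radial form: on a manifold whose Laplacian of the distance
function satisfies `𝔪(r) ≤ α/r` near the pole and `𝔪(r) ≤ (n-1)√(Q+ε) r^μ` for `r ≥ R̲`,
the radial function `v̲(r) = C_ε [(r²+r₀²)^{-(μ-1)/2} − δ]₊^{1/(m-1)}` with
`C_ε = [m(μ-1)(n-1)√(Q+ε)]^{-1/(m-1)}` is a subsolution of the sublinear elliptic equation
`-Δ v^m = v/(m-1)` on its positivity set, for all `r₀` large enough (independently of `δ`). -/
theorem stmt_3 (n : ℕ) (hn : 2 ≤ n) (m μ Q ε α Rlow : ℝ)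
    (hm : 1 < m) (hμ : 1 < μ) (hQ : 0 < Q) (hε : 0 < ε) (hα : 0 < α) (hRlow : 0 < Rlow) :
    ∃ rbar₀ > (0:ℝ), ∀ r₀ : ℝ, rbar₀ ≤ r₀ → ∀ δ > (0:ℝ), ∀ 𝔪 : ℝ → ℝ,
      (∀ r : ℝ, 0 < r → r < Rlow → 𝔪 r ≤ α / r) →
      (∀ r : ℝ, Rlow ≤ r → 𝔪 r ≤ ((n:ℝ) - 1) * Real.sqrt (Q + ε) * r ^ μ) →
      ∀ vlow : ℝ → ℝ,
        (vlow = fun s : ℝ =>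
          (m * (μ - 1) * ((n:ℝ) - 1) * Real.sqrt (Q + ε)) ^ (-(1 / (m - 1))) *
            (max ((s ^ 2 + r₀ ^ 2) ^ (-(μ - 1) / 2) - δ) 0) ^ (1 / (m - 1))) →
        ∀ r : ℝ, 0 < r → δ < (r ^ 2 + r₀ ^ 2) ^ (-(μ - 1) / 2) →
          0 ≤ deriv (deriv (fun s : ℝ => vlow s ^ m)) r
              + 𝔪 r * deriv (fun s : ℝ => vlow s ^ m) r
              + vlow r / (m - 1) := by
  have hn2 : (2:ℝ) ≤ (n:ℝ) := by exact_mod_cast hn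
  set A : ℝ := ((n:ℝ) - 1) * Real.sqrt (Q + ε) with hAdef
  have hA : 0 < A := by
    have hs : 0 < Real.sqrt (Q + ε) := Real.sqrt_pos.mpr (by linarith)
    have : (0:ℝ) < (n:ℝ) - 1 := by linarith
    exact mul_pos this hs
  have hdiv : (0:ℝ) ≤ (1+α)/A := div_nonneg (by linarith) hA.le
  refine ⟨1 + (1+α)/A, by linarith, ?_⟩
  intro r₀ hr₀ δ hδ 𝔪 hbd1 hbd2 vlow hv r hr hpos
  have hm1' : (0:ℝ) < m - 1 := by linarith
  set K : ℝ := m * (μ - 1) * ((n:ℝ) - 1) * Real.sqrt (Q + ε) with hKdef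
  have hKA : K = m * (μ-1) * A := by rw [hKdef, hAdef]; ring
  have hK : 0 < K := by
    rw [hKA]; exact mul_pos (mul_pos (by linarith) (by linarith)) hA
  set C : ℝ := K ^ (-(1 / (m - 1))) with hCdef
  have hC : 0 < C := Real.rpow_pos_of_pos hK _
  have hr₀1 : (1:ℝ) ≤ r₀ := le_trans (by linarith) hr₀
  have hr₀A : (1+α)/A ≤ r₀ := le_trans (by linarith) hr₀
  have hr₀0 : (0:ℝ) < r₀ := by linarith
  have hGpos : (0:ℝ) < r^2 + r₀^2 := by positivity
  have hG1 : (1:ℝ) ≤ r^2 + r₀^2 := by nlinarith only [hr₀1, sq_nonneg r, sq_nonneg (r₀-1)]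
  have hur : 0 < (r^2+r₀^2) ^ (-(μ-1)/2) - δ := sub_pos.mpr hpos
  -- continuity / eventual positivity
  have hgc : ContinuousAt (fun s : ℝ => (s^2+r₀^2) ^ (-(μ-1)/2)) r := by
    apply ContinuousAt.rpow_const (by fun_prop)
    exact Or.inl (by positivity : (0:ℝ) < r^2 + r₀^2).ne'
  have hev : ∀ᶠ s in 𝓝 r, 0 < (s^2+r₀^2) ^ (-(μ-1)/2) - δ := by
    have h1 : ∀ᶠ s in 𝓝 r, δ < (s^2+r₀^2) ^ (-(μ-1)/2) :=
      hgc.eventually (eventually_gt_nhds hpos)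
    exact h1.mono fun s hs => sub_pos.mpr hs
  -- local identification of vlow^m
  have hweq : (fun s : ℝ => vlow s ^ m) =ᶠ[𝓝 r]
      (fun s : ℝ => C^m * ((s^2+r₀^2) ^ (-(μ-1)/2) - δ) ^ (1/(m-1)*m)) := by
    filter_upwards [hev] with s hs
    rw [hv]
    simp only
    rw [max_eq_left hs.le, Real.mul_rpow hC.le (Real.rpow_nonneg hs.le _),
      ← Real.rpow_mul hs.le]
  have hq : (1/(m-1)*m - 1 : ℝ) = 1/(m-1) := by field_simp; ring
  have hwd2 : deriv (fun s : ℝ => vlow s ^ m) =ᶠ[𝓝 r]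
      (fun s : ℝ => C^m * (1/(m-1)*m) * (-(μ-1)/2) * 2 *
        (((s^2+r₀^2) ^ (-(μ-1)/2) - δ) ^ (1/(m-1)) * ((s^2+r₀^2) ^ (-(μ-1)/2-1) * s))) := by
    apply hweq.deriv.trans
    filter_upwards [hev] with s hs
    rw [(aux_deriv1 (C^m) (-(μ-1)/2) (1/(m-1)*m) δ r₀ s (by positivity) hs).deriv, hq]
    ring
  have hd2r := hwd2.deriv_eq.trans
    ((aux_deriv2 (C^m * (1/(m-1)*m) * (-(μ-1)/2) * 2) (-(μ-1)/2) (1/(m-1)) (-(μ-1)/2-1)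
      δ r₀ r hGpos hur).deriv)
  have hd1r := hwd2.eq_of_nhds
  have hvr : vlow r = C * ((r^2+r₀^2) ^ (-(μ-1)/2) - δ) ^ (1/(m-1)) := by
    rw [hv]
    simp only
    rw [max_eq_left hur.le]
  rw [hd2r, hd1r, hvr]
  clear hd2r hd1r hwd2 hweq hev hgc hvr hv hq
  -- name the atoms
  set Cm : ℝ := C ^ m with hCmdef
  have hCm : 0 < Cm := by rw [hCmdef]; exact Real.rpow_pos_of_pos hC m
  set c1 : ℝ := (r^2+r₀^2) ^ (-(μ-1)/2-1) with hc1def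
  set c2 : ℝ := (r^2+r₀^2) ^ (-(μ-1)/2-1-1) with hc2def
  set a : ℝ := ((r^2+r₀^2) ^ (-(μ-1)/2) - δ) ^ (1/(m-1)) with hadef
  set b : ℝ := ((r^2+r₀^2) ^ (-(μ-1)/2) - δ) ^ (1/(m-1)-1) with hbdef
  have hc1 : 0 < c1 := by rw [hc1def]; exact Real.rpow_pos_of_pos hGpos _
  have hc2 : 0 < c2 := by rw [hc2def]; exact Real.rpow_pos_of_pos hGpos _
  have ha : 0 < a := by rw [hadef]; exact Real.rpow_pos_of_pos hur _
  have hb : 0 < b := by rw [hbdef]; exact Real.rpow_pos_of_pos hur _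
  have hp := one_div_pos.mpr hm1'
  have hpm : (0:ℝ) < 1/(m-1)*m := mul_pos hp (by linarith)
  -- the C identity
  have hCK : C = Cm * (m*(μ-1)*A) := by
    have h2 : (-(1/(m-1))*m + 1 : ℝ) = -(1/(m-1)) := by field_simp; ring
    calc C = K ^ (-(1/(m-1))) := hCdef
      _ = K ^ (-(1/(m-1))*m + 1) := by rw [h2]
      _ = K ^ (-(1/(m-1))*m) * K ^ (1:ℝ) := Real.rpow_add hK _ _
      _ = (K ^ (-(1/(m-1))))^m * K := by rw [Real.rpow_one, Real.rpow_mul hK.le]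
      _ = Cm * K := by rw [← hCdef, ← hCmdef]
      _ = Cm * (m*(μ-1)*A) := by rw [hKA]
  -- key pointwise inequality
  have t4 : (0:ℝ) ≤ (1 + (μ-1)/2) * 2 * r^2 * c2 :=
    mul_nonneg (mul_nonneg (mul_nonneg (by linarith only [hμ]) (by norm_num)) (sq_nonneg r)) hc2.le
  have key : 𝔪 r * r * c1 + c1 ≤ A + (1 + (μ-1)/2) * 2 * r^2 * c2 := by
    rcases lt_or_ge r Rlow with hcase | hcase
    · have hα1 : 𝔪 r * r ≤ α := by
        have h := hbd1 r hr hcase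
        calc 𝔪 r * r ≤ (α/r) * r := mul_le_mul_of_nonneg_right h hr.le
          _ = α := by field_simp
      have hc1A : c1 ≤ A / (1+α) := by
        have e3 : (1+α)/A ≤ r^2+r₀^2 := by
          nlinarith only [hr₀A, hr₀1, sq_nonneg r,
            mul_le_mul_of_nonneg_left hr₀1 hr₀0.le]
        calc c1 ≤ (r^2+r₀^2) ^ (-1:ℝ) := by
              rw [hc1def]; exact Real.rpow_le_rpow_of_exponent_le hG1 (by linarith only [hμ])
          _ = (r^2+r₀^2)⁻¹ := Real.rpow_neg_one _
          _ ≤ ((1+α)/A)⁻¹ := inv_anti₀ (div_pos (by linarith only [hα]) hA) e3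
          _ = A/(1+α) := by rw [inv_div]
      have t1 : 𝔪 r * r * c1 ≤ α * c1 := mul_le_mul_of_nonneg_right hα1 hc1.le
      have t2 : (1+α) * c1 ≤ (1+α) * (A/(1+α)) := mul_le_mul_of_nonneg_left hc1A (by linarith only [hα])
      have t3 : (1+α) * (A/(1+α)) = A := by field_simp
      linarith only [t1, t2, t3, t4]
    · have hb2 := hbd2 r hcase
      have hmr : 𝔪 r * r ≤ A * r^(μ+1) := by
        have h := mul_le_mul_of_nonneg_right hb2 hr.le
        rwa [mul_assoc, ← Real.rpow_add_one hr.ne' μ] at h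
      have hr2G : r^2 / (r^2+r₀^2) ≤ 1 := by
        rw [div_le_one hGpos]; nlinarith only [sq_nonneg r₀]
      have hr2Gpos : 0 < r^2 / (r^2+r₀^2) := by positivity
      have hstep : r^(μ+1) * c1 ≤ r^2 / (r^2+r₀^2) := by
        have e0 : r^(μ+1) = (r^2 : ℝ) ^ ((μ+1)/2) := by
          have h20 : (r^2 : ℝ) = r ^ ((2:ℕ):ℝ) := (Real.rpow_natCast r 2).symm
          rw [h20, ← Real.rpow_mul hr.le]
          norm_num
          congr 1
          ring
        have e1 : c1 = ((r^2+r₀^2) ^ ((μ+1)/2))⁻¹ := by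
          rw [hc1def, show (-(μ-1)/2-1 : ℝ) = -((μ+1)/2) by ring, Real.rpow_neg hGpos.le]
        calc r^(μ+1) * c1 = (r^2:ℝ)^((μ+1)/2) / ((r^2+r₀^2)^((μ+1)/2)) := by
              rw [e0, e1]; ring
          _ = (r^2/(r^2+r₀^2))^((μ+1)/2) := (Real.div_rpow (sq_nonneg r) hGpos.le _).symm
          _ ≤ (r^2/(r^2+r₀^2)) ^ (1:ℝ) :=
              Real.rpow_le_rpow_of_exponent_ge hr2Gpos hr2G (by linarith only [hμ])
          _ = r^2/(r^2+r₀^2) := Real.rpow_one _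
      have hstep2 : c1 ≤ A * r₀^2 / (r^2+r₀^2) := by
        have f0 : A * ((1+α)/A) = 1+α := by field_simp
        have f2 : 1 ≤ A * r₀^2 := by
          have f1' : A * ((1+α)/A) ≤ A * r₀ := mul_le_mul_of_nonneg_left hr₀A hA.le
          rw [f0] at f1'
          nlinarith only [f1', hr₀1, hr₀0, hα,
            mul_le_mul_of_nonneg_left hr₀1 (mul_nonneg hA.le hr₀0.le)]
        calc c1 ≤ (r^2+r₀^2) ^ (-1:ℝ) := by
              rw [hc1def]; exact Real.rpow_le_rpow_of_exponent_le hG1 (by linarith only [hμ])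
          _ = (r^2+r₀^2)⁻¹ := Real.rpow_neg_one _
          _ = 1 / (r^2+r₀^2) := (one_div _).symm
          _ ≤ (A * r₀^2) / (r^2+r₀^2) := (div_le_div_iff_of_pos_right hGpos).mpr f2
      have t1 : 𝔪 r * r * c1 ≤ A * (r^(μ+1) * c1) := by
        calc 𝔪 r * r * c1 ≤ A * r^(μ+1) * c1 := mul_le_mul_of_nonneg_right hmr hc1.le
          _ = A * (r^(μ+1) * c1) := by ring
      have t2 : A * (r^(μ+1) * c1) ≤ A * (r^2/(r^2+r₀^2)) :=
        mul_le_mul_of_nonneg_left hstep hA.le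
      have t3 : A * (r^2/(r^2+r₀^2)) + A * r₀^2/(r^2+r₀^2) = A := by
        field_simp
      linarith only [t1, t2, t3, t4, hstep2]
  -- final assembly
  rw [hCK]
  have key2 :
      Cm * (1/(m-1)*m) * (-(μ-1)/2) * 2 *
          ((1/(m-1) * b * (-(μ-1)/2 * c1 * (2*r))) * (c1 * r)
            + a * (((-(μ-1)/2-1) * c2 * (2*r)) * r + c1 * 1))
        + 𝔪 r * (Cm * (1/(m-1)*m) * (-(μ-1)/2) * 2 * (a * (c1 * r)))
        + Cm * (m*(μ-1)*A) * a / (m-1)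
      = Cm * (1/(m-1)*m) * (1/(m-1)) * b * (2 * (-(μ-1)/2) * r * c1)^2
        + Cm * (1/(m-1)*m) * (μ-1) * a *
            (A + (1 + (μ-1)/2) * 2 * r^2 * c2 - c1 - 𝔪 r * r * c1) := by
    field_simp
    ring
  have h1 : 0 ≤ Cm * (1/(m-1)*m) * (1/(m-1)) * b * (2 * (-(μ-1)/2) * r * c1)^2 :=
    mul_nonneg (mul_nonneg (mul_nonneg (mul_nonneg hCm.le hpm.le) hp.le) hb.le) (sq_nonneg _)
  have h2 : 0 ≤ Cm * (1/(m-1)*m) * (μ-1) * a *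
      (A + (1 + (μ-1)/2) * 2 * r^2 * c2 - c1 - 𝔪 r * r * c1) :=
    mul_nonneg (mul_nonneg (mul_nonneg (mul_nonneg hCm.le hpm.le) (by linarith only [hμ])) ha.le)
      (by linarith only [key])
  linarith only [key2, h1, h2]
end

section
/- Let n ≥ 2 be an integer and m > 1. Let ψ : [0,∞) → [0,∞) be continuous with ψ(0) = 0 and ψ(r) > 0 for r > 0, and let v : (0,∞) → (0,∞) be a bounded, twice continuously differentiable function with lim_{r→∞} v(r) = 0 such that (ψ^{n−1}·(v^m)')'(r) = −ψ(r)^{n−1}·v(r)/(m−1) for all r > 0 and lim_{r→0⁺} ψ(r)^{n−1}·(v^m)'(r) = 0. Then for every r > 0 one has (v^m)'(r) = −(1/((m−1)·ψ(r)^{n−1}))·∫₀^r ψ(s)^{n−1}·v(s) ds, the iterated integral ∫_r^∞ (ψ(t)^{1−n}·∫₀^t ψ(s)^{n−1}·v(s) ds) dt is finite, and v(r)^m = (1/(m−1))·∫_r^∞ (ψ(t)^{1−n}·∫₀^t ψ(s)^{n−1}·v(s) ds) dt. -/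
set_option maxHeartbeats 1000000


open Real Filter Set MeasureTheory

/-- Integrated form of the radial sublinear elliptic equation on a model manifold
(identities (4.13)-(4.14) of the paper): a positive bounded `C²` radial solution `v`
of `(ψ^{n-1}(v^m)')' = -ψ^{n-1} v/(m-1)` vanishing at infinity and with vanishing flux
at the origin satisfies
`(v^m)'(r) = -(1/((m-1)ψ(r)^{n-1})) ∫₀^r ψ^{n-1} v` and
`v(r)^m = (1/(m-1)) ∫_r^∞ ψ(t)^{1-n} (∫₀^t ψ^{n-1} v) dt`, the latter integral being finite. -/
theorem stmt_4 (n : ℕ) (hn : 2 ≤ n) (m : ℝ) (hm : 1 < m)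
    (ψ : ℝ → ℝ) (hψcont : ContinuousOn ψ (Set.Ici 0)) (hψ0 : ψ 0 = 0)
    (hψ0' : ∀ r : ℝ, 0 ≤ ψ r)
    (hψpos : ∀ r : ℝ, 0 < r → 0 < ψ r)
    (v : ℝ → ℝ) (hvpos : ∀ r : ℝ, 0 < r → 0 < v r)
    (hvbdd : ∃ B : ℝ, ∀ r : ℝ, 0 < r → v r ≤ B)
    (hvreg : ContDiffOn ℝ 2 v (Set.Ioi 0))
    (hvlim : Filter.Tendsto v Filter.atTop (nhds 0))
    (hode : ∀ r : ℝ, 0 < r →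
      deriv (fun x : ℝ => ψ x ^ (n - 1) * deriv (fun y : ℝ => v y ^ m) x) r
        = -(ψ r ^ (n - 1) * v r) / (m - 1))
    (hflux : Filter.Tendsto (fun r : ℝ => ψ r ^ (n - 1) * deriv (fun y : ℝ => v y ^ m) r)
      (nhdsWithin 0 (Set.Ioi 0)) (nhds 0)) :
    (∀ r : ℝ, 0 < r → deriv (fun y : ℝ => v y ^ m) r
        = -(1 / ((m - 1) * ψ r ^ (n - 1))) * ∫ s in (0:ℝ)..r, ψ s ^ (n - 1) * v s) ∧
    (∀ r : ℝ, 0 < r → MeasureTheory.IntegrableOn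
        (fun t : ℝ => (∫ s in (0:ℝ)..t, ψ s ^ (n - 1) * v s) / ψ t ^ (n - 1)) (Set.Ioi r)) ∧
    (∀ r : ℝ, 0 < r → v r ^ m = (1 / (m - 1)) *
        ∫ t in Set.Ioi r, (∫ s in (0:ℝ)..t, ψ s ^ (n - 1) * v s) / ψ t ^ (n - 1)) := by
  obtain ⟨B, hB⟩ := hvbdd
  have hBpos : 0 < B := lt_of_lt_of_le (hvpos 1 one_pos) (hB 1 one_pos)
  have hm1 : (0:ℝ) < m - 1 := by linarith
  have hn1 : n - 1 ≠ 0 := by omega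
  have hvcont : ContinuousOn v (Set.Ioi 0) := hvreg.continuousOn
  set f : ℝ → ℝ := fun s => ψ s ^ (n - 1) * v s with hfdef
  have hfcont : ContinuousOn f (Set.Ioi 0) :=
    ((hψcont.mono Ioi_subset_Ici_self).pow _).mul hvcont
  have hψpow_pos : ∀ r : ℝ, 0 < r → 0 < ψ r ^ (n - 1) := fun r hr => pow_pos (hψpos r hr) _
  -- integrability of f on (0, r]
  have hfint : ∀ r : ℝ, 0 < r → IntegrableOn f (Set.Ioc 0 r) := by
    intro r hr
    obtain ⟨x0, hx0m, hx0⟩ := isCompact_Icc.exists_isMaxOn (nonempty_Icc.2 hr.le)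
      (hψcont.mono (fun y (hy : y ∈ Set.Icc (0:ℝ) r) => hy.1))
    rw [isMaxOn_iff] at hx0
    refine ⟨(hfcont.mono (fun y hy => hy.1)).aestronglyMeasurable measurableSet_Ioc, ?_⟩
    apply MeasureTheory.HasFiniteIntegral.restrict_of_bounded (C := ψ x0 ^ (n-1) * B)
      measure_Ioc_lt_top
    rw [MeasureTheory.ae_restrict_iff' measurableSet_Ioc]
    refine Filter.Eventually.of_forall (fun x hx => ?_)
    have hψx : 0 < ψ x := hψpos x hx.1
    have hvx : 0 < v x := hvpos x hx.1
    have hfx : f x = ψ x ^ (n-1) * v x := rfl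
    rw [hfx, Real.norm_eq_abs, abs_of_nonneg (by positivity)]
    exact mul_le_mul (pow_le_pow_left₀ (hψ0' x) (hx0 x ⟨hx.1.le, hx.2⟩) _) (hB x hx.1)
      hvx.le (pow_nonneg (hψ0' x0) _)
  have hfii : ∀ r : ℝ, 0 < r → IntervalIntegrable f volume 0 r := fun r hr => by
    rw [intervalIntegrable_iff_integrableOn_Ioc_of_le hr.le]; exact hfint r hr
  set G : ℝ → ℝ := fun r => ∫ s in (0:ℝ)..r, f s with hGdef
  have hGt : ∀ t : ℝ, G t = ∫ s in (0:ℝ)..t, f s := fun t => rfl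
  have hGderiv : ∀ r : ℝ, 0 < r → HasDerivAt G (f r) r := fun r hr =>
    intervalIntegral.integral_hasDerivAt_right (hfii r hr)
      (hfcont.stronglyMeasurableAtFilter isOpen_Ioi r hr)
      (hfcont.continuousAt (isOpen_Ioi.mem_nhds hr))
  set F : ℝ → ℝ := fun x : ℝ => ψ x ^ (n - 1) * deriv (fun y : ℝ => v y ^ m) x with hFdef
  have hFderiv : ∀ r : ℝ, 0 < r → HasDerivAt F (-(ψ r ^ (n-1) * v r) / (m-1)) r := by
    intro r hr
    have hpos : 0 < (ψ r ^ (n-1) * v r) / (m-1) := by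
      have h1 := hψpow_pos r hr; have h2 := hvpos r hr; positivity
    have hne : -(ψ r ^ (n-1) * v r) / (m-1) ≠ 0 := by
      rw [neg_div]; exact neg_ne_zero.mpr hpos.ne'
    have hd := hode r hr
    have hdiff : DifferentiableAt ℝ F r := differentiableAt_of_deriv_ne_zero (hd ▸ hne)
    have := hdiff.hasDerivAt
    rwa [hd] at this
  set H : ℝ → ℝ := fun x => F x + (1/(m-1)) * G x with hHdef
  have hHderiv : ∀ r : ℝ, 0 < r → HasDerivAt H 0 r := by
    intro r hr
    have h := (hFderiv r hr).add ((hGderiv r hr).const_mul (1/(m-1)))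
    have hfr : f r = ψ r ^ (n-1) * v r := rfl
    refine (h.congr_deriv ?_ : HasDerivAt H _ r)
    rw [hfr]; ring
  have hHconst : ∀ r : ℝ, 0 < r → H r = H 1 := by
    intro r hr
    have h1 : ∀ x ∈ Set.uIcc (1:ℝ) r, HasDerivAt H 0 x := by
      intro x hx
      exact hHderiv x (lt_of_lt_of_le (lt_min one_pos hr) hx.1)
    have h2 : IntervalIntegrable (fun _ : ℝ => (0:ℝ)) volume 1 r :=
      intervalIntegrable_const
    have h3 := intervalIntegral.integral_eq_sub_of_hasDerivAt h1 h2
    simp only [intervalIntegral.integral_zero] at h3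
    linarith [h3]
  have hGlim : Tendsto G (nhdsWithin 0 (Set.Ioi 0)) (nhds 0) := by
    obtain ⟨x0, hx0m, hx0⟩ := isCompact_Icc.exists_isMaxOn (nonempty_Icc.2 one_pos.le)
      (hψcont.mono (fun y (hy : y ∈ Set.Icc (0:ℝ) 1) => hy.1))
    rw [isMaxOn_iff] at hx0
    have hbound : ∀ᶠ a in nhdsWithin 0 (Set.Ioi 0), ‖G a‖ ≤ (ψ x0 ^ (n-1) * B) * |a| := by
      have hmem : Set.Ioo (0:ℝ) 1 ∈ nhdsWithin 0 (Set.Ioi 0) := by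
        rw [← Set.Ioi_inter_Iio]
        exact Filter.inter_mem self_mem_nhdsWithin
          (mem_nhdsWithin_of_mem_nhds (Iio_mem_nhds one_pos))
      filter_upwards [hmem] with a ha
      have h := intervalIntegral.norm_integral_le_of_norm_le_const
        (C := ψ x0 ^ (n-1) * B) (f := f) (a := 0) (b := a) ?_
      · simpa [hGt] using h
      · intro x hx
        rw [Set.uIoc_of_le ha.1.le] at hx
        have hψx := hψpos x hx.1
        have hvx := hvpos x hx.1
        have hfx : f x = ψ x ^ (n-1) * v x := rfl
        rw [hfx, Real.norm_eq_abs, abs_of_nonneg (by positivity)]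
        exact mul_le_mul (pow_le_pow_left₀ (hψ0' x) (hx0 x ⟨hx.1.le, hx.2.trans ha.2.le⟩) _)
          (hB x hx.1) hvx.le (pow_nonneg (hψ0' x0) _)
    have hlim2 : Tendsto (fun a : ℝ => (ψ x0 ^ (n-1) * B) * |a|)
        (nhdsWithin 0 (Set.Ioi 0)) (nhds 0) := by
      have hc : Tendsto (fun a : ℝ => (ψ x0 ^ (n-1) * B) * |a|) (nhds 0)
          (nhds ((ψ x0 ^ (n-1) * B) * |0|)) :=
        (continuous_const.mul continuous_abs).tendsto 0
      simpa using hc.mono_left nhdsWithin_le_nhds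
    exact squeeze_zero_norm' hbound hlim2
  have hH1 : H 1 = 0 := by
    have hlimH : Tendsto H (nhdsWithin 0 (Set.Ioi 0)) (nhds 0) := by
      have h : Tendsto H (nhdsWithin 0 (Set.Ioi 0)) (nhds (0 + 1/(m-1) * 0)) :=
        hflux.add (hGlim.const_mul (1/(m-1)))
      rwa [show (0:ℝ) + 1/(m-1) * 0 = 0 by ring] at h
    have hlimH' : Tendsto H (nhdsWithin 0 (Set.Ioi 0)) (nhds (H 1)) := by
      refine Tendsto.congr' ?_ tendsto_const_nhds
      filter_upwards [self_mem_nhdsWithin] with a ha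
      exact (hHconst a ha).symm
    exact tendsto_nhds_unique hlimH' hlimH
  have key : ∀ r : ℝ, 0 < r → F r = -(1/(m-1)) * G r := by
    intro r hr
    have h := hHconst r hr
    rw [hH1] at h
    have h' : F r + 1/(m-1) * G r = 0 := h
    linear_combination h'
  have part1 : ∀ r : ℝ, 0 < r → deriv (fun y : ℝ => v y ^ m) r
      = -(1 / ((m - 1) * ψ r ^ (n - 1))) * G r := by
    intro r hr
    have h := key r hr
    have hψne : ψ r ^ (n-1) ≠ 0 := (hψpow_pos r hr).ne'
    have hFr : F r = ψ r ^ (n-1) * deriv (fun y : ℝ => v y ^ m) r := rfl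
    rw [hFr] at h
    have hD : deriv (fun y : ℝ => v y ^ m) r
        = (-(1/(m-1)) * G r) / (ψ r ^ (n-1)) := by
      rw [← h]; field_simp
    rw [hD]; field_simp
  have hW : ∀ x : ℝ, 0 < x →
      HasDerivAt (fun y : ℝ => v y ^ m) (deriv (fun y : ℝ => v y ^ m) x) x := by
    intro x hx
    have hvd : DifferentiableAt ℝ v x :=
      (hvreg.differentiableOn (by norm_num)).differentiableAt (isOpen_Ioi.mem_nhds hx)
    exact ((hvd.hasDerivAt.rpow_const (Or.inl (hvpos x hx).ne')).differentiableAt).hasDerivAt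
  set g' : ℝ → ℝ := fun t => 1/((m-1) * ψ t ^ (n-1)) * G t with hg'def
  have hg'eq : ∀ t : ℝ, 0 < t → HasDerivAt (fun y : ℝ => -(v y ^ m)) (g' t) t := by
    intro t ht
    have h := (hW t ht).neg
    rw [part1 t ht] at h
    convert h using 1
    show 1/((m-1) * ψ t ^ (n-1)) * G t = -(-(1 / ((m - 1) * ψ t ^ (n - 1))) * G t)
    ring
    all_goals rfl
  have hg'nonneg : ∀ t : ℝ, 0 < t → 0 ≤ g' t := by
    intro t ht
    have hG : 0 ≤ G t := by
      rw [hGt]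
      apply intervalIntegral.integral_nonneg ht.le
      intro u hu
      rcases eq_or_lt_of_le hu.1 with h|h
      · have : f u = 0 := by
          rw [← h]; show ψ 0 ^ (n-1) * v 0 = 0
          rw [hψ0, zero_pow hn1, zero_mul]
        rw [this]
      · exact mul_nonneg (pow_nonneg (hψ0' u) _) (hvpos u h).le
    have hψp := hψpow_pos t ht
    have : 0 < (m-1) * ψ t ^ (n-1) := by positivity
    have h2 : 0 ≤ 1/((m-1) * ψ t ^ (n-1)) := by positivity
    exact mul_nonneg h2 hG
  have hWlim : Tendsto (fun x : ℝ => -(v x ^ m)) atTop (nhds 0) := by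
    have hc : ContinuousAt (fun x : ℝ => x ^ m) 0 :=
      Real.continuousAt_rpow_const 0 m (Or.inr (by linarith))
    have h1 : Tendsto (fun x : ℝ => v x ^ m) atTop (nhds ((0:ℝ) ^ m)) := hc.tendsto.comp hvlim
    rw [Real.zero_rpow (by linarith : m ≠ 0)] at h1
    simpa using h1.neg
  have hcontW : ∀ r : ℝ, 0 < r →
      ContinuousWithinAt (fun y : ℝ => -(v y ^ m)) (Set.Ici r) r :=
    fun r hr => ((hg'eq r hr).continuousAt).continuousWithinAt
  have hint : ∀ r : ℝ, 0 < r → IntegrableOn g' (Set.Ioi r) := fun r hr =>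
    integrableOn_Ioi_deriv_of_nonneg (hcontW r hr)
      (fun x hx => hg'eq x (hr.trans hx)) (fun x hx => hg'nonneg x (hr.trans hx)) hWlim
  have hval : ∀ r : ℝ, 0 < r → ∫ x in Set.Ioi r, g' x = v r ^ m := by
    intro r hr
    have h := integral_Ioi_of_hasDerivAt_of_nonneg (hcontW r hr)
      (fun x hx => hg'eq x (hr.trans hx)) (fun x hx => hg'nonneg x (hr.trans hx)) hWlim
    simpa using h
  have heq : ∀ r : ℝ, 0 < r → Set.EqOn (fun t => (m-1) * g' t)
      (fun t : ℝ => G t / ψ t ^ (n-1)) (Set.Ioi r) := by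
    intro r hr t ht
    have hψne : ψ t ^ (n-1) ≠ 0 := (hψpow_pos t (hr.trans ht)).ne'
    show (m-1) * (1/((m-1) * ψ t ^ (n-1)) * G t) = G t / ψ t ^ (n-1)
    field_simp
  have hintG : ∀ r : ℝ, 0 < r →
      IntegrableOn (fun t : ℝ => G t / ψ t ^ (n-1)) (Set.Ioi r) volume := fun r hr =>
    MeasureTheory.IntegrableOn.congr_fun ((hint r hr).const_mul (m-1))
      (heq r hr) measurableSet_Ioi
  have hvalG : ∀ r : ℝ, 0 < r →
      v r ^ m = (1/(m-1)) * ∫ t in Set.Ioi r, G t / ψ t ^ (n-1) := by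
    intro r hr
    have h1 : ∫ t in Set.Ioi r, G t / ψ t ^ (n-1) = (m-1) * (v r ^ m) := by
      rw [← hval r hr, ← MeasureTheory.integral_const_mul]
      exact (MeasureTheory.setIntegral_congr_fun measurableSet_Ioi (heq r hr)).symm
    rw [h1]
    field_simp
  refine ⟨part1, fun r hr => ?_, fun r hr => ?_⟩
  · simpa only [hGt] using hintG r hr
  · simpa only [hGt] using hvalG r hr
end

section
/- Let n ≥ 2 be an integer and let m > 1, μ > 1, Q > 0. Let ψ : [0,∞) → [0,∞) be continuous, positive on (0,∞), continuously differentiable on (0,∞), with lim_{r→∞} ψ(r) = +∞ and lim_{r→∞} ψ'(r)/(r^μ·ψ(r)) = √Q. Let v : (0,∞) → (0,∞) be bounded and continuous with lim_{r→∞} v(r) = 0, satisfying the integral identity v(r)^m = (1/(m−1))·∫_r^∞ (ψ(t)^{1−n}·∫₀^t ψ(s)^{n−1}·v(s) ds) dt for all r > 0 (with all integrals finite). If limsup_{r→∞} r^{(μ−1)/(m−1)}·v(r) is finite, then limsup_{r→∞} r^{(μ−1)/(m−1)}·v(r) ≤ [m·(μ−1)·(n−1)·√Q]^{−1/(m−1)}.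 -/
open Real Filter Set MeasureTheory

set_option maxHeartbeats 1000000 in
/-- Sharp asymptotic upper bound of Theorem 2.2 (i) on model manifolds: a positive bounded
solution `v` (vanishing at infinity) of the integrated radial sublinear elliptic equation
on a model manifold with `ψ'(r)/(r^μ ψ(r)) → √Q`, whose limsup `r^{(μ-1)/(m-1)} v(r)` is
finite, satisfies `limsup r^{(μ-1)/(m-1)} v(r) ≤ [m(μ-1)(n-1)√Q]^{-1/(m-1)}`. -/
theorem stmt_7 (n : ℕ) (hn : 2 ≤ n) (m μ Q : ℝ)
    (hm : 1 < m) (hμ : 1 < μ) (hQ : 0 < Q)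
    (ψ : ℝ → ℝ) (hψcont : ContinuousOn ψ (Set.Ici 0)) (hψnn : ∀ r : ℝ, 0 ≤ ψ r)
    (hψpos : ∀ r : ℝ, 0 < r → 0 < ψ r)
    (hψreg : ContDiffOn ℝ 1 ψ (Set.Ioi 0))
    (hψinf : Filter.Tendsto ψ Filter.atTop Filter.atTop)
    (hψratio : Filter.Tendsto (fun r : ℝ => deriv ψ r / (r ^ μ * ψ r)) Filter.atTop
      (nhds (Real.sqrt Q)))
    (v : ℝ → ℝ) (hvpos : ∀ r : ℝ, 0 < r → 0 < v r)
    (hvcont : ContinuousOn v (Set.Ioi 0))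
    (hvbdd : ∃ B : ℝ, ∀ r : ℝ, 0 < r → v r ≤ B)
    (hvlim : Filter.Tendsto v Filter.atTop (nhds 0))
    (hint1 : ∀ t : ℝ, 0 < t →
      MeasureTheory.IntegrableOn (fun s : ℝ => ψ s ^ (n - 1) * v s) (Set.Ioc 0 t))
    (hint2 : ∀ r : ℝ, 0 < r → MeasureTheory.IntegrableOn
      (fun t : ℝ => (∫ s in Set.Ioc (0:ℝ) t, ψ s ^ (n - 1) * v s) / ψ t ^ (n - 1))
      (Set.Ioi r))
    (hid : ∀ r : ℝ, 0 < r → v r ^ m = (1 / (m - 1)) *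
      ∫ t in Set.Ioi r, (∫ s in Set.Ioc (0:ℝ) t, ψ s ^ (n - 1) * v s) / ψ t ^ (n - 1))
    (hfin : Filter.IsBoundedUnder (· ≤ ·) Filter.atTop
      (fun r : ℝ => r ^ ((μ - 1) / (m - 1)) * v r)) :
    Filter.limsup (fun r : ℝ => r ^ ((μ - 1) / (m - 1)) * v r) Filter.atTop
      ≤ (m * (μ - 1) * ((n:ℝ) - 1) * Real.sqrt Q) ^ (-(1 / (m - 1))) := by
  have hm1 : (0:ℝ) < m - 1 := by linarith
  have hμ1 : (0:ℝ) < μ - 1 := by linarith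
  have hn1 : (1:ℝ) ≤ (n:ℝ) - 1 := by
    have : (2:ℝ) ≤ (n:ℝ) := by exact_mod_cast hn
    linarith
  have hQ' : 0 < Real.sqrt Q := Real.sqrt_pos.mpr hQ
  set α : ℝ := (μ - 1) / (m - 1) with hα_def
  have hα : 0 < α := div_pos hμ1 hm1
  set A : ℝ := ((n:ℝ) - 1) * Real.sqrt Q with hA_def
  have hA : 0 < A := mul_pos (by linarith) hQ'
  set f : ℝ → ℝ := fun r => r ^ α * v r with hf_def
  set L : ℝ := Filter.limsup f Filter.atTop with hL_def
  have hfev : ∀ᶠ r : ℝ in atTop, 0 ≤ f r := by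
    filter_upwards [eventually_gt_atTop 0] with r hr
    exact mul_nonneg (Real.rpow_nonneg hr.le _) (hvpos r hr).le
  have hcob : Filter.IsCoboundedUnder (· ≤ ·) Filter.atTop f :=
    Filter.isCoboundedUnder_le_of_eventually_le Filter.atTop hfev
  have hL0 : (0:ℝ) ≤ L := Filter.le_limsup_of_frequently_le hfev.frequently hfin
  have hψdiff : ∀ t : ℝ, 0 < t → DifferentiableAt ℝ ψ t := by
    intro t ht
    exact (hψreg.differentiableOn one_ne_zero).differentiableAt (isOpen_Ioi.mem_nhds ht)
  have hψdc : ContinuousOn (deriv ψ) (Set.Ioi 0) := by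
    have h1 : ContinuousOn (derivWithin ψ (Set.Ioi 0)) (Set.Ioi 0) :=
      hψreg.continuousOn_derivWithin (isOpen_Ioi.uniqueDiffOn) le_rfl
    exact h1.congr fun x hx => (derivWithin_of_isOpen isOpen_Ioi hx).symm
  -- the key inequality
  have key : ∀ ε : ℝ, 0 < ε → ε ≤ 1/2 →
      L ^ m ≤ ((L + ε) / ((1 - ε) * A) + ε) / ((μ - 1) * m) := by
    intro ε hε hε2
    have hε1 : (0:ℝ) < 1 - ε := by linarith
    set c : ℝ := (L + ε) / ((1 - ε) * A) with hc_def
    have hc : 0 < c := div_pos (by linarith) (by positivity)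
    set p : ℝ := -(α + μ) with hp_def
    set G : ℝ → ℝ := fun t => ψ t ^ (n - 1) * t ^ p with hG_def
    set dG : ℝ → ℝ :=
      fun t => (((n:ℝ) - 1) * (deriv ψ t / ψ t) - (α + μ) / t) * G t with hdG_def
    have hGpos : ∀ t : ℝ, 0 < t → 0 < G t := fun t ht =>
      mul_pos (pow_pos (hψpos t ht) _) (Real.rpow_pos_of_pos ht _)
    have hGd : ∀ t : ℝ, 0 < t → HasDerivAt G (dG t) t := by
      intro t ht
      have hψt : (0:ℝ) < ψ t := hψpos t ht
      have h1 : HasDerivAt (fun s => ψ s ^ (n - 1))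
          (↑(n - 1) * ψ t ^ (n - 1 - 1) * deriv ψ t) t :=
        ((hψdiff t ht).hasDerivAt).pow (n - 1)
      have h2 : HasDerivAt (fun s : ℝ => s ^ p) (p * t ^ (p - 1)) t :=
        Real.hasDerivAt_rpow_const (Or.inl ht.ne')
      have h3 := h1.mul h2
      refine h3.congr_deriv ?_
      symm
      have hcast : ((n - 1 : ℕ) : ℝ) = (n:ℝ) - 1 := by
        have := hn; push_cast [Nat.cast_sub (by omega : 1 ≤ n)]; ring
      have hpow : ψ t ^ (n - 1) = ψ t ^ (n - 1 - 1) * ψ t := by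
        rw [← pow_succ]; congr 1; omega
      have hrp : t ^ (p - 1) = t ^ p / t := by
        rw [Real.rpow_sub ht, Real.rpow_one]
      rw [hdG_def, hG_def]
      simp only [hcast, hpow, hrp, hp_def]
      field_simp
      rw [Real.rpow_sub ht, Real.rpow_one]
      field_simp
      ring
    -- eventual estimates
    have Ev1 : ∀ᶠ t : ℝ in atTop, v t ≤ (L + ε) * t ^ (-α) := by
      have h := Filter.eventually_lt_of_limsup_lt (show L < L + ε by linarith) hfin
      filter_upwards [h, eventually_gt_atTop 0] with t hft ht
      have hv : v t = t ^ (-α) * f t := by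
        rw [hf_def]
        simp only []
        rw [← mul_assoc, ← Real.rpow_add ht]
        simp
      rw [hv, mul_comm ((L:ℝ) + ε) _]
      exact mul_le_mul_of_nonneg_left hft.le (Real.rpow_nonneg ht.le _)
    have Ev2 : ∀ᶠ t : ℝ in atTop,
        (1 - ε/2) * A * t ^ μ ≤ ((n:ℝ) - 1) * (deriv ψ t / ψ t) := by
      have hlt : (1 - ε/2) * Real.sqrt Q < Real.sqrt Q := by nlinarith
      filter_upwards [hψratio.eventually (eventually_gt_nhds hlt),
        eventually_gt_atTop 0] with t hratio ht
      have hψt : (0:ℝ) < ψ t := hψpos t ht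
      have htμ : (0:ℝ) < t ^ μ := Real.rpow_pos_of_pos ht _
      have h2 : (1 - ε/2) * Real.sqrt Q * (t ^ μ * ψ t) ≤ deriv ψ t :=
        ((lt_div_iff₀ (by positivity)).mp hratio).le
      have h3 : (1 - ε/2) * Real.sqrt Q * t ^ μ ≤ deriv ψ t / ψ t :=
        (le_div_iff₀ hψt).mpr (by nlinarith)
      calc (1 - ε/2) * A * t ^ μ
          = ((n:ℝ) - 1) * ((1 - ε/2) * Real.sqrt Q * t ^ μ) := by rw [hA_def]; ring
      _ ≤ ((n:ℝ) - 1) * (deriv ψ t / ψ t) := mul_le_mul_of_nonneg_left h3 (by linarith)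
    have Ev3 : ∀ᶠ t : ℝ in atTop, (α + μ) / t ≤ ε/2 * A * t ^ μ := by
      have htend : Filter.Tendsto (fun t : ℝ => t ^ (μ + 1)) atTop atTop :=
        tendsto_rpow_atTop (by linarith)
      filter_upwards [htend.eventually_ge_atTop ((α + μ) / (ε/2 * A)),
        eventually_gt_atTop 0] with t hge ht
      rw [div_le_iff₀ ht]
      have h1 : α + μ ≤ ε/2 * A * t ^ (μ + 1) := by
        rw [← div_le_iff₀' (by positivity)]
        exact hge
      calc α + μ ≤ ε/2 * A * t ^ (μ + 1) := h1
      _ = ε/2 * A * t ^ μ * t := by rw [Real.rpow_add ht, Real.rpow_one]; ring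
    have Ev4 : ∀ᶠ t : ℝ in atTop, 1 ≤ (1 - ε) * A * t ^ μ := by
      have htend : Filter.Tendsto (fun t : ℝ => t ^ μ) atTop atTop :=
        tendsto_rpow_atTop (by linarith)
      filter_upwards [htend.eventually_ge_atTop (1 / ((1 - ε) * A))] with t hge
      rw [← div_le_iff₀' (by positivity)]
      exact hge
    obtain ⟨t₀, ht₀⟩ := eventually_atTop.mp
      ((Ev1.and (Ev2.and (Ev3.and Ev4))).and (eventually_ge_atTop 1))
    have ht₀1 : (1:ℝ) ≤ t₀ := (ht₀ t₀ le_rfl).2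
    have ht₀pos : (0:ℝ) < t₀ := lt_of_lt_of_le one_pos ht₀1
    have hc_cancel : c * ((1 - ε) * A) = L + ε := div_mul_cancel₀ _ (by positivity)
    -- pointwise facts for t ≥ t₀
    have hdG_lb : ∀ t, t₀ ≤ t → (1 - ε) * A * t ^ μ * G t ≤ dG t := by
      intro t ht
      have htpos : (0:ℝ) < t := lt_of_lt_of_le ht₀pos ht
      obtain ⟨⟨_, h2, h3, _⟩, _⟩ := ht₀ t ht
      have hGt : 0 < G t := hGpos t htpos
      have hcoef : (1 - ε) * A * t ^ μ ≤ ((n:ℝ) - 1) * (deriv ψ t / ψ t) - (α + μ) / t := by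
        have : (1 - ε) * A * t ^ μ = (1 - ε/2) * A * t ^ μ - ε/2 * A * t ^ μ := by ring
        linarith
      rw [hdG_def]
      exact mul_le_mul_of_nonneg_right hcoef hGt.le
    have hdG_geG : ∀ t, t₀ ≤ t → G t ≤ dG t := by
      intro t ht
      have htpos : (0:ℝ) < t := lt_of_lt_of_le ht₀pos ht
      obtain ⟨⟨_, _, _, h4⟩, _⟩ := ht₀ t ht
      have hGt : 0 < G t := hGpos t htpos
      calc G t = 1 * G t := (one_mul _).symm
      _ ≤ (1 - ε) * A * t ^ μ * G t := mul_le_mul_of_nonneg_right h4 hGt.le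
      _ ≤ dG t := hdG_lb t ht
    have hkey_pt : ∀ t, t₀ ≤ t → ψ t ^ (n - 1) * v t ≤ c * dG t := by
      intro t ht
      have htpos : (0:ℝ) < t := lt_of_lt_of_le ht₀pos ht
      obtain ⟨⟨h1, _, _, _⟩, _⟩ := ht₀ t ht
      have hGt : 0 < G t := hGpos t htpos
      have e1 : ψ t ^ (n - 1) * t ^ (-α) = t ^ μ * G t := by
        rw [hG_def]
        simp only []
        rw [show t ^ μ * (ψ t ^ (n-1) * t ^ p) = ψ t ^ (n-1) * (t ^ μ * t ^ p) by ring,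
          ← Real.rpow_add htpos, hp_def]
        norm_num
      calc ψ t ^ (n - 1) * v t ≤ ψ t ^ (n - 1) * ((L + ε) * t ^ (-α)) :=
            mul_le_mul_of_nonneg_left h1 (pow_nonneg (hψnn t) _)
      _ = (L + ε) * (t ^ μ * G t) := by rw [← e1]; ring
      _ = c * ((1 - ε) * A * t ^ μ * G t) := by rw [← hc_cancel]; ring
      _ ≤ c * dG t := mul_le_mul_of_nonneg_left (hdG_lb t ht) hc.le
    -- the integral comparison
    set I : ℝ → ℝ := fun t => ∫ s in Set.Ioc (0:ℝ) t, ψ s ^ (n - 1) * v s with hI_def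
    have hImono : ∀ t, t₀ ≤ t → I t ≤ I t₀ + c * (G t - G t₀) := by
      intro t ht
      have htpos : (0:ℝ) < t := lt_of_lt_of_le ht₀pos ht
      have hsub : Set.Icc t₀ t ⊆ Set.Ioi (0:ℝ) := fun x hx => lt_of_lt_of_le ht₀pos hx.1
      have hsplit : I t = I t₀ + ∫ s in Set.Ioc t₀ t, ψ s ^ (n - 1) * v s := by
        rw [hI_def]
        simp only []
        rw [← Set.Ioc_union_Ioc_eq_Ioc ht₀pos.le ht,
          MeasureTheory.setIntegral_union (Set.Ioc_disjoint_Ioc_of_le le_rfl) measurableSet_Ioc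
            ((hint1 t htpos).mono_set (Set.Ioc_subset_Ioc_right ht))
            ((hint1 t htpos).mono_set (Set.Ioc_subset_Ioc_left ht₀pos.le))]
      have hcdG : ContinuousOn dG (Set.Icc t₀ t) := by
        have hψc : ContinuousOn ψ (Set.Icc t₀ t) :=
          hψcont.mono (fun x hx => show (0:ℝ) ≤ x from le_of_lt (hsub hx))
        apply ContinuousOn.mul
        · apply ContinuousOn.sub
          · exact continuousOn_const.mul ((hψdc.mono hsub).div hψc
              (fun x hx => (hψpos x (hsub hx)).ne'))
          · exact continuousOn_const.div continuousOn_id (fun x hx => (hsub hx).out.ne')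
        · exact (hψc.pow _).mul
            (fun x hx => (Real.continuousAt_rpow_const x p (Or.inl (hsub hx).out.ne')).continuousWithinAt)
      have hdGint : IntervalIntegrable dG volume t₀ t := by
        rw [intervalIntegrable_iff_integrableOn_Ioc_of_le ht]
        exact (hcdG.integrableOn_compact isCompact_Icc).mono_set Set.Ioc_subset_Icc_self
      have hftc : ∫ s in t₀..t, dG s = G t - G t₀ :=
        intervalIntegral.integral_eq_sub_of_hasDerivAt
          (fun x hx => hGd x (hsub ((Set.uIcc_of_le ht) ▸ hx)))
          hdGint
      have hmono2 : ∫ s in t₀..t, ψ s ^ (n - 1) * v s ≤ ∫ s in t₀..t, c * dG s := by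
        apply intervalIntegral.integral_mono_on ht
        · rw [intervalIntegrable_iff_integrableOn_Ioc_of_le ht]
          exact (hint1 t htpos).mono_set (Set.Ioc_subset_Ioc_left ht₀pos.le)
        · exact hdGint.const_mul c
        · exact fun x hx => hkey_pt x hx.1
      have heq2 : ∫ s in t₀..t, c * dG s = c * (G t - G t₀) := by
        rw [intervalIntegral.integral_const_mul, hftc]
      have heq3 : ∫ s in Set.Ioc t₀ t, ψ s ^ (n - 1) * v s
          = ∫ s in t₀..t, ψ s ^ (n - 1) * v s := (intervalIntegral.integral_of_le ht).symm
      rw [hsplit, heq3]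
      linarith [hmono2, heq2.le, heq2.ge]
    -- growth of G
    have hGtop : Filter.Tendsto G atTop atTop := by
      set H : ℝ → ℝ := fun t => G t * Real.exp (-t) with hH_def
      have hHd : ∀ t, t₀ ≤ t → HasDerivAt H ((dG t - G t) * Real.exp (-t)) t := by
        intro t ht
        have hexp : HasDerivAt (fun s : ℝ => Real.exp (-s)) (-Real.exp (-t)) t := by
          have h1 := (Real.hasDerivAt_exp (-t)).comp t (hasDerivAt_neg t)
          exact h1.congr_deriv (by ring)
        have h2 := (hGd t (lt_of_lt_of_le ht₀pos ht)).mul hexp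
        refine h2.congr_deriv ?_
        ring
      have hHmono : MonotoneOn H (Set.Ici t₀) := by
        apply monotoneOn_of_deriv_nonneg (convex_Ici t₀)
        · exact fun x hx => (hHd x hx).continuousAt.continuousWithinAt
        · intro x hx
          rw [interior_Ici] at hx
          exact (hHd x (le_of_lt hx)).differentiableAt.differentiableWithinAt
        · intro x hx
          rw [interior_Ici] at hx
          rw [(hHd x hx.le).deriv]
          exact mul_nonneg (by linarith [hdG_geG x hx.le]) (Real.exp_nonneg _)
      have hH₀ : 0 < H t₀ := mul_pos (hGpos t₀ ht₀pos) (Real.exp_pos _)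
      have hlb : ∀ᶠ t : ℝ in atTop, H t₀ * Real.exp t ≤ G t := by
        filter_upwards [eventually_ge_atTop t₀] with t ht
        have hmono := hHmono Set.self_mem_Ici (ht : t ∈ Set.Ici t₀) ht
        calc H t₀ * Real.exp t ≤ H t * Real.exp t :=
              mul_le_mul_of_nonneg_right hmono (Real.exp_pos t).le
        _ = G t := by rw [hH_def]; simp only []; rw [mul_assoc, ← Real.exp_add]; simp
      exact tendsto_atTop_mono' atTop hlb (Real.tendsto_exp_atTop.const_mul_atTop hH₀)
    -- choose t₁
    have hεG : ∀ᶠ t : ℝ in atTop, I t₀ - c * G t₀ ≤ ε * G t :=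
      (hGtop.const_mul_atTop hε).eventually_ge_atTop _
    obtain ⟨t₁, ht₁⟩ := eventually_atTop.mp (hεG.and (eventually_ge_atTop t₀))
    have hIle : ∀ t, t₁ ≤ t → I t ≤ (c + ε) * G t := by
      intro t ht
      obtain ⟨h1, h2⟩ := ht₁ t ht
      have h3 := hImono t h2
      nlinarith
    -- outer integral estimate
    have hple : p < -1 := by rw [hp_def]; simp only [neg_lt_neg_iff]; linarith
    have hout : ∀ᶠ r : ℝ in atTop, f r ≤ ((c + ε) / ((μ - 1) * m)) ^ (1/m) := by
      filter_upwards [eventually_ge_atTop t₁, eventually_ge_atTop 1] with r hrt₁ hr1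
      have hr0 : (0:ℝ) < r := lt_of_lt_of_le one_pos hr1
      have hintg : MeasureTheory.IntegrableOn (fun t : ℝ => (c + ε) * t ^ p) (Set.Ioi r) :=
        (integrableOn_Ioi_rpow_of_lt hple hr0).const_mul _
      have hbound : (∫ t in Set.Ioi r, I t / ψ t ^ (n - 1))
          ≤ ∫ t in Set.Ioi r, (c + ε) * t ^ p := by
        apply setIntegral_mono_on (hint2 r hr0) hintg measurableSet_Ioi
        intro t htr
        have htpos : (0:ℝ) < t := lt_trans hr0 htr
        have hψp : (0:ℝ) < ψ t ^ (n - 1) := pow_pos (hψpos t htpos) _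
        have h1 : I t ≤ (c + ε) * G t := hIle t (le_of_lt (lt_of_le_of_lt hrt₁ htr))
        calc I t / ψ t ^ (n - 1) ≤ ((c + ε) * G t) / ψ t ^ (n - 1) := by gcongr
        _ = (c + ε) * t ^ p := by
            rw [hG_def]
            field_simp [hψp.ne']
            try ring
      have hval : ∫ t in Set.Ioi r, (c + ε) * t ^ p = (c + ε) * (-r ^ (p + 1) / (p + 1)) := by
        rw [MeasureTheory.integral_const_mul, integral_Ioi_rpow_of_lt hple hr0]
      have hd : (m - 1) * (α * m) = (μ - 1) * m := by
        rw [hα_def]; field_simp; try ring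
      have hvm : v r ^ m ≤ (c + ε) / ((μ - 1) * m) * r ^ (-(α * m)) := by
        rw [hid r hr0]
        have hpe : p + 1 = -(α * m) := by
          rw [hp_def, hα_def]
          field_simp
          try ring
        calc (1 / (m - 1)) * ∫ t in Set.Ioi r,
              (∫ s in Set.Ioc (0:ℝ) t, ψ s ^ (n - 1) * v s) / ψ t ^ (n - 1)
            ≤ 1 / (m - 1) * ((c + ε) * (-r ^ (p + 1) / (p + 1))) :=
              mul_le_mul_of_nonneg_left (hbound.trans hval.le) (by positivity)
        _ = (c + ε) / ((m - 1) * (α * m)) * r ^ (-(α * m)) := by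
              rw [hpe]
              have hαm : (0:ℝ) < α * m := mul_pos hα (by linarith)
              field_simp
              try ring
        _ = (c + ε) / ((μ - 1) * m) * r ^ (-(α * m)) := by rw [hd]
      have hfr : f r ^ m ≤ (c + ε) / ((μ - 1) * m) := by
        have e1 : f r ^ m = r ^ (α * m) * v r ^ m := by
          rw [hf_def]
          simp only []
          rw [Real.mul_rpow (Real.rpow_nonneg hr0.le _) (hvpos r hr0).le,
            ← Real.rpow_mul hr0.le]
        rw [e1]
        calc r ^ (α * m) * v r ^ m
            ≤ r ^ (α * m) * ((c + ε) / ((μ - 1) * m) * r ^ (-(α * m))) :=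
              mul_le_mul_of_nonneg_left hvm (Real.rpow_nonneg hr0.le _)
        _ = (c + ε) / ((μ - 1) * m) * (r ^ (α * m) * r ^ (-(α * m))) := by ring
        _ = (c + ε) / ((μ - 1) * m) := by rw [← Real.rpow_add hr0]; simp
      have hfr0 : 0 ≤ f r := mul_nonneg (Real.rpow_nonneg hr0.le _) (hvpos r hr0).le
      have e3 : f r = (f r ^ m) ^ (1/m) := by
        rw [← Real.rpow_mul hfr0, mul_one_div_cancel (by linarith : m ≠ 0), Real.rpow_one]
      rw [e3]
      exact Real.rpow_le_rpow (Real.rpow_nonneg hfr0 _) hfr (by positivity)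
    have hLle : L ≤ ((c + ε) / ((μ - 1) * m)) ^ (1/m) := Filter.limsup_le_of_le hcob hout
    have hD0 : 0 ≤ (c + ε) / ((μ - 1) * m) := by positivity
    calc L ^ m ≤ (((c + ε) / ((μ - 1) * m)) ^ (1/m)) ^ m :=
          Real.rpow_le_rpow hL0 hLle (by linarith)
    _ = (c + ε) / ((μ - 1) * m) := by
        rw [← Real.rpow_mul hD0, one_div_mul_cancel (by linarith : m ≠ 0), Real.rpow_one]

  -- pass to the limit ε → 0⁺
  have hlim : L ^ m ≤ L / A / ((μ - 1) * m) := by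
    have hcont : Filter.Tendsto (fun ε : ℝ => ((L + ε) / ((1 - ε) * A) + ε) / ((μ - 1) * m))
        (nhdsWithin 0 (Set.Ioi 0)) (nhds (L / A / ((μ - 1) * m))) := by
      have hca : ContinuousAt (fun ε : ℝ => ((L + ε) / ((1 - ε) * A) + ε) / ((μ - 1) * m)) 0 := by
        apply ContinuousAt.div
        · apply ContinuousAt.add
          · apply ContinuousAt.div
            · fun_prop
            · fun_prop
            · simp; positivity
          · fun_prop
        · fun_prop
        · positivity
      have h0 : ((L + 0) / ((1 - 0) * A) + 0) / ((μ - 1) * m) = L / A / ((μ - 1) * m) := by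
        norm_num
      have h1 := hca.tendsto.mono_left (nhdsWithin_le_nhds (s := Set.Ioi (0:ℝ)))
      rwa [h0] at h1
    refine ge_of_tendsto hcont ?_
    have hmem : Set.Ioc (0:ℝ) (1/2) ∈ nhdsWithin (0:ℝ) (Set.Ioi 0) :=
      Ioc_mem_nhdsGT_of_mem ⟨le_refl 0, by norm_num⟩
    filter_upwards [hmem] with ε hε
    exact key ε hε.1 hε.2
  -- conclude
  set X : ℝ := m * (μ - 1) * ((n:ℝ) - 1) * Real.sqrt Q with hX_def
  have hX : 0 < X := by positivity
  have hlim' : L ^ m ≤ L / X := by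
    calc L ^ m ≤ L / A / ((μ - 1) * m) := hlim
    _ = L / X := by rw [div_div, hX_def, hA_def]; congr 1; ring
  rcases hL0.eq_or_lt with hL | hL
  · have : L ≤ 0 := hL.ge
    exact this.trans (Real.rpow_pos_of_pos hX _).le
  · have h1 : L ^ (m - 1) * L ≤ X⁻¹ * L := by
      have e1 : L ^ (m - 1) * L = L ^ m := by
        rw [← Real.rpow_add_one hL.ne' (m - 1)]
        ring_nf
      rw [e1]
      calc L ^ m ≤ L / X := hlim'
      _ = X⁻¹ * L := by ring
    have h2 : L ^ (m - 1) ≤ X⁻¹ := le_of_mul_le_mul_right h1 hL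
    have e2 : L = (L ^ (m - 1)) ^ (1 / (m - 1)) := by
      rw [← Real.rpow_mul hL0, mul_one_div_cancel hm1.ne', Real.rpow_one]
    calc L = (L ^ (m - 1)) ^ (1 / (m - 1)) := e2
    _ ≤ (X⁻¹) ^ (1 / (m - 1)) :=
        Real.rpow_le_rpow (Real.rpow_nonneg hL0 _) h2 (by positivity)
    _ = X ^ (-(1 / (m - 1))) := by
        rw [Real.inv_rpow hX.le, ← Real.rpow_neg hX.le]
end

section
/- Let m > 1, μ > 1 and β > 0. Then there exist positive constants r̄₀ and k, and for each r₀ ≥ r̄₀ a constant C̄ > 0, such that for every C ≥ C̄, every t₀ > 1 and every γ > 0 with γ^{(μ+1)/(μ−1)} ≤ k·C^{1−m}, the function ū(r,t) := C·(t+t₀)^{−1/(m−1)}·[(r+r₀)^{−(μ−1)} − γ·(log(t+t₀))^{−(μ−1)/(μ+1)}]₊^{1/(m−1)} satisfies ∂_t ū(r,t) ≥ ∂²_r(ū^m)(r,t) + β·r^μ·∂_r(ū^m)(r,t) at every point (r,t) with r ≥ 1, t > 0 and (r+r₀)^{−(μ−1)} > γ·(log(t+t₀))^{−(μ−1)/(μ+1)}.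 -/
open Real Filter Set

set_option maxHeartbeats 1600000 in
/-- Supersolution part of the proof of Theorem 2.5: the explicit barrier
`ū(r,t) = C (t+t₀)^{-1/(m-1)} [(r+r₀)^{-(μ-1)} − γ (log(t+t₀))^{-(μ-1)/(μ+1)}]₊^{1/(m-1)}`
is a supersolution of the radial porous medium equation
`u_t = (u^m)_{rr} + β r^μ (u^m)_r` in the region `r ≥ 1`, `t > 0` where its bracket is
positive, provided `r₀ ≥ r̄₀`, `C ≥ C̄` and `γ^{(μ+1)/(μ-1)} ≤ k C^{1-m}`. -/
theorem stmt_8 (m μ β : ℝ) (hm : 1 < m) (hμ : 1 < μ) (hβ : 0 < β) :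
    ∃ rbar₀ > (0:ℝ), ∃ k > (0:ℝ), ∀ r₀ : ℝ, rbar₀ ≤ r₀ → ∃ Cbar > (0:ℝ),
      ∀ C : ℝ, Cbar ≤ C → ∀ t₀ : ℝ, 1 < t₀ → ∀ γ : ℝ, 0 < γ →
        γ ^ ((μ + 1) / (μ - 1)) ≤ k * C ^ (1 - m) →
        ∀ U : ℝ → ℝ → ℝ,
          (U = fun r t => C * (t + t₀) ^ (-1 / (m - 1)) *
            (max ((r + r₀) ^ (-(μ - 1))
              - γ * (Real.log (t + t₀)) ^ (-(μ - 1) / (μ + 1))) 0) ^ (1 / (m - 1))) →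
          ∀ r : ℝ, 1 ≤ r → ∀ t : ℝ, 0 < t →
            γ * (Real.log (t + t₀)) ^ (-(μ - 1) / (μ + 1)) < (r + r₀) ^ (-(μ - 1)) →
            deriv (deriv (fun s : ℝ => U s t ^ m)) r
                + β * r ^ μ * deriv (fun s : ℝ => U s t ^ m) r
              ≤ deriv (fun τ : ℝ => U r τ) t := by
  have hm1 : (0:ℝ) < m - 1 := by linarith
  have hm0 : (0:ℝ) < m := by linarith
  have hμ1 : (0:ℝ) < μ - 1 := by linarith
  have hμ2 : (0:ℝ) < μ + 1 := by linarith
  have hμ0 : (0:ℝ) < μ := by linarith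
  have hK0 : (0:ℝ) < (m / (m - 1) * (μ - 1) ^ 2 + m * (μ - 1) * μ) := by
    have h1 : (0:ℝ) < m / (m - 1) := div_pos hm0 hm1
    have h2 : (0:ℝ) < m * (μ - 1) * μ := mul_pos (mul_pos hm0 hμ1) hμ0
    nlinarith [mul_nonneg h1.le (sq_nonneg (μ - 1))]
  refine ⟨4 * (m / (m - 1) * (μ - 1) ^ 2 + m * (μ - 1) * μ) / (β * (μ - 1)), div_pos (by linarith) (mul_pos hβ hμ1),
    (μ - 1) / (μ + 1) * 2 ^ (-(2 * μ / (μ - 1))) / (m / (m - 1) * (μ - 1) ^ 2 + m * (μ - 1) * μ),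
    div_pos (mul_pos (div_pos hμ1 hμ2) (Real.rpow_pos_of_pos two_pos _)) hK0, ?_⟩
  intro r₀ hr₀
  refine ⟨max 1 ((2 * (1 + r₀) ^ μ / (m * β * (μ - 1))) ^ (1 / (m - 1))),
    lt_of_lt_of_le one_pos (le_max_left _ _), ?_⟩
  intro C hC t₀ ht₀ γ hγ hγk U hU r hr t ht hreg
  simp only [hU]
  have hr₀0 : (0:ℝ) < r₀ :=
    lt_of_lt_of_le (div_pos (by linarith) (mul_pos hβ hμ1)) hr₀
  have hx0 : (0:ℝ) < r + r₀ := by linarith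
  have hT0 : (0:ℝ) < t + t₀ := by linarith
  have hT1 : (1:ℝ) < t + t₀ := by linarith
  have hl0 : (0:ℝ) < Real.log (t + t₀) := Real.log_pos hT1
  have hC1 : (1:ℝ) ≤ C := le_trans (le_max_left _ _) hC
  have hC0 : (0:ℝ) < C := by linarith
  have hG0 : (0:ℝ) < ((r + r₀) ^ (-(μ - 1)) - γ * Real.log (t + t₀) ^ (-(μ - 1) / (μ + 1))) := sub_pos.mpr hreg
  -- spatial derivative of the bracket
  have hgder : ∀ s : ℝ, 0 < s + r₀ →
      HasDerivAt (fun y : ℝ => (y + r₀) ^ (-(μ - 1)) - γ * Real.log (t + t₀) ^ (-(μ - 1) / (μ + 1)))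
        (1 * (-(μ - 1)) * (s + r₀) ^ (-(μ - 1) - 1)) s := by
    intro s hs
    exact (((hasDerivAt_id s).add_const r₀).rpow_const (Or.inl hs.ne')).sub_const _
  have hcontx : ContinuousAt (fun s : ℝ => s + r₀) r := by fun_prop
  have hev : ∀ᶠ s in nhds r,
      (0 < (s + r₀) ^ (-(μ - 1)) - γ * Real.log (t + t₀) ^ (-(μ - 1) / (μ + 1))) ∧ 0 < s + r₀ :=
    ((hgder r hx0).continuousAt.eventually (eventually_gt_nhds hG0)).and
      (hcontx.eventually (eventually_gt_nhds hx0))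
  have hd1 : ∀ s : ℝ, 0 < s + r₀ →
      0 < (s + r₀) ^ (-(μ - 1)) - γ * Real.log (t + t₀) ^ (-(μ - 1) / (μ + 1)) →
      HasDerivAt
        (fun y : ℝ => C ^ m * (t + t₀) ^ (-(m / (m - 1))) *
          ((y + r₀) ^ (-(μ - 1)) - γ * Real.log (t + t₀) ^ (-(μ - 1) / (μ + 1))) ^ (m / (m - 1)))
        (C ^ m * (t + t₀) ^ (-(m / (m - 1))) * (m / (m - 1)) * (-(μ - 1)) *
          (s + r₀) ^ (-(μ - 1) - 1) *
          ((s + r₀) ^ (-(μ - 1)) - γ * Real.log (t + t₀) ^ (-(μ - 1) / (μ + 1))) ^ (m / (m - 1) - 1)) s := by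
    intro s hs hgs
    have h := ((hgder s hs).rpow_const (p := m / (m - 1)) (Or.inl hgs.ne')).const_mul
      (C ^ m * (t + t₀) ^ (-(m / (m - 1))))
    refine h.congr_deriv ?_
    ring
  have hEq : (fun s : ℝ =>
      (C * (t + t₀) ^ (-1 / (m - 1)) *
        max ((s + r₀) ^ (-(μ - 1)) - γ * Real.log (t + t₀) ^ (-(μ - 1) / (μ + 1))) 0 ^ (1 / (m - 1))) ^ m) =ᶠ[nhds r]
      (fun y : ℝ => C ^ m * (t + t₀) ^ (-(m / (m - 1))) *
        ((y + r₀) ^ (-(μ - 1)) - γ * Real.log (t + t₀) ^ (-(μ - 1) / (μ + 1))) ^ (m / (m - 1))) := by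
    filter_upwards [hev] with s hs
    have hs1 : (0:ℝ) < (s + r₀) ^ (-(μ - 1)) - γ * Real.log (t + t₀) ^ (-(μ - 1) / (μ + 1)) := hs.1
    rw [max_eq_left hs1.le,
      Real.mul_rpow (mul_nonneg hC0.le (Real.rpow_nonneg hT0.le _)) (Real.rpow_nonneg hs1.le _),
      Real.mul_rpow hC0.le (Real.rpow_nonneg hT0.le _),
      ← Real.rpow_mul hT0.le, ← Real.rpow_mul hs1.le,
      show -1 / (m - 1) * m = -(m / (m - 1)) by rw [neg_div, neg_mul, div_mul_eq_mul_div, one_mul],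
      show 1 / (m - 1) * m = m / (m - 1) by rw [div_mul_eq_mul_div, one_mul]]
  have hPsiEq : deriv (fun y : ℝ => C ^ m * (t + t₀) ^ (-(m / (m - 1))) *
        ((y + r₀) ^ (-(μ - 1)) - γ * Real.log (t + t₀) ^ (-(μ - 1) / (μ + 1))) ^ (m / (m - 1))) =ᶠ[nhds r]
      (fun s : ℝ => C ^ m * (t + t₀) ^ (-(m / (m - 1))) * (m / (m - 1)) * (-(μ - 1)) *
          (s + r₀) ^ (-(μ - 1) - 1) *
          ((s + r₀) ^ (-(μ - 1)) - γ * Real.log (t + t₀) ^ (-(μ - 1) / (μ + 1))) ^ (m / (m - 1) - 1)) := by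
    filter_upwards [hev] with s hs
    exact (hd1 s hs.2 hs.1).deriv
  have hw1 : HasDerivAt (fun y : ℝ => (y + r₀) ^ (-(μ - 1) - 1))
      (1 * (-(μ - 1) - 1) * (r + r₀) ^ (-(μ - 1) - 1 - 1)) r :=
    ((hasDerivAt_id r).add_const r₀).rpow_const (Or.inl hx0.ne')
  have hw2 : HasDerivAt
      (fun y : ℝ => ((y + r₀) ^ (-(μ - 1)) - γ * Real.log (t + t₀) ^ (-(μ - 1) / (μ + 1))) ^ (m / (m - 1) - 1))
      (1 * (-(μ - 1)) * (r + r₀) ^ (-(μ - 1) - 1) * (m / (m - 1) - 1) *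
        ((r + r₀) ^ (-(μ - 1)) - γ * Real.log (t + t₀) ^ (-(μ - 1) / (μ + 1))) ^ (m / (m - 1) - 1 - 1)) r :=
    (hgder r hx0).rpow_const (Or.inl hG0.ne')
  have hd2 : HasDerivAt
      (fun s : ℝ => C ^ m * (t + t₀) ^ (-(m / (m - 1))) * (m / (m - 1)) * (-(μ - 1)) *
          (s + r₀) ^ (-(μ - 1) - 1) *
          ((s + r₀) ^ (-(μ - 1)) - γ * Real.log (t + t₀) ^ (-(μ - 1) / (μ + 1))) ^ (m / (m - 1) - 1))
      (C ^ m * (t + t₀) ^ (-(m / (m - 1))) * (m / (m - 1)) *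
        ((-(μ - 1)) * ((-(μ - 1) - 1) * (r + r₀) ^ (-(μ - 1) - 1 - 1) *
            ((r + r₀) ^ (-(μ - 1)) - γ * Real.log (t + t₀) ^ (-(μ - 1) / (μ + 1))) ^ (m / (m - 1) - 1)) +
         (μ - 1) * (μ - 1) * (r + r₀) ^ (-(μ - 1) - 1) * (r + r₀) ^ (-(μ - 1) - 1) *
            (m / (m - 1) - 1) * ((r + r₀) ^ (-(μ - 1)) - γ * Real.log (t + t₀) ^ (-(μ - 1) / (μ + 1))) ^ (m / (m - 1) - 1 - 1))) r := by
    have h := ((hw1.const_mul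
        (C ^ m * (t + t₀) ^ (-(m / (m - 1))) * (m / (m - 1)) * (-(μ - 1)))).mul hw2)
    refine h.congr_deriv ?_
    ring
  -- time derivative
  have hA' : HasDerivAt (fun τ : ℝ => (τ + t₀) ^ (-1 / (m - 1)))
      (1 * (-1 / (m - 1)) * (t + t₀) ^ (-1 / (m - 1) - 1)) t :=
    ((hasDerivAt_id t).add_const t₀).rpow_const (Or.inl hT0.ne')
  have hlog : HasDerivAt (fun τ : ℝ => Real.log (τ + t₀)) (1 / (t + t₀)) t :=
    ((hasDerivAt_id t).add_const t₀).log hT0.ne'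
  have hlamd : HasDerivAt (fun τ : ℝ => Real.log (τ + t₀) ^ (-(μ - 1) / (μ + 1)))
      (1 / (t + t₀) * (-(μ - 1) / (μ + 1)) * Real.log (t + t₀) ^ (-(μ - 1) / (μ + 1) - 1)) t :=
    hlog.rpow_const (Or.inl hl0.ne')
  have hh : HasDerivAt (fun τ : ℝ => (r + r₀) ^ (-(μ - 1)) -
        γ * Real.log (τ + t₀) ^ (-(μ - 1) / (μ + 1)))
      (-(γ * (1 / (t + t₀) * (-(μ - 1) / (μ + 1)) * Real.log (t + t₀) ^ (-(μ - 1) / (μ + 1) - 1)))) t :=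
    (hlamd.const_mul γ).const_sub _
  have hevT : ∀ᶠ τ in nhds t,
      0 < (r + r₀) ^ (-(μ - 1)) - γ * Real.log (τ + t₀) ^ (-(μ - 1) / (μ + 1)) :=
    hh.continuousAt.eventually (eventually_gt_nhds hG0)
  have hEqT : (fun τ : ℝ =>
      C * (τ + t₀) ^ (-1 / (m - 1)) *
        max ((r + r₀) ^ (-(μ - 1)) - γ * Real.log (τ + t₀) ^ (-(μ - 1) / (μ + 1))) 0
          ^ (1 / (m - 1))) =ᶠ[nhds t]
      (fun τ : ℝ => C * ((τ + t₀) ^ (-1 / (m - 1)) *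
        ((r + r₀) ^ (-(μ - 1)) - γ * Real.log (τ + t₀) ^ (-(μ - 1) / (μ + 1)))
          ^ (1 / (m - 1)))) := by
    filter_upwards [hevT] with τ hτ
    have hτ1 : (0:ℝ) < (r + r₀) ^ (-(μ - 1)) -
        γ * Real.log (τ + t₀) ^ (-(μ - 1) / (μ + 1)) := hτ
    rw [max_eq_left hτ1.le]; ring
  have hhq : HasDerivAt (fun τ : ℝ => ((r + r₀) ^ (-(μ - 1)) -
        γ * Real.log (τ + t₀) ^ (-(μ - 1) / (μ + 1))) ^ (1 / (m - 1)))
      (-(γ * (1 / (t + t₀) * (-(μ - 1) / (μ + 1)) * Real.log (t + t₀) ^ (-(μ - 1) / (μ + 1) - 1))) * (1 / (m - 1)) *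
        ((r + r₀) ^ (-(μ - 1)) - γ * Real.log (t + t₀) ^ (-(μ - 1) / (μ + 1))) ^ (1 / (m - 1) - 1)) t :=
    hh.rpow_const (Or.inl hG0.ne')
  have hdT : HasDerivAt (fun τ : ℝ => C * ((τ + t₀) ^ (-1 / (m - 1)) *
        ((r + r₀) ^ (-(μ - 1)) - γ * Real.log (τ + t₀) ^ (-(μ - 1) / (μ + 1)))
          ^ (1 / (m - 1))))
      (C * ((-1 / (m - 1)) * (t + t₀) ^ (-1 / (m - 1) - 1) * ((r + r₀) ^ (-(μ - 1)) - γ * Real.log (t + t₀) ^ (-(μ - 1) / (μ + 1))) ^ (1 / (m - 1)) +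
        (t + t₀) ^ (-1 / (m - 1)) * (1 / (m - 1)) * ((r + r₀) ^ (-(μ - 1)) - γ * Real.log (t + t₀) ^ (-(μ - 1) / (μ + 1))) ^ (1 / (m - 1) - 1) *
          γ * ((μ - 1) / (μ + 1)) * Real.log (t + t₀) ^ (-(μ - 1) / (μ + 1) - 1) * (t + t₀)⁻¹)) t := by
    have h := (hA'.mul hhq).const_mul C
    refine h.congr_deriv ?_
    ring
  -- rewrite the goal using all derivative computations
  rw [hEq.deriv.deriv_eq, hPsiEq.deriv_eq, hd2.deriv, hEq.deriv_eq,
    (hd1 r hx0 hG0).deriv, hEqT.deriv_eq, hdT.deriv]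
  -- atom normalizations
  have hA1 : (r + r₀) ^ (-(μ - 1) - 1 - 1) = (r + r₀) ^ (-(μ - 1) - 1) * (r + r₀)⁻¹ := by
    rw [show ((r + r₀):ℝ)⁻¹ = (r + r₀) ^ (-1 : ℝ) from (Real.rpow_neg_one _).symm,
      ← Real.rpow_add hx0]
    first
    | (congr 1; ring)
    | congr 1
  have hA2 : (r + r₀) ^ (-(μ - 1)) = (r + r₀) ^ (-(μ - 1) - 1) * (r + r₀) := by
    nth_rewrite 3 [show ((r + r₀):ℝ) = (r + r₀) ^ (1 : ℝ) from (Real.rpow_one _).symm]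
    rw [← Real.rpow_add hx0]
    first
    | (congr 1; ring)
    | congr 1
  have hA3 : ((r + r₀) ^ (-(μ - 1)) - γ * Real.log (t + t₀) ^ (-(μ - 1) / (μ + 1))) ^ (m / (m - 1) - 1) = ((r + r₀) ^ (-(μ - 1)) - γ * Real.log (t + t₀) ^ (-(μ - 1) / (μ + 1))) ^ (m / (m - 1) - 1 - 1) * ((r + r₀) ^ (-(μ - 1)) - γ * Real.log (t + t₀) ^ (-(μ - 1) / (μ + 1))) := by
    nth_rewrite 3 [show ((r + r₀) ^ (-(μ - 1)) - γ * Real.log (t + t₀) ^ (-(μ - 1) / (μ + 1))) = ((r + r₀) ^ (-(μ - 1)) - γ * Real.log (t + t₀) ^ (-(μ - 1) / (μ + 1))) ^ (1 : ℝ) from (Real.rpow_one _).symm]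
    rw [← Real.rpow_add hG0]
    first
    | (congr 1; ring)
    | congr 1
  have hA4 : ((r + r₀) ^ (-(μ - 1)) - γ * Real.log (t + t₀) ^ (-(μ - 1) / (μ + 1))) ^ (1 / (m - 1)) = ((r + r₀) ^ (-(μ - 1)) - γ * Real.log (t + t₀) ^ (-(μ - 1) / (μ + 1))) ^ (m / (m - 1) - 1 - 1) * ((r + r₀) ^ (-(μ - 1)) - γ * Real.log (t + t₀) ^ (-(μ - 1) / (μ + 1))) := by
    nth_rewrite 3 [show ((r + r₀) ^ (-(μ - 1)) - γ * Real.log (t + t₀) ^ (-(μ - 1) / (μ + 1))) = ((r + r₀) ^ (-(μ - 1)) - γ * Real.log (t + t₀) ^ (-(μ - 1) / (μ + 1))) ^ (1 : ℝ) from (Real.rpow_one _).symm]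
    rw [← Real.rpow_add hG0]
    first
    | (congr 1; field_simp; ring)
    | (congr 1; field_simp)
    | congr 1
  have hA5 : ((r + r₀) ^ (-(μ - 1)) - γ * Real.log (t + t₀) ^ (-(μ - 1) / (μ + 1))) ^ (1 / (m - 1) - 1) = ((r + r₀) ^ (-(μ - 1)) - γ * Real.log (t + t₀) ^ (-(μ - 1) / (μ + 1))) ^ (m / (m - 1) - 1 - 1) := by
    first
    | (congr 1; field_simp; ring)
    | (congr 1; field_simp)
    | congr 1
  have hA6 : (t + t₀) ^ (-(m / (m - 1))) = (t + t₀) ^ (-1 / (m - 1)) * (t + t₀)⁻¹ := by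
    rw [show ((t + t₀):ℝ)⁻¹ = (t + t₀) ^ (-1 : ℝ) from (Real.rpow_neg_one _).symm,
      ← Real.rpow_add hT0]
    first
    | (congr 1; field_simp; ring)
    | (congr 1; field_simp)
    | congr 1
  have hA7 : (t + t₀) ^ (-1 / (m - 1) - 1) = (t + t₀) ^ (-1 / (m - 1)) * (t + t₀)⁻¹ := by
    rw [show ((t + t₀):ℝ)⁻¹ = (t + t₀) ^ (-1 : ℝ) from (Real.rpow_neg_one _).symm,
      ← Real.rpow_add hT0]
    first
    | (congr 1; ring)
    | congr 1
  have hA8 : C ^ m = C ^ (m - 1) * C := by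
    nth_rewrite 3 [show C = C ^ (1 : ℝ) from (Real.rpow_one _).symm]
    rw [← Real.rpow_add hC0]
    first
    | (congr 1; ring)
    | congr 1
  rw [hA1, hA3, hA4, hA5, hA6, hA7, hA8]
  -- auxiliary quantities for the core inequality
  have hXpos : (0:ℝ) < (r + r₀) ^ (-(μ - 1) - 1) := Real.rpow_pos_of_pos hx0 _
  have hlampos : (0:ℝ) < Real.log (t + t₀) ^ (-(μ - 1) / (μ + 1)) := Real.rpow_pos_of_pos hl0 _
  have hlEpos : (0:ℝ) < Real.log (t + t₀) ^ (-(μ - 1) / (μ + 1) - 1) := Real.rpow_pos_of_pos hl0 _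
  have hC1m0 : (0:ℝ) < C ^ (1 - m) := Real.rpow_pos_of_pos hC0 _
  have hGle : ((r + r₀) ^ (-(μ - 1)) - γ * Real.log (t + t₀) ^ (-(μ - 1) / (μ + 1))) ≤ (r + r₀) ^ (-(μ - 1) - 1) * (r + r₀) := by
    rw [← hA2]
    linarith [mul_pos hγ hlampos]
  have h1r : (0:ℝ) < 1 + r₀ := by linarith
  have hrpow : ((r + r₀) / (1 + r₀)) ^ μ ≤ r ^ μ :=
    Real.rpow_le_rpow (by positivity) (by rw [div_le_iff₀ h1r]; nlinarith) hμ0.le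
  have hdivpow : ((r + r₀) / (1 + r₀)) ^ μ = (r + r₀) ^ μ / (1 + r₀) ^ μ :=
    Real.div_rpow hx0.le h1r.le μ
  have hxinv : (r + r₀) ^ μ * (r + r₀) ^ (-(μ - 1) - 1) = 1 := by
    rw [show (-(μ - 1) - 1 : ℝ) = -μ by ring, ← Real.rpow_add hx0]
    norm_num
  have h1rneg : ((1:ℝ) + r₀) ^ (-μ) = ((1 + r₀) ^ μ)⁻¹ := Real.rpow_neg h1r.le μ
  have hrX : (1 + r₀) ^ (-μ) ≤ r ^ μ * (r + r₀) ^ (-(μ - 1) - 1) := by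
    have h3 : (r + r₀) ^ μ / (1 + r₀) ^ μ ≤ r ^ μ := by rw [← hdivpow]; exact hrpow
    have h4 := mul_le_mul_of_nonneg_right h3 hXpos.le
    have h5 : (r + r₀) ^ μ / (1 + r₀) ^ μ * (r + r₀) ^ (-(μ - 1) - 1)
        = ((1 + r₀) ^ μ)⁻¹ * ((r + r₀) ^ μ * (r + r₀) ^ (-(μ - 1) - 1)) := by ring
    calc (1 + r₀) ^ (-μ) = (r + r₀) ^ μ / (1 + r₀) ^ μ * (r + r₀) ^ (-(μ - 1) - 1) := by
          rw [h5, hxinv, mul_one, h1rneg]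
      _ ≤ r ^ μ * (r + r₀) ^ (-(μ - 1) - 1) := h4
  have hz0 : (0:ℝ) < 2 * (1 + r₀) ^ μ / (m * β * (μ - 1)) :=
    div_pos (mul_pos two_pos (Real.rpow_pos_of_pos h1r μ)) (mul_pos (mul_pos hm0 hβ) hμ1)
  have hCz : (2 * (1 + r₀) ^ μ / (m * β * (μ - 1))) ^ (1 / (m - 1)) ≤ C :=
    le_trans (le_max_right _ _) hC
  have hCm1 : 2 * (1 + r₀) ^ μ / (m * β * (μ - 1)) ≤ C ^ (m - 1) := by
    have h := Real.rpow_le_rpow (Real.rpow_nonneg hz0.le _) hCz hm1.le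
    rwa [← Real.rpow_mul hz0.le, one_div, inv_mul_cancel₀ hm1.ne', Real.rpow_one] at h
  have hC1m : C ^ (1 - m) ≤ m * β * (μ - 1) / 2 * (1 + r₀) ^ (-μ) := by
    have e1 : C ^ (1 - m) = (C ^ (m - 1))⁻¹ := by
      rw [show (1 - m : ℝ) = -(m - 1) by ring, Real.rpow_neg hC0.le]
    have e2 : (C ^ (m - 1))⁻¹ ≤ (2 * (1 + r₀) ^ μ / (m * β * (μ - 1)))⁻¹ :=
      inv_anti₀ hz0 hCm1
    have e3 : (2 * (1 + r₀) ^ μ / (m * β * (μ - 1)))⁻¹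
        = m * β * (μ - 1) / 2 * (1 + r₀) ^ (-μ) := by
      rw [h1rneg]
      field_simp
    rw [e1, ← e3]
    exact e2
  have hGXxi : ((r + r₀) ^ (-(μ - 1)) - γ * Real.log (t + t₀) ^ (-(μ - 1) / (μ + 1))) * ((r + r₀) ^ (-(μ - 1) - 1) * (r + r₀)⁻¹) ≤ (r + r₀) ^ (-(μ - 1) - 1) * (r + r₀) ^ (-(μ - 1) - 1) := by
    have h1 := mul_le_mul_of_nonneg_right hGle (mul_nonneg hXpos.le (inv_nonneg.mpr hx0.le))
    have h2 : ((r + r₀) ^ (-(μ - 1) - 1) * (r + r₀)) * ((r + r₀) ^ (-(μ - 1) - 1) * (r + r₀)⁻¹) = (r + r₀) ^ (-(μ - 1) - 1) * (r + r₀) ^ (-(μ - 1) - 1) := by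
      first
      | (field_simp; ring)
      | field_simp
    linarith
  have hPbad : m * ((m / (m - 1) - 1) * ((μ - 1) * (μ - 1)) * ((r + r₀) ^ (-(μ - 1) - 1) * (r + r₀) ^ (-(μ - 1) - 1))
      + μ * (μ - 1) * (((r + r₀) ^ (-(μ - 1)) - γ * Real.log (t + t₀) ^ (-(μ - 1) / (μ + 1))) * ((r + r₀) ^ (-(μ - 1) - 1) * (r + r₀)⁻¹))) ≤ (m / (m - 1) * (μ - 1) ^ 2 + m * (μ - 1) * μ) * ((r + r₀) ^ (-(μ - 1) - 1) * (r + r₀) ^ (-(μ - 1) - 1)) := by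
    have hc3 : (0:ℝ) ≤ m * (μ * (μ - 1)) := mul_nonneg hm0.le (mul_nonneg hμ0.le hμ1.le)
    have h1 := mul_le_mul_of_nonneg_left hGXxi hc3
    have e : m * ((m / (m - 1) - 1) * ((μ - 1) * (μ - 1)) * ((r + r₀) ^ (-(μ - 1) - 1) * (r + r₀) ^ (-(μ - 1) - 1)))
        = m / (m - 1) * (μ - 1) ^ 2 * ((r + r₀) ^ (-(μ - 1) - 1) * (r + r₀) ^ (-(μ - 1) - 1)) := by
      field_simp
      ring
    linarith
  have c2pos : (0:ℝ) < m * β * (μ - 1) / 2 :=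
    div_pos (mul_pos (mul_pos hm0 hβ) hμ1) two_pos
  have hPc : C ^ (1 - m) * ((r + r₀) ^ (-(μ - 1)) - γ * Real.log (t + t₀) ^ (-(μ - 1) / (μ + 1))) ≤ m * β * (μ - 1) / 2 * (r ^ μ * (((r + r₀) ^ (-(μ - 1)) - γ * Real.log (t + t₀) ^ (-(μ - 1) / (μ + 1))) * (r + r₀) ^ (-(μ - 1) - 1))) := by
    have h1 := mul_le_mul_of_nonneg_right hC1m hG0.le
    have h2 := mul_le_mul_of_nonneg_right hrX hG0.le
    have h3 := mul_le_mul_of_nonneg_left h2 c2pos.le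
    linarith [h1, h3]
  -- the core pointwise inequality
  have hstar : m * ((m / (m - 1) - 1) * ((μ - 1) * (μ - 1)) * ((r + r₀) ^ (-(μ - 1) - 1) * (r + r₀) ^ (-(μ - 1) - 1))
        + μ * (μ - 1) * (((r + r₀) ^ (-(μ - 1)) - γ * Real.log (t + t₀) ^ (-(μ - 1) / (μ + 1))) * ((r + r₀) ^ (-(μ - 1) - 1) * (r + r₀)⁻¹))
        - β * r ^ μ * (μ - 1) * (((r + r₀) ^ (-(μ - 1)) - γ * Real.log (t + t₀) ^ (-(μ - 1) / (μ + 1))) * (r + r₀) ^ (-(μ - 1) - 1)))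
      ≤ C ^ (1 - m) * (γ * ((μ - 1) / (μ + 1)) * Real.log (t + t₀) ^ (-(μ - 1) / (μ + 1) - 1) - ((r + r₀) ^ (-(μ - 1)) - γ * Real.log (t + t₀) ^ (-(μ - 1) / (μ + 1)))) := by
    rcases le_or_gt ((r + r₀) ^ (-(μ - 1) - 1) * (r + r₀) / 2) ((r + r₀) ^ (-(μ - 1)) - γ * Real.log (t + t₀) ^ (-(μ - 1) / (μ + 1))) with hcase | hcase
    · -- away from the free boundary: the transport term dominates
      have hxbig : 4 * (m / (m - 1) * (μ - 1) ^ 2 + m * (μ - 1) * μ) ≤ β * (μ - 1) * (r + r₀) := by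
        rw [div_le_iff₀ (mul_pos hβ hμ1)] at hr₀
        have h1 : (0:ℝ) ≤ β * (μ - 1) * r := mul_nonneg (mul_nonneg hβ.le hμ1.le) (by linarith)
        linarith
      have hXle : (r + r₀) ^ (-(μ - 1) - 1) ≤ (1 + r₀) ^ (-μ) := by
        rw [show (-(μ - 1) - 1 : ℝ) = -μ by ring]
        exact Real.rpow_le_rpow_of_nonpos h1r (by linarith) (by linarith)
      have hKE4 : (m / (m - 1) * (μ - 1) ^ 2 + m * (μ - 1) * μ) ≤ m * β * (μ - 1) / 4 * (r + r₀) := by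
        have h2 : (0:ℝ) ≤ (m - 1) * (β * (μ - 1) * (r + r₀)) :=
          mul_nonneg (by linarith) (mul_nonneg (mul_nonneg hβ.le hμ1.le) hx0.le)
        linarith
      have c4nn : (0:ℝ) ≤ m * β * (μ - 1) / 4 :=
        le_of_lt (div_pos (mul_pos (mul_pos hm0 hβ) hμ1) (by norm_num))
      have main : (m / (m - 1) * (μ - 1) ^ 2 + m * (μ - 1) * μ) * ((r + r₀) ^ (-(μ - 1) - 1) * (r + r₀) ^ (-(μ - 1) - 1)) ≤ m * β * (μ - 1) / 2 * (r ^ μ * (((r + r₀) ^ (-(μ - 1)) - γ * Real.log (t + t₀) ^ (-(μ - 1) / (μ + 1))) * (r + r₀) ^ (-(μ - 1) - 1))) := by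
        calc (m / (m - 1) * (μ - 1) ^ 2 + m * (μ - 1) * μ) * ((r + r₀) ^ (-(μ - 1) - 1) * (r + r₀) ^ (-(μ - 1) - 1)) ≤ (m / (m - 1) * (μ - 1) ^ 2 + m * (μ - 1) * μ) * ((1 + r₀) ^ (-μ) * (r + r₀) ^ (-(μ - 1) - 1)) :=
              mul_le_mul_of_nonneg_left (mul_le_mul_of_nonneg_right hXle hXpos.le) hK0.le
          _ ≤ (m * β * (μ - 1) / 4 * (r + r₀)) * ((1 + r₀) ^ (-μ) * (r + r₀) ^ (-(μ - 1) - 1)) :=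
              mul_le_mul_of_nonneg_right hKE4
                (mul_nonneg (Real.rpow_pos_of_pos h1r _).le hXpos.le)
          _ = m * β * (μ - 1) / 4 * ((r + r₀) * (r + r₀) ^ (-(μ - 1) - 1)) * (1 + r₀) ^ (-μ) := by ring
          _ ≤ m * β * (μ - 1) / 4 * ((r + r₀) * (r + r₀) ^ (-(μ - 1) - 1)) * (r ^ μ * (r + r₀) ^ (-(μ - 1) - 1)) :=
              mul_le_mul_of_nonneg_left hrX
                (mul_nonneg c4nn (mul_nonneg hx0.le hXpos.le))
          _ = m * β * (μ - 1) / 2 * (r ^ μ * (((r + r₀) ^ (-(μ - 1) - 1) * (r + r₀) / 2) * (r + r₀) ^ (-(μ - 1) - 1))) := by ring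
          _ ≤ m * β * (μ - 1) / 2 * (r ^ μ * (((r + r₀) ^ (-(μ - 1)) - γ * Real.log (t + t₀) ^ (-(μ - 1) / (μ + 1))) * (r + r₀) ^ (-(μ - 1) - 1))) := by
              apply mul_le_mul_of_nonneg_left _ c2pos.le
              exact mul_le_mul_of_nonneg_left
                (mul_le_mul_of_nonneg_right hcase hXpos.le)
                (Real.rpow_nonneg (by linarith : (0:ℝ) ≤ r) μ)
      have hgood2 : (0:ℝ) ≤ C ^ (1 - m) * (γ * ((μ - 1) / (μ + 1)) * Real.log (t + t₀) ^ (-(μ - 1) / (μ + 1) - 1)) :=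
        le_of_lt (mul_pos hC1m0 (mul_pos (mul_pos hγ (div_pos hμ1 hμ2)) hlEpos))
      linarith [hPbad, hPc, main, hgood2]
    · -- near the free boundary: the time gain dominates
      have hγlam : (r + r₀) ^ (-(μ - 1) - 1) * (r + r₀) / 2 < γ * Real.log (t + t₀) ^ (-(μ - 1) / (μ + 1)) := by
        linarith [hA2, hcase]
      have h2γ : (0:ℝ) < 2 * γ := by linarith
      have hΛlb : (r + r₀) ^ (-(μ - 1) - 1) * (r + r₀) / (2 * γ) < Real.log (t + t₀) ^ (-(μ - 1) / (μ + 1)) := by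
        rw [div_lt_iff₀ h2γ]
        linarith [hγlam]
      have hwnn : (0:ℝ) ≤ 2 * μ / (μ - 1) := le_of_lt (div_pos (by linarith) hμ1)
      have hpow := Real.rpow_le_rpow
        (div_nonneg (mul_nonneg hXpos.le hx0.le) h2γ.le) hΛlb.le hwnn
      have hΛw : (Real.log (t + t₀) ^ (-(μ - 1) / (μ + 1))) ^ (2 * μ / (μ - 1)) = Real.log (t + t₀) ^ (-(μ - 1) / (μ + 1) - 1) := by
        rw [← Real.rpow_mul hl0.le]
        first
        | (congr 1; field_simp; ring)
        | (congr 1; field_simp)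
        | congr 1
      have hbase : (r + r₀) ^ (-(μ - 1) - 1) * (r + r₀) / (2 * γ) = (r + r₀) ^ (-(μ - 1)) / (2 * γ) := by
        rw [hA2]
      have hXxw : ((r + r₀) ^ (-(μ - 1)) / (2 * γ)) ^ (2 * μ / (μ - 1))
          = (r + r₀) ^ (-(μ - 1) - 1) * (r + r₀) ^ (-(μ - 1) - 1) / ((2 * γ) ^ (2 * μ / (μ - 1))) := by
        rw [Real.div_rpow (Real.rpow_nonneg hx0.le _) h2γ.le]
        congr 1
        rw [← Real.rpow_mul hx0.le,
          show (-(μ - 1) * (2 * μ / (μ - 1)) : ℝ) = (-(μ - 1) - 1) + (-(μ - 1) - 1) by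
            field_simp; ring,
          Real.rpow_add hx0]
      have h2γw : ((2:ℝ) * γ) ^ (2 * μ / (μ - 1))
          = 2 ^ (2 * μ / (μ - 1)) * (γ * γ ^ ((μ + 1) / (μ - 1))) := by
        rw [Real.mul_rpow (by norm_num) hγ.le]
        congr 1
        nth_rewrite 2 [show γ = γ ^ (1:ℝ) from (Real.rpow_one _).symm]
        rw [← Real.rpow_add hγ]
        first
        | (congr 1; field_simp; ring)
        | (congr 1; field_simp)
        | congr 1
      have hD0 : (0:ℝ) < (2:ℝ) ^ (2 * μ / (μ - 1)) := Real.rpow_pos_of_pos two_pos _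
      have hγv0 : (0:ℝ) < γ ^ ((μ + 1) / (μ - 1)) := Real.rpow_pos_of_pos hγ _
      have hXXle : (r + r₀) ^ (-(μ - 1) - 1) * (r + r₀) ^ (-(μ - 1) - 1)
          ≤ 2 ^ (2 * μ / (μ - 1)) * (γ * γ ^ ((μ + 1) / (μ - 1))) * Real.log (t + t₀) ^ (-(μ - 1) / (μ + 1) - 1) := by
        rw [hbase, hXxw, h2γw, hΛw] at hpow
        have h6 := (div_le_iff₀ (mul_pos hD0 (mul_pos hγ hγv0))).mp hpow
        linarith [h6]
      have hcore : (m / (m - 1) * (μ - 1) ^ 2 + m * (μ - 1) * μ) * γ ^ ((μ + 1) / (μ - 1))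
          ≤ (μ - 1) / (μ + 1) * 2 ^ (-(2 * μ / (μ - 1))) * C ^ (1 - m) := by
        have h7 := mul_le_mul_of_nonneg_left hγk hK0.le
        have h8 : (m / (m - 1) * (μ - 1) ^ 2 + m * (μ - 1) * μ) * ((μ - 1) / (μ + 1) * 2 ^ (-(2 * μ / (μ - 1))) / (m / (m - 1) * (μ - 1) ^ 2 + m * (μ - 1) * μ) * C ^ (1 - m))
            = (μ - 1) / (μ + 1) * 2 ^ (-(2 * μ / (μ - 1))) * C ^ (1 - m) := by
          first
          | (field_simp [hK0.ne']; ring)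
          | field_simp [hK0.ne']
        linarith
      have h2winv : (2:ℝ) ^ (-(2 * μ / (μ - 1))) = ((2:ℝ) ^ (2 * μ / (μ - 1)))⁻¹ :=
        Real.rpow_neg (by norm_num) _
      have main : (m / (m - 1) * (μ - 1) ^ 2 + m * (μ - 1) * μ) * ((r + r₀) ^ (-(μ - 1) - 1) * (r + r₀) ^ (-(μ - 1) - 1)) ≤ C ^ (1 - m) * (γ * ((μ - 1) / (μ + 1)) * Real.log (t + t₀) ^ (-(μ - 1) / (μ + 1) - 1)) := by
        calc (m / (m - 1) * (μ - 1) ^ 2 + m * (μ - 1) * μ) * ((r + r₀) ^ (-(μ - 1) - 1) * (r + r₀) ^ (-(μ - 1) - 1))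
            ≤ (m / (m - 1) * (μ - 1) ^ 2 + m * (μ - 1) * μ) * (2 ^ (2 * μ / (μ - 1)) * (γ * γ ^ ((μ + 1) / (μ - 1))) * Real.log (t + t₀) ^ (-(μ - 1) / (μ + 1) - 1)) :=
              mul_le_mul_of_nonneg_left hXXle hK0.le
          _ = ((m / (m - 1) * (μ - 1) ^ 2 + m * (μ - 1) * μ) * γ ^ ((μ + 1) / (μ - 1))) * (2 ^ (2 * μ / (μ - 1)) * γ * Real.log (t + t₀) ^ (-(μ - 1) / (μ + 1) - 1)) := by ring
          _ ≤ ((μ - 1) / (μ + 1) * 2 ^ (-(2 * μ / (μ - 1))) * C ^ (1 - m))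
              * (2 ^ (2 * μ / (μ - 1)) * γ * Real.log (t + t₀) ^ (-(μ - 1) / (μ + 1) - 1)) :=
              mul_le_mul_of_nonneg_right hcore
                (le_of_lt (mul_pos (mul_pos hD0 hγ) hlEpos))
          _ = C ^ (1 - m) * (γ * ((μ - 1) / (μ + 1)) * Real.log (t + t₀) ^ (-(μ - 1) / (μ + 1) - 1))
              * (2 ^ (-(2 * μ / (μ - 1))) * 2 ^ (2 * μ / (μ - 1))) := by ring
          _ = C ^ (1 - m) * (γ * ((μ - 1) / (μ + 1)) * Real.log (t + t₀) ^ (-(μ - 1) / (μ + 1) - 1)) := by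
              rw [h2winv, inv_mul_cancel₀ hD0.ne', mul_one]
      have hgood1 : (0:ℝ) ≤ m * β * (μ - 1) / 2 * (r ^ μ * (((r + r₀) ^ (-(μ - 1)) - γ * Real.log (t + t₀) ^ (-(μ - 1) / (μ + 1))) * (r + r₀) ^ (-(μ - 1) - 1))) :=
        le_of_lt (mul_pos c2pos (mul_pos (Real.rpow_pos_of_pos (by linarith) μ)
          (mul_pos hG0 hXpos)))
      linarith [hPbad, hPc, main, hgood1]
  -- combine everything
  have hCC : C ^ (m - 1) * C ^ (1 - m) = 1 := by
    rw [← Real.rpow_add hC0]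
    norm_num
  have h1 : C ^ (m - 1) * (m * ((m / (m - 1) - 1) * ((μ - 1) * (μ - 1)) * ((r + r₀) ^ (-(μ - 1) - 1) * (r + r₀) ^ (-(μ - 1) - 1))
        + μ * (μ - 1) * (((r + r₀) ^ (-(μ - 1)) - γ * Real.log (t + t₀) ^ (-(μ - 1) / (μ + 1))) * ((r + r₀) ^ (-(μ - 1) - 1) * (r + r₀)⁻¹))
        - β * r ^ μ * (μ - 1) * (((r + r₀) ^ (-(μ - 1)) - γ * Real.log (t + t₀) ^ (-(μ - 1) / (μ + 1))) * (r + r₀) ^ (-(μ - 1) - 1))))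
      ≤ C ^ (m - 1) * (C ^ (1 - m) * (γ * ((μ - 1) / (μ + 1)) * Real.log (t + t₀) ^ (-(μ - 1) / (μ + 1) - 1) - ((r + r₀) ^ (-(μ - 1)) - γ * Real.log (t + t₀) ^ (-(μ - 1) / (μ + 1))))) :=
    mul_le_mul_of_nonneg_left hstar (Real.rpow_nonneg hC0.le _)
  have hstar' : C ^ (m - 1) * (m / (m - 1)) * ((m / (m - 1) - 1) * ((μ - 1) * (μ - 1)) * ((r + r₀) ^ (-(μ - 1) - 1) * (r + r₀) ^ (-(μ - 1) - 1))
        + μ * (μ - 1) * (((r + r₀) ^ (-(μ - 1)) - γ * Real.log (t + t₀) ^ (-(μ - 1) / (μ + 1))) * ((r + r₀) ^ (-(μ - 1) - 1) * (r + r₀)⁻¹))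
        - β * r ^ μ * (μ - 1) * (((r + r₀) ^ (-(μ - 1)) - γ * Real.log (t + t₀) ^ (-(μ - 1) / (μ + 1))) * (r + r₀) ^ (-(μ - 1) - 1)))
      ≤ (1 / (m - 1)) * (γ * ((μ - 1) / (μ + 1)) * Real.log (t + t₀) ^ (-(μ - 1) / (μ + 1) - 1) - ((r + r₀) ^ (-(μ - 1)) - γ * Real.log (t + t₀) ^ (-(μ - 1) / (μ + 1)))) := by
    have e1 : C ^ (m - 1) * (m / (m - 1)) * ((m / (m - 1) - 1) * ((μ - 1) * (μ - 1)) * ((r + r₀) ^ (-(μ - 1) - 1) * (r + r₀) ^ (-(μ - 1) - 1))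
        + μ * (μ - 1) * (((r + r₀) ^ (-(μ - 1)) - γ * Real.log (t + t₀) ^ (-(μ - 1) / (μ + 1))) * ((r + r₀) ^ (-(μ - 1) - 1) * (r + r₀)⁻¹))
        - β * r ^ μ * (μ - 1) * (((r + r₀) ^ (-(μ - 1)) - γ * Real.log (t + t₀) ^ (-(μ - 1) / (μ + 1))) * (r + r₀) ^ (-(μ - 1) - 1)))
        = (1 / (m - 1)) * (C ^ (m - 1) * (m * ((m / (m - 1) - 1) * ((μ - 1) * (μ - 1)) * ((r + r₀) ^ (-(μ - 1) - 1) * (r + r₀) ^ (-(μ - 1) - 1))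
        + μ * (μ - 1) * (((r + r₀) ^ (-(μ - 1)) - γ * Real.log (t + t₀) ^ (-(μ - 1) / (μ + 1))) * ((r + r₀) ^ (-(μ - 1) - 1) * (r + r₀)⁻¹))
        - β * r ^ μ * (μ - 1) * (((r + r₀) ^ (-(μ - 1)) - γ * Real.log (t + t₀) ^ (-(μ - 1) / (μ + 1))) * (r + r₀) ^ (-(μ - 1) - 1))))) := by
      field_simp
    rw [e1]
    calc (1 / (m - 1)) * (C ^ (m - 1) * (m * ((m / (m - 1) - 1) * ((μ - 1) * (μ - 1)) * ((r + r₀) ^ (-(μ - 1) - 1) * (r + r₀) ^ (-(μ - 1) - 1))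
        + μ * (μ - 1) * (((r + r₀) ^ (-(μ - 1)) - γ * Real.log (t + t₀) ^ (-(μ - 1) / (μ + 1))) * ((r + r₀) ^ (-(μ - 1) - 1) * (r + r₀)⁻¹))
        - β * r ^ μ * (μ - 1) * (((r + r₀) ^ (-(μ - 1)) - γ * Real.log (t + t₀) ^ (-(μ - 1) / (μ + 1))) * (r + r₀) ^ (-(μ - 1) - 1)))))
        ≤ (1 / (m - 1)) * (C ^ (m - 1) * (C ^ (1 - m) * (γ * ((μ - 1) / (μ + 1)) * Real.log (t + t₀) ^ (-(μ - 1) / (μ + 1) - 1) - ((r + r₀) ^ (-(μ - 1)) - γ * Real.log (t + t₀) ^ (-(μ - 1) / (μ + 1)))))) :=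
          mul_le_mul_of_nonneg_left h1 (le_of_lt (div_pos one_pos hm1))
      _ = (1 / (m - 1)) * (γ * ((μ - 1) / (μ + 1)) * Real.log (t + t₀) ^ (-(μ - 1) / (μ + 1) - 1) - ((r + r₀) ^ (-(μ - 1)) - γ * Real.log (t + t₀) ^ (-(μ - 1) / (μ + 1)))) := by
          rw [show C ^ (m - 1) * (C ^ (1 - m) * (γ * ((μ - 1) / (μ + 1)) * Real.log (t + t₀) ^ (-(μ - 1) / (μ + 1) - 1) - ((r + r₀) ^ (-(μ - 1)) - γ * Real.log (t + t₀) ^ (-(μ - 1) / (μ + 1)))))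
            = (C ^ (m - 1) * C ^ (1 - m)) * (γ * ((μ - 1) / (μ + 1)) * Real.log (t + t₀) ^ (-(μ - 1) / (μ + 1) - 1) - ((r + r₀) ^ (-(μ - 1)) - γ * Real.log (t + t₀) ^ (-(μ - 1) / (μ + 1)))) by ring,
            hCC, one_mul]
  have hF : (0:ℝ) ≤ C * ((t + t₀) ^ (-1 / (m - 1)) * ((t + t₀)⁻¹ *
      ((r + r₀) ^ (-(μ - 1)) - γ * Real.log (t + t₀) ^ (-(μ - 1) / (μ + 1))) ^ (m / (m - 1) - 1 - 1))) :=
    le_of_lt (mul_pos hC0 (mul_pos (Real.rpow_pos_of_pos hT0 _)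
      (mul_pos (inv_pos.mpr hT0) (Real.rpow_pos_of_pos hG0 _))))
  have hmul := mul_le_mul_of_nonneg_left hstar' hF
  refine le_trans (le_of_eq ?_) (le_trans hmul (le_of_eq ?_))
  · ring
  · ring
end

section
/- Let m > 1, μ > 1 and β > 0. Then there exist positive constants C̄ and k such that for every r₀ ≥ 1, every C with 0 < C ≤ C̄, every t₀ > 1 and every γ > 0 with γ^{(μ+1)/(μ−1)} ≥ k·C^{1−m}, the function u̲(r,t) := C·(t+t₀)^{−1/(m−1)}·[(r+r₀)^{−(μ−1)} − γ·(log(t+t₀))^{−(μ−1)/(μ+1)}]₊^{1/(m−1)} satisfies ∂_t u̲(r,t) ≤ ∂²_r(u̲^m)(r,t) + β·r^μ·∂_r(u̲^m)(r,t) at every point (r,t) with r ≥ 1, t > 0 and (r+r₀)^{−(μ−1)} > γ·(log(t+t₀))^{−(μ−1)/(μ+1)}. -/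
open Real Filter Set

set_option maxHeartbeats 1000000

/-- Subsolution part of the proof of Theorem 2.6: the explicit barrier
`u̲(r,t) = C (t+t₀)^{-1/(m-1)} [(r+r₀)^{-(μ-1)} − γ (log(t+t₀))^{-(μ-1)/(μ+1)}]₊^{1/(m-1)}`
is a subsolution of the radial porous medium equation
`u_t = (u^m)_{rr} + β r^μ (u^m)_r` in the region `r ≥ 1`, `t > 0` where its bracket is
positive, provided `r₀ ≥ 1`, `0 < C ≤ C̄` and `γ^{(μ+1)/(μ-1)} ≥ k C^{1-m}`. -/
theorem stmt_9 (m μ β : ℝ) (hm : 1 < m) (hμ : 1 < μ) (hβ : 0 < β) :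
    ∃ Cbar > (0:ℝ), ∃ k > (0:ℝ), ∀ r₀ : ℝ, 1 ≤ r₀ →
      ∀ C : ℝ, 0 < C → C ≤ Cbar → ∀ t₀ : ℝ, 1 < t₀ → ∀ γ : ℝ, 0 < γ →
        k * C ^ (1 - m) ≤ γ ^ ((μ + 1) / (μ - 1)) →
        ∀ U : ℝ → ℝ → ℝ,
          (U = fun r t => C * (t + t₀) ^ (-1 / (m - 1)) *
            (max ((r + r₀) ^ (-(μ - 1))
              - γ * (Real.log (t + t₀)) ^ (-(μ - 1) / (μ + 1))) 0) ^ (1 / (m - 1))) →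
          ∀ r : ℝ, 1 ≤ r → ∀ t : ℝ, 0 < t →
            γ * (Real.log (t + t₀)) ^ (-(μ - 1) / (μ + 1)) < (r + r₀) ^ (-(μ - 1)) →
            deriv (fun τ : ℝ => U r τ) t
              ≤ deriv (deriv (fun s : ℝ => U s t ^ m)) r
                + β * r ^ μ * deriv (fun s : ℝ => U s t ^ m) r := by
  have hm1 : (0:ℝ) < m - 1 := by linarith
  have hμ1 : (0:ℝ) < μ - 1 := by linarith
  have hμp : (0:ℝ) < μ + 1 := by linarith
  have hb1 : (1:ℝ) ≤ 1/(m-1)*m := by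
    rw [div_mul_eq_mul_div, le_div_iff₀ hm1]; linarith
  have hbpos : (0:ℝ) < 1/(m-1)*m := lt_of_lt_of_le one_pos hb1
  refine ⟨(1/(m-1) / (1/(m-1)*m * (μ-1) * β)) ^ (1/(m-1)), by positivity,
    ((μ-1)/(μ+1)) / (1/(m-1)*m * (μ-1)^2), by positivity, ?_⟩
  intro r₀ hr₀ C hC hCb t₀ ht₀ γ hγ hkγ U hU r hr t ht hGA
  subst hU
  beta_reduce
  have hTpos : (0:ℝ) < t + t₀ := by linarith
  have hT1 : (1:ℝ) < t + t₀ := by linarith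
  have hL : 0 < Real.log (t + t₀) := Real.log_pos hT1
  have hρ : (0:ℝ) < r + r₀ := by linarith
  have hF : 0 < (r + r₀) ^ (-(μ - 1)) - γ * Real.log (t + t₀) ^ (-(μ - 1) / (μ + 1)) :=
    sub_pos.mpr hGA
  have hCm1 : (0:ℝ) < C ^ (m-1) := Real.rpow_pos_of_pos hC _
  have hA : (0:ℝ) < (r + r₀) ^ (-(μ - 1)) := Real.rpow_pos_of_pos hρ _
  -- exponent identities
  have e1 : 1/(m-1)*m - 1 = 1/(m-1) := by field_simp; ring
  have e2 : -1/(m-1)*m = -1/(m-1)-1 := by field_simp; ring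
  -- splitting identities
  have hFsplit : ((r + r₀) ^ (-(μ - 1)) - γ * Real.log (t + t₀) ^ (-(μ - 1) / (μ + 1))) ^ (1/(m-1))
      = ((r + r₀) ^ (-(μ - 1)) - γ * Real.log (t + t₀) ^ (-(μ - 1) / (μ + 1))) ^ (1/(m-1)-1)
        * ((r + r₀) ^ (-(μ - 1)) - γ * Real.log (t + t₀) ^ (-(μ - 1) / (μ + 1))) := by
    rw [← Real.rpow_add_one (ne_of_gt hF)]; ring_nf
  have hTsplit : (t + t₀) ^ (-1/(m-1)) = (t + t₀) ^ (-1/(m-1)-1) * (t + t₀) := by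
    rw [← Real.rpow_add_one (ne_of_gt hTpos)]; ring_nf
  have hCms : C ^ m = C ^ (m-1) * C := by
    rw [← Real.rpow_add_one (ne_of_gt hC)]; ring_nf
  -- bound C^(m-1)
  have hCe : C ^ (m-1) ≤ 1/(m-1) / (1/(m-1)*m * (μ-1) * β) := by
    have h1 : C ^ (m-1) ≤ ((1/(m-1) / (1/(m-1)*m * (μ-1) * β)) ^ (1/(m-1))) ^ (m-1) :=
      Real.rpow_le_rpow hC.le hCb (by linarith)
    rwa [← Real.rpow_mul (by positivity), one_div_mul_cancel (ne_of_gt hm1),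
      Real.rpow_one] at h1
  -- r^μ (r+r₀)^(-μ) ≤ 1
  have hSR : r ^ μ * (r + r₀) ^ (-(μ-1)-1) ≤ 1 := by
    have h1 : r ^ μ ≤ (r + r₀) ^ μ :=
      Real.rpow_le_rpow (by linarith) (by linarith) (by linarith)
    calc r ^ μ * (r + r₀) ^ (-(μ-1)-1)
        ≤ (r + r₀) ^ μ * (r + r₀) ^ (-(μ-1)-1) :=
          mul_le_mul_of_nonneg_right h1 (Real.rpow_nonneg hρ.le _)
      _ = 1 := by
          rw [← Real.rpow_add hρ, show μ + (-(μ-1)-1) = 0 by ring, Real.rpow_zero]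
  -- key2 : the β-term bound
  have key2 : C^(m-1)*(1/(m-1)*m)*(μ-1)*β*(r^μ*(r+r₀)^(-(μ-1)-1)) ≤ 1/(m-1) := by
    have t1 := mul_le_mul_of_nonneg_left hSR
      (show (0:ℝ) ≤ C^(m-1)*(1/(m-1)*m)*(μ-1)*β by positivity)
    have t2 : C^(m-1) * (1/(m-1)*m*(μ-1)*β) ≤ 1/(m-1) :=
      (le_div_iff₀ (by positivity)).mp hCe
    nlinarith [t1, t2]
  have key2F := mul_le_mul_of_nonneg_right key2 hF.le
  -- key1 : the γ-condition bound
  have hw : (0:ℝ) < (μ+1)/(μ-1) := by positivity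
  have hγw : (γ ^ ((μ+1)/(μ-1)))⁻¹
      ≤ (((μ-1)/(μ+1)) / (1/(m-1)*m*(μ-1)^2))⁻¹ * C ^ (m-1) := by
    have h2 := inv_anti₀ (show (0:ℝ) <
      (μ-1)/(μ+1) / (1/(m-1)*m*(μ-1)^2) * C ^ (1-m) by positivity) hkγ
    rwa [mul_inv, show (1:ℝ)-m = -(m-1) by ring, Real.rpow_neg hC.le, inv_inv] at h2
  have h1q : Real.log (t + t₀) ^ (-(μ-1)/(μ+1)) ≤ (r + r₀) ^ (-(μ - 1)) * γ⁻¹ := by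
    rw [← div_eq_mul_inv, le_div_iff₀ hγ]
    linarith [hGA]
  have hLinv : (Real.log (t + t₀))⁻¹
      ≤ ((r + r₀) ^ (-(μ - 1)) * γ⁻¹) ^ ((μ+1)/(μ-1)) := by
    calc (Real.log (t + t₀))⁻¹
        = (Real.log (t + t₀) ^ (-(μ-1)/(μ+1))) ^ ((μ+1)/(μ-1)) := by
          rw [← Real.rpow_mul hL.le,
            show (-(μ-1)/(μ+1)) * ((μ+1)/(μ-1)) = -1 by field_simp,
            Real.rpow_neg_one]
      _ ≤ ((r + r₀) ^ (-(μ - 1)) * γ⁻¹) ^ ((μ+1)/(μ-1)) :=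
          Real.rpow_le_rpow (Real.rpow_nonneg hL.le _) h1q hw.le
  have hstep : γ * Real.log (t + t₀) ^ (-(μ-1)/(μ+1) - 1)
      ≤ ((r+r₀)^(-(μ-1)-1) * (r+r₀)^(-(μ-1)-1))
        * ((((μ-1)/(μ+1)) / (1/(m-1)*m*(μ-1)^2))⁻¹ * C ^ (m-1)) := by
    have eL : γ * Real.log (t + t₀) ^ (-(μ-1)/(μ+1) - 1)
        = (γ * Real.log (t + t₀) ^ (-(μ-1)/(μ+1))) * (Real.log (t + t₀))⁻¹ := by
      rw [Real.rpow_sub hL, Real.rpow_one]; ring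
    have e3 : ((r + r₀) ^ (-(μ - 1)) * γ⁻¹) ^ ((μ+1)/(μ-1))
        = ((r + r₀) ^ (-(μ - 1))) ^ ((μ+1)/(μ-1)) * (γ ^ ((μ+1)/(μ-1)))⁻¹ := by
      rw [Real.mul_rpow hA.le (inv_nonneg.mpr hγ.le), Real.inv_rpow hγ.le]
    have e4 : (r + r₀) ^ (-(μ - 1)) * ((r + r₀) ^ (-(μ - 1))) ^ ((μ+1)/(μ-1))
        = (r+r₀)^(-(μ-1)-1) * (r+r₀)^(-(μ-1)-1) := by
      rw [← Real.rpow_mul hρ.le, ← Real.rpow_add hρ, ← Real.rpow_add hρ]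
      congr 1
      field_simp
      ring
    calc γ * Real.log (t + t₀) ^ (-(μ-1)/(μ+1) - 1)
        = (γ * Real.log (t + t₀) ^ (-(μ-1)/(μ+1))) * (Real.log (t + t₀))⁻¹ := eL
      _ ≤ (r + r₀) ^ (-(μ - 1)) * (((r + r₀) ^ (-(μ - 1)) * γ⁻¹) ^ ((μ+1)/(μ-1))) :=
          mul_le_mul hGA.le hLinv (inv_nonneg.mpr hL.le) hA.le
      _ = ((r + r₀) ^ (-(μ - 1)) * ((r + r₀) ^ (-(μ - 1))) ^ ((μ+1)/(μ-1)))
            * (γ ^ ((μ+1)/(μ-1)))⁻¹ := by rw [e3]; ring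
      _ = ((r+r₀)^(-(μ-1)-1) * (r+r₀)^(-(μ-1)-1)) * (γ ^ ((μ+1)/(μ-1)))⁻¹ := by rw [e4]
      _ ≤ _ := mul_le_mul_of_nonneg_left hγw (by positivity)
  have key1 : (1/(m-1)) * ((μ-1)/(μ+1)) * (γ * Real.log (t + t₀) ^ (-(μ-1)/(μ+1) - 1))
      ≤ C^(m-1) * (1/(m-1)*m) * (μ-1)
        * ((μ-1) * (1/(m-1)) * ((r+r₀)^(-(μ-1)-1) * (r+r₀)^(-(μ-1)-1))) := by
    have h := mul_le_mul_of_nonneg_left hstep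
      (show (0:ℝ) ≤ (1/(m-1)) * ((μ-1)/(μ+1)) by positivity)
    calc (1/(m-1)) * ((μ-1)/(μ+1)) * (γ * Real.log (t + t₀) ^ (-(μ-1)/(μ+1) - 1))
        ≤ (1/(m-1)) * ((μ-1)/(μ+1)) * (((r+r₀)^(-(μ-1)-1) * (r+r₀)^(-(μ-1)-1))
            * ((((μ-1)/(μ+1)) / (1/(m-1)*m*(μ-1)^2))⁻¹ * C ^ (m-1))) := h
      _ = C^(m-1) * (1/(m-1)*m) * (μ-1)
            * ((μ-1) * (1/(m-1)) * ((r+r₀)^(-(μ-1)-1) * (r+r₀)^(-(μ-1)-1))) := by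
          rw [show (((μ-1)/(μ+1)) / (1/(m-1)*m*(μ-1)^2))⁻¹
              = (1/(m-1)*m*(μ-1)^2) * ((μ+1)/(μ-1)) by
            rw [inv_div, div_eq_mul_one_div, one_div_div]]
          field_simp
  -- time derivative
  have hb1t : HasDerivAt (fun τ : ℝ => τ + t₀) 1 t := (hasDerivAt_id t).add_const t₀
  have hlog : HasDerivAt (fun τ : ℝ => Real.log (τ + t₀)) (1 / (t + t₀)) t :=
    hb1t.log (ne_of_gt hTpos)
  have hLqd : HasDerivAt (fun τ : ℝ => Real.log (τ + t₀) ^ (-(μ - 1) / (μ + 1)))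
      (1 / (t + t₀) * (-(μ - 1) / (μ + 1)) * Real.log (t + t₀) ^ (-(μ - 1) / (μ + 1) - 1)) t :=
    hlog.rpow_const (Or.inl (ne_of_gt hL))
  have hbrak : HasDerivAt
      (fun τ : ℝ => (r + r₀) ^ (-(μ - 1)) - γ * Real.log (τ + t₀) ^ (-(μ - 1) / (μ + 1)))
      (-(γ * (1 / (t + t₀) * (-(μ - 1) / (μ + 1))
        * Real.log (t + t₀) ^ (-(μ - 1) / (μ + 1) - 1)))) t :=
    (hLqd.const_mul γ).const_sub _
  have hevpos : ∀ᶠ τ in nhds t,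
      0 < (r + r₀) ^ (-(μ - 1)) - γ * Real.log (τ + t₀) ^ (-(μ - 1) / (μ + 1)) :=
    hbrak.continuousAt (Ioi_mem_nhds hF)
  have hEq : (fun τ : ℝ => C * (τ + t₀) ^ (-1 / (m - 1)) *
        max ((r + r₀) ^ (-(μ - 1)) - γ * Real.log (τ + t₀) ^ (-(μ - 1) / (μ + 1))) 0
          ^ (1 / (m - 1)))
      =ᶠ[nhds t] (fun τ : ℝ => C * (τ + t₀) ^ (-1 / (m - 1)) *
        ((r + r₀) ^ (-(μ - 1)) - γ * Real.log (τ + t₀) ^ (-(μ - 1) / (μ + 1)))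
          ^ (1 / (m - 1))) := by
    filter_upwards [hevpos] with τ hτ
    rw [max_eq_left hτ.le]
  have hTd : HasDerivAt (fun τ : ℝ => (τ + t₀) ^ (-1 / (m - 1)))
      (1 * (-1 / (m - 1)) * (t + t₀) ^ (-1 / (m - 1) - 1)) t :=
    hb1t.rpow_const (Or.inl (ne_of_gt hTpos))
  have hFd : HasDerivAt (fun τ : ℝ =>
      ((r + r₀) ^ (-(μ - 1)) - γ * Real.log (τ + t₀) ^ (-(μ - 1) / (μ + 1))) ^ (1 / (m - 1)))
      (-(γ * (1 / (t + t₀) * (-(μ - 1) / (μ + 1))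
          * Real.log (t + t₀) ^ (-(μ - 1) / (μ + 1) - 1)))
        * (1 / (m - 1))
        * ((r + r₀) ^ (-(μ - 1)) - γ * Real.log (t + t₀) ^ (-(μ - 1) / (μ + 1)))
          ^ (1 / (m - 1) - 1)) t :=
    hbrak.rpow_const (Or.inl (ne_of_gt hF))
  have hall := (hTd.const_mul C).mul hFd
  have hDtC : deriv (fun τ : ℝ => C * (τ + t₀) ^ (-1 / (m - 1)) *
        max ((r + r₀) ^ (-(μ - 1)) - γ * Real.log (τ + t₀) ^ (-(μ - 1) / (μ + 1))) 0
          ^ (1 / (m - 1))) t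
      = C * (1/(m-1)) * (t + t₀) ^ (-1/(m-1)-1)
        * ((r + r₀) ^ (-(μ - 1)) - γ * Real.log (t + t₀) ^ (-(μ - 1) / (μ + 1))) ^ (1/(m-1)-1)
        * (γ * ((μ-1)/(μ+1)) * Real.log (t + t₀) ^ (-(μ - 1) / (μ + 1) - 1)
            - ((r + r₀) ^ (-(μ - 1)) - γ * Real.log (t + t₀) ^ (-(μ - 1) / (μ + 1)))) := by
    rw [hEq.deriv_eq]
    refine hall.deriv.trans ?_
    rw [hFsplit, hTsplit]
    have hTcan : (t + t₀) * (1/(t + t₀)) = 1 := by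
      rw [mul_one_div, div_self (ne_of_gt hTpos)]
    linear_combination (C * (t + t₀) ^ (-1/(m-1)-1) * γ * ((μ-1)/(μ+1))
      * Real.log (t + t₀) ^ (-(μ-1)/(μ+1) - 1) * (1/(m-1))
      * ((r + r₀) ^ (-(μ - 1)) - γ * Real.log (t + t₀) ^ (-(μ - 1) / (μ + 1)))
        ^ (1/(m-1)-1)) * hTcan
  -- space derivatives
  have hsev : ∀ᶠ s in nhds r, 0 < s + r₀ :=
    ((continuous_id.add continuous_const).continuousAt) (Ioi_mem_nhds hρ)
  have hFscont : ContinuousAt (fun s : ℝ => (s + r₀) ^ (-(μ - 1))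
      - γ * Real.log (t + t₀) ^ (-(μ - 1) / (μ + 1))) r :=
    ((((hasDerivAt_id r).add_const r₀).rpow_const (Or.inl (ne_of_gt hρ))).sub_const
      _).continuousAt
  have hFsev : ∀ᶠ s in nhds r, 0 < (s + r₀) ^ (-(μ - 1))
      - γ * Real.log (t + t₀) ^ (-(μ - 1) / (μ + 1)) := hFscont (Ioi_mem_nhds hF)
  have hfg : (fun s : ℝ => (C * (t + t₀) ^ (-1 / (m - 1)) *
        max ((s + r₀) ^ (-(μ - 1)) - γ * Real.log (t + t₀) ^ (-(μ - 1) / (μ + 1))) 0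
          ^ (1 / (m - 1))) ^ m)
      =ᶠ[nhds r] (fun s : ℝ => C ^ m * (t + t₀) ^ (-1/(m-1)*m) *
        ((s + r₀) ^ (-(μ - 1)) - γ * Real.log (t + t₀) ^ (-(μ - 1) / (μ + 1)))
          ^ (1/(m-1)*m)) := by
    filter_upwards [hFsev] with s hs
    rw [max_eq_left hs.le,
      Real.mul_rpow (by positivity) (Real.rpow_nonneg hs.le _),
      Real.mul_rpow hC.le (Real.rpow_nonneg hTpos.le _),
      ← Real.rpow_mul hTpos.le, ← Real.rpow_mul hs.le]
  have hsB : ∀ s : ℝ, 0 < s + r₀ → HasDerivAt (fun s' : ℝ => C ^ m * (t + t₀) ^ (-1/(m-1)*m) *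
        ((s' + r₀) ^ (-(μ - 1)) - γ * Real.log (t + t₀) ^ (-(μ - 1) / (μ + 1)))
          ^ (1/(m-1)*m))
      (C ^ m * (t + t₀) ^ (-1/(m-1)*m) *
        (1 * (-(μ - 1)) * (s + r₀) ^ (-(μ - 1) - 1) * (1/(m-1)*m)
          * ((s + r₀) ^ (-(μ - 1)) - γ * Real.log (t + t₀) ^ (-(μ - 1) / (μ + 1)))
            ^ (1/(m-1)*m - 1))) s := by
    intro s hs
    exact (((((hasDerivAt_id s).add_const r₀).rpow_const
      (Or.inl (ne_of_gt hs))).sub_const _).rpow_const (Or.inr hb1)).const_mul _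
  have hDevq : deriv (fun s : ℝ => (C * (t + t₀) ^ (-1 / (m - 1)) *
        max ((s + r₀) ^ (-(μ - 1)) - γ * Real.log (t + t₀) ^ (-(μ - 1) / (μ + 1))) 0
          ^ (1 / (m - 1))) ^ m)
      =ᶠ[nhds r] (fun s : ℝ => C ^ m * (t + t₀) ^ (-1/(m-1)*m) *
        (1 * (-(μ - 1)) * (s + r₀) ^ (-(μ - 1) - 1) * (1/(m-1)*m)
          * ((s + r₀) ^ (-(μ - 1)) - γ * Real.log (t + t₀) ^ (-(μ - 1) / (μ + 1)))
            ^ (1/(m-1)*m - 1))) := by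
    refine hfg.deriv.trans ?_
    filter_upwards [hsev] with s hs
    exact (hsB s hs).deriv
  have hD1C : deriv (fun s : ℝ => (C * (t + t₀) ^ (-1 / (m - 1)) *
        max ((s + r₀) ^ (-(μ - 1)) - γ * Real.log (t + t₀) ^ (-(μ - 1) / (μ + 1))) 0
          ^ (1 / (m - 1))) ^ m) r
      = C ^ m * (t + t₀) ^ (-1/(m-1)*m) *
        (1 * (-(μ - 1)) * (r + r₀) ^ (-(μ - 1) - 1) * (1/(m-1)*m)
          * ((r + r₀) ^ (-(μ - 1)) - γ * Real.log (t + t₀) ^ (-(μ - 1) / (μ + 1)))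
            ^ (1/(m-1)*m - 1)) := hDevq.eq_of_nhds
  have hD1C' : deriv (fun s : ℝ => (C * (t + t₀) ^ (-1 / (m - 1)) *
        max ((s + r₀) ^ (-(μ - 1)) - γ * Real.log (t + t₀) ^ (-(μ - 1) / (μ + 1))) 0
          ^ (1 / (m - 1))) ^ m) r
      = C^(m-1) * C * (t + t₀) ^ (-1/(m-1)-1) * (1/(m-1)*m) * (-(μ-1)) *
        (((r + r₀) ^ (-(μ - 1)) - γ * Real.log (t + t₀) ^ (-(μ - 1) / (μ + 1)))
            ^ (1/(m-1)-1)
          * ((r + r₀) ^ (-(μ - 1)) - γ * Real.log (t + t₀) ^ (-(μ - 1) / (μ + 1)))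
          * (r + r₀) ^ (-(μ - 1) - 1)) := by
    rw [hD1C, e2, e1, hCms, hFsplit]
    ring
  -- second space derivative
  have j2 : HasDerivAt (fun s : ℝ => (s + r₀) ^ (-(μ - 1) - 1))
      (1 * (-(μ - 1) - 1) * (r + r₀) ^ (-(μ - 1) - 1 - 1)) r :=
    ((hasDerivAt_id r).add_const r₀).rpow_const (Or.inl (ne_of_gt hρ))
  have j3 : HasDerivAt (fun s : ℝ => (s + r₀) ^ (-(μ - 1))
      - γ * Real.log (t + t₀) ^ (-(μ - 1) / (μ + 1)))
      (1 * (-(μ - 1)) * (r + r₀) ^ (-(μ - 1) - 1)) r :=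
    (((hasDerivAt_id r).add_const r₀).rpow_const (Or.inl (ne_of_gt hρ))).sub_const _
  have j4 : HasDerivAt (fun s : ℝ => ((s + r₀) ^ (-(μ - 1))
        - γ * Real.log (t + t₀) ^ (-(μ - 1) / (μ + 1))) ^ (1/(m-1)*m - 1))
      (1 * (-(μ - 1)) * (r + r₀) ^ (-(μ - 1) - 1) * (1/(m-1)*m - 1)
        * ((r + r₀) ^ (-(μ - 1)) - γ * Real.log (t + t₀) ^ (-(μ - 1) / (μ + 1)))
          ^ (1/(m-1)*m - 1 - 1)) r :=
    j3.rpow_const (Or.inl (ne_of_gt hF))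
  have j6 := (((j2.const_mul (1 * (-(μ - 1)))).mul_const (1/(m-1)*m)).mul j4).const_mul
    (C ^ m * (t + t₀) ^ (-1/(m-1)*m))
  have hD2C : deriv (deriv (fun s : ℝ => (C * (t + t₀) ^ (-1 / (m - 1)) *
        max ((s + r₀) ^ (-(μ - 1)) - γ * Real.log (t + t₀) ^ (-(μ - 1) / (μ + 1))) 0
          ^ (1 / (m - 1))) ^ m)) r
      = C^(m-1) * C * (t + t₀) ^ (-1/(m-1)-1) * (1/(m-1)*m) * (μ-1) *
        ((μ-1) * (1/(m-1)) * (((r + r₀) ^ (-(μ - 1))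
            - γ * Real.log (t + t₀) ^ (-(μ - 1) / (μ + 1))) ^ (1/(m-1)-1)
          * ((r + r₀) ^ (-(μ - 1) - 1) * (r + r₀) ^ (-(μ - 1) - 1)))
        + μ * (((r + r₀) ^ (-(μ - 1))
            - γ * Real.log (t + t₀) ^ (-(μ - 1) / (μ + 1))) ^ (1/(m-1)-1)
          * ((r + r₀) ^ (-(μ - 1)) - γ * Real.log (t + t₀) ^ (-(μ - 1) / (μ + 1)))
          * (r + r₀) ^ (-(μ - 1) - 1 - 1))) := by
    rw [hDevq.deriv_eq]
    refine j6.deriv.trans ?_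
    rw [e2, e1, hCms, hFsplit]
    ring
  -- final assembly
  have hQ : 0 < ((r + r₀) ^ (-(μ - 1)) - γ * Real.log (t + t₀) ^ (-(μ - 1) / (μ + 1))) ^ (1/(m-1)-1) := Real.rpow_pos_of_pos hF _
  have hP : 0 < (t + t₀) ^ (-1/(m-1)-1) := Real.rpow_pos_of_pos hTpos _
  have nn : 0 ≤ C^(m-1)*(1/(m-1)*m)*(μ-1) * (μ * ((r + r₀) ^ (-(μ - 1)) - γ * Real.log (t + t₀) ^ (-(μ - 1) / (μ + 1))) * (r + r₀) ^ (-(μ - 1) - 1 - 1)) :=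
    mul_nonneg (by positivity) (mul_nonneg (mul_nonneg (by positivity) hF.le)
      (Real.rpow_nonneg hρ.le _))
  have hmain : (1/(m-1)) * (γ * ((μ-1)/(μ+1)) * Real.log (t + t₀) ^ (-(μ - 1) / (μ + 1) - 1) - ((r + r₀) ^ (-(μ - 1)) - γ * Real.log (t + t₀) ^ (-(μ - 1) / (μ + 1))))
      ≤ C^(m-1)*(1/(m-1)*m)*(μ-1) * ((μ-1)*(1/(m-1))*((r + r₀) ^ (-(μ - 1) - 1)*(r + r₀) ^ (-(μ - 1) - 1)) + μ*((r + r₀) ^ (-(μ - 1)) - γ * Real.log (t + t₀) ^ (-(μ - 1) / (μ + 1)))*(r + r₀) ^ (-(μ - 1) - 1 - 1))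
        - C^(m-1)*(1/(m-1)*m)*(μ-1)*β*(r^μ*(r + r₀) ^ (-(μ - 1) - 1))*((r + r₀) ^ (-(μ - 1)) - γ * Real.log (t + t₀) ^ (-(μ - 1) / (μ + 1))) := by
    linarith [key1, key2F, nn]
  rw [hDtC, hD2C, hD1C']
  calc C * (1/(m-1)) * (t + t₀) ^ (-1/(m-1)-1)
        * ((r + r₀) ^ (-(μ - 1)) - γ * Real.log (t + t₀) ^ (-(μ - 1) / (μ + 1))) ^ (1/(m-1)-1)
        * (γ * ((μ-1)/(μ+1)) * Real.log (t + t₀) ^ (-(μ - 1) / (μ + 1) - 1)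
            - ((r + r₀) ^ (-(μ - 1)) - γ * Real.log (t + t₀) ^ (-(μ - 1) / (μ + 1))))
      = (C * (t + t₀) ^ (-1/(m-1)-1) * ((r + r₀) ^ (-(μ - 1)) - γ * Real.log (t + t₀) ^ (-(μ - 1) / (μ + 1))) ^ (1/(m-1)-1))
        * ((1/(m-1)) * (γ * ((μ-1)/(μ+1)) * Real.log (t + t₀) ^ (-(μ - 1) / (μ + 1) - 1) - ((r + r₀) ^ (-(μ - 1)) - γ * Real.log (t + t₀) ^ (-(μ - 1) / (μ + 1))))) := by ring
    _ ≤ (C * (t + t₀) ^ (-1/(m-1)-1) * ((r + r₀) ^ (-(μ - 1)) - γ * Real.log (t + t₀) ^ (-(μ - 1) / (μ + 1))) ^ (1/(m-1)-1)) * (C^(m-1)*(1/(m-1)*m)*(μ-1) * ((μ-1)*(1/(m-1))*((r + r₀) ^ (-(μ - 1) - 1)*(r + r₀) ^ (-(μ - 1) - 1)) + μ*((r + r₀) ^ (-(μ - 1)) - γ * Real.log (t + t₀) ^ (-(μ - 1) / (μ + 1)))*(r + r₀) ^ (-(μ - 1) - 1 - 1))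
        - C^(m-1)*(1/(m-1)*m)*(μ-1)*β*(r^μ*(r + r₀) ^ (-(μ - 1) - 1))*((r + r₀) ^ (-(μ - 1)) - γ * Real.log (t + t₀) ^ (-(μ - 1) / (μ + 1)))) :=
        mul_le_mul_of_nonneg_left hmain
          (mul_nonneg (mul_nonneg hC.le hP.le) hQ.le)
    _ = C^(m-1) * C * (t + t₀) ^ (-1/(m-1)-1) * (1/(m-1)*m) * (μ-1) *
        ((μ-1) * (1/(m-1)) * (((r + r₀) ^ (-(μ - 1)) - γ * Real.log (t + t₀) ^ (-(μ - 1) / (μ + 1))) ^ (1/(m-1)-1)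
          * ((r + r₀) ^ (-(μ - 1) - 1) * (r + r₀) ^ (-(μ - 1) - 1)))
        + μ * (((r + r₀) ^ (-(μ - 1)) - γ * Real.log (t + t₀) ^ (-(μ - 1) / (μ + 1))) ^ (1/(m-1)-1)
          * ((r + r₀) ^ (-(μ - 1)) - γ * Real.log (t + t₀) ^ (-(μ - 1) / (μ + 1)))
          * (r + r₀) ^ (-(μ - 1) - 1 - 1))) + β * r ^ μ * (C^(m-1) * C * (t + t₀) ^ (-1/(m-1)-1) * (1/(m-1)*m) * (-(μ-1)) *
        (((r + r₀) ^ (-(μ - 1)) - γ * Real.log (t + t₀) ^ (-(μ - 1) / (μ + 1))) ^ (1/(m-1)-1)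
          * ((r + r₀) ^ (-(μ - 1)) - γ * Real.log (t + t₀) ^ (-(μ - 1) / (μ + 1)))
          * (r + r₀) ^ (-(μ - 1) - 1))) := by ring
end
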